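/- arXiv:2304.00479 — 10 statements merged into one kernel-verified Lean document; each statement's English description precedes it below -/
import Mathlib

section
/- A set function f : 2^N → ℝ is submodular and monotone non-decreasing if and only if for all X, Y ⊆ N it holds that f(Y) ≤ f(X) + Σ_{i ∈ Y \ X} ρ_i(X). -/
/-- A set function on the finite ground set `N = {1,…,n}` is submodular. -/
def Submodular {n : ℕ} (f : Finset (Fin n) → ℝ) : Prop :=
  ∀ X Y : Finset (Fin n), f (X ∩ Y) + f (X ∪ Y) ≤ f X + f Y

/-- Forward direction key lemma: greedy sum bound for disjoint additions. -/
lemma submod_sum_bound {n : ℕ} {f : Finset (Fin n) → ℝ} (hsub : Submodular f) :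
    ∀ (S X : Finset (Fin n)), Disjoint S X →
      f (X ∪ S) ≤ f X + ∑ i ∈ S, (f (insert i X) - f X) := by
  intro S
  induction S using Finset.induction_on with
  | empty => intro X _; simp
  | @insert a S ha ih =>
    intro X hd
    have haX : a ∉ X := by
      have := Finset.disjoint_left.mp hd (Finset.mem_insert_self a S); exact this
    have haS : a ∉ X ∪ S := by
      simp only [Finset.mem_union]
      push_neg
      exact ⟨haX, ha⟩
    have hd' : Disjoint S X := (Finset.disjoint_insert_left.mp hd).2
    have h1 : (insert a X) ∩ (X ∪ S) = X := by
      ext x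
      simp only [Finset.mem_inter, Finset.mem_insert, Finset.mem_union]
      constructor
      · rintro ⟨hx1 | hx1, hx2 | hx2⟩ <;> first
        | assumption
        | (exfalso; subst hx1; exact (by simp [hx2] at haS))
      · intro hx; exact ⟨Or.inr hx, Or.inl hx⟩
    have h2 : (insert a X) ∪ (X ∪ S) = X ∪ insert a S := by
      ext x; simp [Finset.mem_insert, Finset.mem_union]
    have hs := hsub (insert a X) (X ∪ S)
    rw [h1, h2] at hs
    have hIH := ih X hd'
    rw [Finset.sum_insert ha]
    linarith

lemma mono_of_ineq {n : ℕ} {f : Finset (Fin n) → ℝ}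
    (h : ∀ X Y : Finset (Fin n),
      f Y ≤ f X + ∑ i ∈ Y \ X, (f (insert i X) - f X)) :
    ∀ X Y : Finset (Fin n), X ⊆ Y → f X ≤ f Y := by
  intro X Y hXY
  have := h Y X
  rwa [Finset.sdiff_eq_empty_iff_subset.mpr hXY, Finset.sum_empty, add_zero] at this

/-- Stepwise diminishing returns from the inequality. -/
lemma step_of_ineq {n : ℕ} {f : Finset (Fin n) → ℝ}
    (h : ∀ X Y : Finset (Fin n),
      f Y ≤ f X + ∑ i ∈ Y \ X, (f (insert i X) - f X))
    (X : Finset (Fin n)) (a i : Fin n) (ha : a ∉ X) (hi : i ∉ insert a X) :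
    f (insert i (insert a X)) - f (insert a X) ≤ f (insert i X) - f X := by
  have hiX : i ∉ X := fun hx => hi (Finset.mem_insert_of_mem hx)
  have hia : i ≠ a := fun hx => hi (hx ▸ Finset.mem_insert_self a X)
  have key := h X (insert i (insert a X))
  have hset : (insert i (insert a X)) \ X = {i, a} := by
    ext x
    simp only [Finset.mem_sdiff, Finset.mem_insert, Finset.mem_singleton]
    constructor
    · rintro ⟨hx1 | hx1 | hx1, hx2⟩
      · exact Or.inl hx1
      · exact Or.inr hx1
      · exact absurd hx1 hx2
    · rintro (rfl | rfl)
      · exact ⟨Or.inl rfl, hiX⟩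
      · exact ⟨Or.inr (Or.inl rfl), ha⟩
  rw [hset] at key
  rw [Finset.sum_pair hia] at key
  linarith

/-- Diminishing returns: singleton marginals decrease along inclusion. -/
lemma diminish_of_ineq {n : ℕ} {f : Finset (Fin n) → ℝ}
    (h : ∀ X Y : Finset (Fin n),
      f Y ≤ f X + ∑ i ∈ Y \ X, (f (insert i X) - f X)) :
    ∀ (S T : Finset (Fin n)) (i : Fin n), S ⊆ T →
      f (insert i T) - f T ≤ f (insert i S) - f S := by
  have hmono := mono_of_ineq h
  intro S T i hST
  by_cases hiT : i ∈ T
  · rw [Finset.insert_eq_self.mpr hiT]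
    have : f S ≤ f (insert i S) := hmono S (insert i S) (Finset.subset_insert i S)
    linarith
  · -- i ∉ T; induct on D = T \ S
    have key : ∀ (D S : Finset (Fin n)), Disjoint D S → i ∉ S ∪ D →
        f (insert i (S ∪ D)) - f (S ∪ D) ≤ f (insert i S) - f S := by
      intro D
      induction D using Finset.induction_on with
      | empty => intro S _ _; simp
      | @insert a D haD ihD =>
        intro S hd hiSD
        have haS : a ∉ S := Finset.disjoint_left.mp hd (Finset.mem_insert_self a D)
        have hd' : Disjoint D S := (Finset.disjoint_insert_left.mp hd).2
        have hiSD' : i ∉ S ∪ D := by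
          intro hx; exact hiSD (by
            simp only [Finset.mem_union, Finset.mem_insert] at hx ⊢; tauto)
        have haSD : a ∉ S ∪ D := by
          simp only [Finset.mem_union]; push_neg; exact ⟨haS, haD⟩
        have heq : S ∪ insert a D = insert a (S ∪ D) := by
          ext x; simp [Finset.mem_union, Finset.mem_insert]
        rw [heq]
        have hia : i ∉ insert a (S ∪ D) := heq ▸ hiSD
        have hstep := step_of_ineq h (S ∪ D) a i haSD hia
        have hIH := ihD S hd' hiSD'
        linarith
    have hTeq : S ∪ (T \ S) = T := Finset.union_sdiff_of_subset hST
    have hdisj : Disjoint (T \ S) S := Finset.sdiff_disjoint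
    have hiT' : i ∉ S ∪ (T \ S) := by rw [hTeq]; exact hiT
    have := key (T \ S) S hdisj hiT'
    rwa [hTeq] at this

/-- Group diminishing returns. -/
lemma group_diminish {n : ℕ} {f : Finset (Fin n) → ℝ}
    (h : ∀ X Y : Finset (Fin n),
      f Y ≤ f X + ∑ i ∈ Y \ X, (f (insert i X) - f X)) :
    ∀ (D S T : Finset (Fin n)), S ⊆ T →
      f (T ∪ D) - f T ≤ f (S ∪ D) - f S := by
  intro D
  induction D using Finset.induction_on with
  | empty => intro S T _; simp
  | @insert a D haD ihD =>
    intro S T hST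
    have h1 : T ∪ insert a D = insert a (T ∪ D) := by
      ext x; simp [Finset.mem_union, Finset.mem_insert]
    have h2 : S ∪ insert a D = insert a (S ∪ D) := by
      ext x; simp [Finset.mem_union, Finset.mem_insert]
    rw [h1, h2]
    have hsub : S ∪ D ⊆ T ∪ D := Finset.union_subset_union_left hST
    have hdim := diminish_of_ineq h (S ∪ D) (T ∪ D) a hsub
    have hIH := ihD S T hST
    linarith

/-- `f` is submodular and monotone non-decreasing iff
`f(Y) ≤ f(X) + Σ_{i ∈ Y \ X} ρ_i(X)` for all `X, Y ⊆ N`,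
where `ρ_i(X) = f(X ∪ {i}) − f(X)`. -/
theorem submodular_and_monotone_iff {n : ℕ} (hn : 0 < n)
    (f : Finset (Fin n) → ℝ) :
    (Submodular f ∧ ∀ X Y : Finset (Fin n), X ⊆ Y → f X ≤ f Y) ↔
      ∀ X Y : Finset (Fin n),
        f Y ≤ f X + ∑ i ∈ Y \ X, (f (insert i X) - f X) := by
  constructor
  · rintro ⟨hsub, hmono⟩ X Y
    have h1 : f Y ≤ f (X ∪ Y) := hmono Y (X ∪ Y) Finset.subset_union_right
    have h2 : f (X ∪ (Y \ X)) ≤ f X + ∑ i ∈ Y \ X, (f (insert i X) - f X) :=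
      submod_sum_bound hsub (Y \ X) X (Finset.sdiff_disjoint)
    rw [Finset.union_sdiff_self_eq_union] at h2
    linarith
  · intro h
    refine ⟨?_, mono_of_ineq h⟩
    intro X Y
    have := group_diminish h (Y \ X) (X ∩ Y) X Finset.inter_subset_left
    have hXY : X ∪ (Y \ X) = X ∪ Y := Finset.union_sdiff_self_eq_union
    have hY : (X ∩ Y) ∪ (Y \ X) = Y := by
      ext x; simp only [Finset.mem_union, Finset.mem_inter, Finset.mem_sdiff]; tauto
    rw [hXY, hY] at this
    linarith
end

section
/- Let f : 2^N → ℝ be a set function with f(∅) = 0, identified with a function on binary vectors f : {0,1}^n → ℝ. The Lovász extension f^L coincides with the convex closure f^c on [0,1]^n (i.e., f^L(x) = f^c(x) for every x ∈ [0,1]^n and every permutation δ sorting the entries of x in non-increasing order) if and only if f is submodular. -/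
/-- `X^{δ,i} = {δ(1),…,δ(i)}`: the set of the first `i+1` elements (positions `0,…,i`
in 0-based indexing) under the permutation `δ`. -/
def prefixLe {n : ℕ} (δ : Equiv.Perm (Fin n)) (i : Fin n) : Finset (Fin n) :=
  (Finset.univ.filter (fun l : Fin n => l ≤ i)).image δ

/-- The Lovász extension of `f` evaluated at `x`, using a permutation `δ` sorting the
entries of `x` in non-increasing order:
`f^L(x) = Σ_{i=1}^n (x_{δ(i)} − x_{δ(i+1)}) f(X^{δ,i})`, with `x_{δ(n+1)} := 0`. -/
def lovasz {n : ℕ} (f : Finset (Fin n) → ℝ) (δ : Equiv.Perm (Fin n))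
    (x : Fin n → ℝ) : ℝ :=
  ∑ i : Fin n,
    (x (δ i) - (if h : (i : ℕ) + 1 < n then x (δ ⟨(i : ℕ) + 1, h⟩) else 0)) *
      f (prefixLe δ i)

/-- The convex closure of `f` evaluated at `x`:
`f^c(x) = min{ Σ_S α_S f(S) : Σ_S α_S 1_S = x, Σ_S α_S = 1, α ≥ 0 }`. -/
noncomputable def convexClosure {n : ℕ} (f : Finset (Fin n) → ℝ)
    (x : Fin n → ℝ) : ℝ :=
  sInf { r : ℝ | ∃ α : Finset (Fin n) → ℝ,
    (∀ S, 0 ≤ α S) ∧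
    (∑ S : Finset (Fin n), α S) = 1 ∧
    (∀ i : Fin n, (∑ S : Finset (Fin n), α S * (if i ∈ S then 1 else 0)) = x i) ∧
    r = ∑ S : Finset (Fin n), α S * f S }

namespace LCAux
open Finset

variable {n : ℕ}

/-- `Q δ k` = image under `δ` of the first `k` positions. -/
def Q (δ : Equiv.Perm (Fin n)) (k : ℕ) : Finset (Fin n) :=
  (Finset.univ.filter (fun l : Fin n => (l : ℕ) < k)).image δ

lemma mem_Q {δ : Equiv.Perm (Fin n)} {k : ℕ} {j : Fin n} :
    j ∈ Q δ k ↔ ((δ.symm j : Fin n) : ℕ) < k := by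
  simp only [Q, mem_image, mem_filter, mem_univ, true_and]
  constructor
  · rintro ⟨l, hl, rfl⟩; simpa using hl
  · intro h; exact ⟨δ.symm j, h, by simp⟩

lemma Q_zero (δ : Equiv.Perm (Fin n)) : Q δ 0 = ∅ := by
  ext j; simp [mem_Q]

lemma Q_univ (δ : Equiv.Perm (Fin n)) {k : ℕ} (h : n ≤ k) : Q δ k = Finset.univ := by
  ext j; simp [mem_Q]; exact lt_of_lt_of_le (δ.symm j).isLt h

lemma Q_subset (δ : Equiv.Perm (Fin n)) {k k' : ℕ} (h : k ≤ k') : Q δ k ⊆ Q δ k' := by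
  intro j hj; rw [mem_Q] at hj ⊢; omega

lemma prefixLe_eq (δ : Equiv.Perm (Fin n)) (i : Fin n) :
    _root_.prefixLe δ i = Q δ ((i : ℕ) + 1) := by
  unfold _root_.prefixLe Q
  congr 1
  ext l
  simp only [Finset.mem_filter, Finset.mem_univ, true_and, Fin.le_def, Nat.lt_succ_iff]

/-- extended sorted coordinates -/
noncomputable def a (δ : Equiv.Perm (Fin n)) (x : Fin n → ℝ) (k : ℕ) : ℝ :=
  if h : k < n then x (δ ⟨k, h⟩) else 0

lemma a_of_ge (δ : Equiv.Perm (Fin n)) (x : Fin n → ℝ) {k : ℕ} (h : n ≤ k) :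
    a δ x k = 0 := by simp [a, Nat.not_lt.mpr h]

lemma lovasz_range (f : Finset (Fin n) → ℝ) (δ : Equiv.Perm (Fin n)) (x : Fin n → ℝ) :
    lovasz f δ x = ∑ k ∈ Finset.range n, (a δ x k - a δ x (k + 1)) * f (Q δ (k + 1)) := by
  rw [lovasz, ← Fin.sum_univ_eq_sum_range (fun k => (a δ x k - a δ x (k + 1)) * f (Q δ (k + 1))) n]
  refine Finset.sum_congr rfl fun i _ => ?_
  have h1 : a δ x (i : ℕ) = x (δ i) := by simp [a, i.isLt]
  have h2 : a δ x ((i : ℕ) + 1)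
      = if h : (i : ℕ) + 1 < n then x (δ ⟨(i : ℕ) + 1, h⟩) else 0 := rfl
  rw [prefixLe_eq, h1, h2]


lemma lovasz_abel (f : Finset (Fin n) → ℝ) (h0 : f ∅ = 0) (δ : Equiv.Perm (Fin n))
    (x : Fin n → ℝ) :
    lovasz f δ x = ∑ k ∈ Finset.range n, a δ x k * (f (Q δ (k + 1)) - f (Q δ k)) := by
  rw [lovasz_range]
  have key : ∑ k ∈ Finset.range n, a δ x (k + 1) * f (Q δ (k + 1))
      = ∑ k ∈ Finset.range n, a δ x k * f (Q δ k) := by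
    have h1 := Finset.sum_range_succ' (fun k => a δ x k * f (Q δ k)) n
    have h2 := Finset.sum_range_succ (fun k => a δ x k * f (Q δ k)) n
    have hn0 : a δ x n = 0 := a_of_ge δ x le_rfl
    have hb0 : f (Q δ 0) = 0 := by rw [Q_zero]; exact h0
    simp only [hn0, hb0, zero_mul, mul_zero, add_zero] at h1 h2
    rw [h2] at h1; exact h1.symm
  simp only [sub_mul, mul_sub, Finset.sum_sub_distrib, key]

/-- greedy vector -/
noncomputable def y (f : Finset (Fin n) → ℝ) (δ : Equiv.Perm (Fin n)) (j : Fin n) : ℝ :=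
  f (Q δ (((δ.symm j : Fin n) : ℕ) + 1)) - f (Q δ ((δ.symm j : Fin n) : ℕ))

lemma y_delta (f : Finset (Fin n) → ℝ) (δ : Equiv.Perm (Fin n)) (i : Fin n) :
    y f δ (δ i) = f (Q δ ((i : ℕ) + 1)) - f (Q δ (i : ℕ)) := by
  simp [y]

lemma Q_succ_inter (δ : Equiv.Perm (Fin n)) (i : Fin n) (S : Finset (Fin n)) (hi : δ i ∈ S) :
    Q δ (i : ℕ) ∪ (Q δ ((i : ℕ) + 1) ∩ S) = Q δ ((i : ℕ) + 1) ∧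
    Q δ (i : ℕ) ∩ (Q δ ((i : ℕ) + 1) ∩ S) = Q δ (i : ℕ) ∩ S := by
  constructor
  · ext j
    simp only [Finset.mem_union, Finset.mem_inter, mem_Q]
    constructor
    · rintro (h | ⟨h, -⟩); omega; exact h
    · intro h
      rcases Nat.lt_succ_iff_lt_or_eq.mp h with h' | h'
      · exact Or.inl h'
      · refine Or.inr ⟨h, ?_⟩
        have : δ.symm j = i := Fin.ext h'
        have : j = δ i := by rw [← this]; simp
        rw [this]; exact hi
  · ext j
    simp only [Finset.mem_inter, mem_Q]
    constructor
    · rintro ⟨h1, -, h2⟩; exact ⟨h1, h2⟩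
    · rintro ⟨h1, h2⟩; exact ⟨h1, by omega, h2⟩

lemma greedy (f : Finset (Fin n) → ℝ) (hf : Submodular f) (h0 : f ∅ = 0)
    (δ : Equiv.Perm (Fin n)) (S : Finset (Fin n)) :
    ∑ j ∈ S, y f δ j ≤ f S := by
  have h1 : ∑ j ∈ S, y f δ j = ∑ i : Fin n, (if δ i ∈ S then y f δ (δ i) else 0) := by
    rw [Equiv.sum_comp δ (fun j => if j ∈ S then y f δ j else 0)]
    rw [Finset.sum_ite_mem, Finset.univ_inter]
  have h2 : ∀ i : Fin n, (if δ i ∈ S then y f δ (δ i) else 0)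
      ≤ f (Q δ ((i : ℕ) + 1) ∩ S) - f (Q δ (i : ℕ) ∩ S) := by
    intro i
    by_cases hi : δ i ∈ S
    · rw [if_pos hi, y_delta]
      obtain ⟨hu, hint⟩ := Q_succ_inter δ i S hi
      have := hf (Q δ (i : ℕ)) (Q δ ((i : ℕ) + 1) ∩ S)
      rw [hu, hint] at this
      linarith
    · rw [if_neg hi]
      have : Q δ ((i : ℕ) + 1) ∩ S = Q δ (i : ℕ) ∩ S := by
        ext j
        simp only [Finset.mem_inter, mem_Q]
        constructor
        · rintro ⟨h1', h2'⟩
          refine ⟨?_, h2'⟩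
          rcases Nat.lt_succ_iff_lt_or_eq.mp h1' with h' | h'
          · exact h'
          · exfalso
            have hji : δ.symm j = i := Fin.ext h'
            have : j = δ i := by rw [← hji]; simp
            rw [this] at h2'; exact hi h2'
        · rintro ⟨h1', h2'⟩; exact ⟨by omega, h2'⟩
      rw [this]; simp
  calc ∑ j ∈ S, y f δ j
      = ∑ i : Fin n, (if δ i ∈ S then y f δ (δ i) else 0) := h1
    _ ≤ ∑ i : Fin n, (f (Q δ ((i : ℕ) + 1) ∩ S) - f (Q δ (i : ℕ) ∩ S)) :=
        Finset.sum_le_sum fun i _ => h2 i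
    _ = ∑ k ∈ Finset.range n, (f (Q δ (k + 1) ∩ S) - f (Q δ k ∩ S)) :=
        (Fin.sum_univ_eq_sum_range (fun k => f (Q δ (k + 1) ∩ S) - f (Q δ k ∩ S)) n)
    _ = f (Q δ n ∩ S) - f (Q δ 0 ∩ S) := Finset.sum_range_sub (fun k => f (Q δ k ∩ S)) n
    _ = f S := by rw [Q_zero, Q_univ δ le_rfl, Finset.univ_inter, Finset.empty_inter, h0, sub_zero]


lemma bdd (f : Finset (Fin n) → ℝ) (x : Fin n → ℝ) :
    BddBelow { r : ℝ | ∃ α : Finset (Fin n) → ℝ,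
      (∀ S, 0 ≤ α S) ∧
      (∑ S : Finset (Fin n), α S) = 1 ∧
      (∀ i : Fin n, (∑ S : Finset (Fin n), α S * (if i ∈ S then 1 else 0)) = x i) ∧
      r = ∑ S : Finset (Fin n), α S * f S } := by
  refine ⟨-∑ S : Finset (Fin n), |f S|, ?_⟩
  rintro r ⟨α, hpos, hsum, -, rfl⟩
  rw [← Finset.sum_neg_distrib]
  refine Finset.sum_le_sum fun S _ => ?_
  have hle1 : α S ≤ 1 := by
    rw [← hsum]
    exact Finset.single_le_sum (fun T _ => hpos T) (Finset.mem_univ S)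
  have habs : |α S * f S| ≤ |f S| := by
    rw [abs_mul]
    calc |α S| * |f S| = α S * |f S| := by rw [abs_of_nonneg (hpos S)]
      _ ≤ 1 * |f S| := mul_le_mul_of_nonneg_right hle1 (abs_nonneg _)
      _ = |f S| := one_mul _
  calc -|f S| ≤ -|α S * f S| := neg_le_neg habs
    _ ≤ α S * f S := neg_abs_le _

lemma a_antitone (δ : Equiv.Perm (Fin n)) (x : Fin n → ℝ)
    (hx : ∀ i, 0 ≤ x i ∧ x i ≤ 1)
    (hδ : ∀ i j : Fin n, i ≤ j → x (δ j) ≤ x (δ i)) (k : ℕ) :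
    a δ x (k + 1) ≤ a δ x k := by
  by_cases h1 : k + 1 < n
  · have h2 : k < n := by omega
    show (if h : k + 1 < n then x (δ ⟨k+1, h⟩) else 0) ≤ _
    rw [dif_pos h1]
    show _ ≤ (if h : k < n then x (δ ⟨k, h⟩) else 0)
    rw [dif_pos h2]
    exact hδ ⟨k, h2⟩ ⟨k+1, h1⟩ (by simp [Fin.le_def])
  · rw [a_of_ge δ x (by omega)]
    by_cases h2 : k < n
    · show (0:ℝ) ≤ (if h : k < n then x (δ ⟨k, h⟩) else 0)
      rw [dif_pos h2]; exact (hx _).1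
    · rw [a_of_ge δ x (by omega)]

lemma a_nonneg (δ : Equiv.Perm (Fin n)) (x : Fin n → ℝ)
    (hx : ∀ i, 0 ≤ x i ∧ x i ≤ 1) (k : ℕ) : 0 ≤ a δ x k := by
  unfold a; split
  · exact (hx _).1
  · exact le_rfl

lemma a_le_one (δ : Equiv.Perm (Fin n)) (x : Fin n → ℝ)
    (hx : ∀ i, 0 ≤ x i ∧ x i ≤ 1) (k : ℕ) : a δ x k ≤ 1 := by
  unfold a; split
  · exact (hx _).2
  · exact zero_le_one

lemma chain_mem (f : Finset (Fin n) → ℝ) (h0 : f ∅ = 0) (δ : Equiv.Perm (Fin n))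
    (x : Fin n → ℝ) (hx : ∀ i, 0 ≤ x i ∧ x i ≤ 1)
    (hδ : ∀ i j : Fin n, i ≤ j → x (δ j) ≤ x (δ i)) :
    lovasz f δ x ∈ { r : ℝ | ∃ α : Finset (Fin n) → ℝ,
      (∀ S, 0 ≤ α S) ∧
      (∑ S : Finset (Fin n), α S) = 1 ∧
      (∀ i : Fin n, (∑ S : Finset (Fin n), α S * (if i ∈ S then 1 else 0)) = x i) ∧
      r = ∑ S : Finset (Fin n), α S * f S } := by
  set c : ℕ → ℝ := fun k => a δ x k - a δ x (k + 1) with hc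
  have hcn : ∀ k, 0 ≤ c k := fun k => sub_nonneg.mpr (a_antitone δ x hx hδ k)
  refine ⟨fun S => (if S = ∅ then 1 - a δ x 0 else 0)
      + ∑ k ∈ Finset.range n, (if S = Q δ (k + 1) then c k else 0), ?_, ?_, ?_, ?_⟩
  · intro S
    have t1 : (0:ℝ) ≤ (if S = ∅ then 1 - a δ x 0 else 0) := by
      split
      · linarith [a_le_one δ x hx 0]
      · exact le_rfl
    have t2 : (0:ℝ) ≤ ∑ k ∈ Finset.range n, (if S = Q δ (k + 1) then c k else 0) := by
      refine Finset.sum_nonneg fun k _ => ?_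
      split
      · exact hcn k
      · exact le_rfl
    exact add_nonneg t1 t2
  · rw [Finset.sum_add_distrib]
    have t1 : ∑ S : Finset (Fin n), (if S = ∅ then 1 - a δ x 0 else 0) = 1 - a δ x 0 := by
      rw [Finset.sum_ite_eq' Finset.univ (∅ : Finset (Fin n)) (fun _ => 1 - a δ x 0)]
      simp
    have t2 : ∑ S : Finset (Fin n), ∑ k ∈ Finset.range n, (if S = Q δ (k + 1) then c k else 0)
        = a δ x 0 := by
      rw [Finset.sum_comm]
      have : ∀ k ∈ Finset.range n,
          ∑ S : Finset (Fin n), (if S = Q δ (k + 1) then c k else 0) = c k := by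
        intro k _
        rw [Finset.sum_ite_eq' Finset.univ (Q δ (k + 1)) (fun _ => c k)]
        simp
      rw [Finset.sum_congr rfl this, hc,
        Finset.sum_range_sub' (fun k => a δ x k) n, a_of_ge δ x le_rfl, sub_zero]
    rw [t1, t2]; ring
  · intro i
    simp only [add_mul, Finset.sum_add_distrib]
    have t1 : ∑ S : Finset (Fin n),
        (if S = ∅ then 1 - a δ x 0 else 0) * (if i ∈ S then (1:ℝ) else 0) = 0 := by
      refine Finset.sum_eq_zero fun S _ => ?_
      by_cases h : S = ∅
      · subst h; simp
      · rw [if_neg h, zero_mul]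
    have t2 : ∑ S : Finset (Fin n),
        (∑ k ∈ Finset.range n, (if S = Q δ (k + 1) then c k else 0)) *
          (if i ∈ S then (1:ℝ) else 0) = x i := by
      have step1 : ∀ S : Finset (Fin n),
          (∑ k ∈ Finset.range n, (if S = Q δ (k + 1) then c k else 0)) *
            (if i ∈ S then (1:ℝ) else 0)
          = ∑ k ∈ Finset.range n,
              (if S = Q δ (k + 1) then c k * (if i ∈ S then (1:ℝ) else 0) else 0) := by
        intro S
        rw [Finset.sum_mul]
        refine Finset.sum_congr rfl fun k _ => ?_
        split
        · rfl
        · rw [zero_mul]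
      simp only [step1]
      rw [Finset.sum_comm]
      have step2 : ∀ k ∈ Finset.range n,
          ∑ S : Finset (Fin n),
            (if S = Q δ (k + 1) then c k * (if i ∈ S then (1:ℝ) else 0) else 0)
          = if ((δ.symm i : Fin n) : ℕ) ≤ k then c k else 0 := by
        intro k _
        rw [Finset.sum_ite_eq' Finset.univ (Q δ (k + 1))
          (fun S => c k * (if i ∈ S then (1:ℝ) else 0))]
        simp only [Finset.mem_univ, if_true]
        by_cases h : i ∈ Q δ (k + 1)
        · rw [if_pos h, mul_one, if_pos (by rw [mem_Q] at h; omega)]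
        · rw [if_neg h, mul_zero, if_neg (by rw [mem_Q] at h; omega)]
      rw [Finset.sum_congr rfl step2]
      set m : ℕ := ((δ.symm i : Fin n) : ℕ) with hm
      have hmn : m < n := (δ.symm i).isLt
      have step3 : ∀ k, (if m ≤ k then c k else 0)
          = a δ x (max k m) - a δ x (max (k + 1) m) := by
        intro k
        by_cases h : m ≤ k
        · rw [if_pos h, Nat.max_eq_left h, Nat.max_eq_left (by omega)]
        · rw [if_neg h, Nat.max_eq_right (by omega), Nat.max_eq_right (by omega), sub_self]
      simp only [step3]
      rw [Finset.sum_range_sub' (fun k => a δ x (max k m)) n]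
      rw [Nat.max_eq_right (Nat.zero_le m), Nat.max_eq_left (le_of_lt hmn),
        a_of_ge δ x le_rfl, sub_zero]
      show (if h : m < n then x (δ ⟨m, h⟩) else 0) = x i
      rw [dif_pos hmn]
      have hfin : (⟨m, hmn⟩ : Fin n) = δ.symm i := Fin.ext rfl
      rw [hfin]
      simp
    rw [t1, t2, zero_add]
  · rw [lovasz_range]
    simp only [add_mul, Finset.sum_add_distrib]
    have t1 : ∑ S : Finset (Fin n), (if S = ∅ then 1 - a δ x 0 else 0) * f S = 0 := by
      refine Finset.sum_eq_zero fun S _ => ?_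
      by_cases h : S = ∅
      · subst h; rw [h0, mul_zero]
      · rw [if_neg h, zero_mul]
    have t2 : ∑ S : Finset (Fin n),
        (∑ k ∈ Finset.range n, (if S = Q δ (k + 1) then c k else 0)) * f S
        = ∑ k ∈ Finset.range n, c k * f (Q δ (k + 1)) := by
      have step1 : ∀ S : Finset (Fin n),
          (∑ k ∈ Finset.range n, (if S = Q δ (k + 1) then c k else 0)) * f S
          = ∑ k ∈ Finset.range n, (if S = Q δ (k + 1) then c k * f S else 0) := by
        intro S
        rw [Finset.sum_mul]
        refine Finset.sum_congr rfl fun k _ => ?_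
        split
        · rfl
        · rw [zero_mul]
      simp only [step1]
      rw [Finset.sum_comm]
      refine Finset.sum_congr rfl fun k _ => ?_
      rw [Finset.sum_ite_eq' Finset.univ (Q δ (k + 1)) (fun S => c k * f S)]
      simp
    rw [t1, t2, zero_add]


lemma lovasz_eq_sum_y (f : Finset (Fin n) → ℝ) (h0 : f ∅ = 0) (δ : Equiv.Perm (Fin n))
    (x : Fin n → ℝ) :
    lovasz f δ x = ∑ j : Fin n, x j * y f δ j := by
  rw [lovasz_abel f h0 δ x]
  rw [← Equiv.sum_comp δ (fun j => x j * y f δ j)]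
  rw [← Fin.sum_univ_eq_sum_range (fun k => a δ x k * (f (Q δ (k+1)) - f (Q δ k))) n]
  refine Finset.sum_congr rfl fun i _ => ?_
  have h1 : a δ x (i : ℕ) = x (δ i) := by simp [a, i.isLt]
  rw [h1, y_delta]

lemma direction2 (f : Finset (Fin n) → ℝ) (hf : Submodular f) (h0 : f ∅ = 0)
    (x : Fin n → ℝ) (hx : ∀ i, 0 ≤ x i ∧ x i ≤ 1)
    (δ : Equiv.Perm (Fin n)) (hδ : ∀ i j : Fin n, i ≤ j → x (δ j) ≤ x (δ i)) :
    lovasz f δ x = convexClosure f x := by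
  refine le_antisymm ?_ (csInf_le (bdd f x) (chain_mem f h0 δ x hx hδ))
  refine le_csInf ⟨_, chain_mem f h0 δ x hx hδ⟩ ?_
  rintro r ⟨α, hpos, hsum, hcoord, rfl⟩
  rw [lovasz_eq_sum_y f h0 δ x]
  have key : ∑ j : Fin n, x j * y f δ j
      = ∑ S : Finset (Fin n), α S * ∑ j ∈ S, y f δ j := by
    have hx' : ∀ j, x j = ∑ S : Finset (Fin n), α S * (if j ∈ S then 1 else 0) :=
      fun j => (hcoord j).symm
    calc ∑ j : Fin n, x j * y f δ j
        = ∑ j : Fin n, ∑ S : Finset (Fin n), α S * (if j ∈ S then (1:ℝ) else 0) * y f δ j := by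
          refine Finset.sum_congr rfl fun j _ => ?_
          rw [hx' j, Finset.sum_mul]
      _ = ∑ S : Finset (Fin n), ∑ j : Fin n, α S * (if j ∈ S then (1:ℝ) else 0) * y f δ j :=
          Finset.sum_comm
      _ = ∑ S : Finset (Fin n), α S * ∑ j ∈ S, y f δ j := by
          refine Finset.sum_congr rfl fun S _ => ?_
          rw [Finset.mul_sum]
          have hrw : ∑ j : Fin n, (α S * if j ∈ S then (1:ℝ) else 0) * y f δ j
              = ∑ j : Fin n, (if j ∈ S then α S * y f δ j else 0) := by
            refine Finset.sum_congr rfl fun j _ => ?_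
            by_cases h : j ∈ S <;> simp [h]
          rw [hrw, Finset.sum_ite_mem, Finset.univ_inter]
  rw [key]
  exact Finset.sum_le_sum fun S _ =>
    mul_le_mul_of_nonneg_left (greedy f hf h0 δ S) (hpos S)


lemma sum_pick_mul (T : Finset (Fin n)) (c : ℝ) (g : Finset (Fin n) → ℝ) :
    ∑ S : Finset (Fin n), (if S = T then c else 0) * g S = c * g T := by
  have h : ∀ S : Finset (Fin n),
      (if S = T then c else 0) * g S = if S = T then c * g S else 0 := by
    intro S; split <;> simp
  simp only [h]
  rw [Finset.sum_ite_eq' Finset.univ T (fun S => c * g S)]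
  simp

lemma eq_init {D : Finset (Fin n)} (hD : ∀ k ∈ D, ∀ k' : Fin n, k' ≤ k → k' ∈ D) :
    D = Finset.univ.filter (fun l : Fin n => (l : ℕ) < D.card) := by
  ext k
  simp only [Finset.mem_filter, Finset.mem_univ, true_and]
  constructor
  · intro hk
    have hsub : Finset.Iic k ⊆ D := fun k' hk' => hD k hk k' (Finset.mem_Iic.mp hk')
    have hcard := Finset.card_le_card hsub
    rw [Fin.card_Iic] at hcard
    omega
  · intro hk
    by_contra hkD
    have hsub : D ⊆ Finset.Iio k := by
      intro k' hk'
      rw [Finset.mem_Iio]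
      by_contra hge
      exact hkD (hD k' hk' k (le_of_not_gt hge))
    have hcard := Finset.card_le_card hsub
    rw [Fin.card_Iio] at hcard
    omega

lemma direction1 (hn : 0 < n) (f : Finset (Fin n) → ℝ) (h0 : f ∅ = 0)
    (H : ∀ x : Fin n → ℝ, (∀ i, 0 ≤ x i ∧ x i ≤ 1) →
      ∀ δ : Equiv.Perm (Fin n), (∀ i j : Fin n, i ≤ j → x (δ j) ≤ x (δ i)) →
        lovasz f δ x = convexClosure f x) : Submodular f := by
  intro X Y
  set x : Fin n → ℝ := fun i =>
    ((if i ∈ X then (1:ℝ) else 0) + (if i ∈ Y then (1:ℝ) else 0)) / 2 with hxdef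
  have hx : ∀ i, 0 ≤ x i ∧ x i ≤ 1 := by
    intro i
    constructor <;> (rw [hxdef]; dsimp only) <;> split_ifs <;> norm_num
  set δ : Equiv.Perm (Fin n) := Tuple.sort (fun i => -x i) with hδdef
  have hδ : ∀ i j : Fin n, i ≤ j → x (δ j) ≤ x (δ i) := by
    intro i j hij
    have h := Tuple.monotone_sort (fun i => -x i) hij
    simp only [Function.comp_apply] at h
    rw [← hδdef] at h
    exact neg_le_neg_iff.mp h
  have heq := H x hx δ hδ
  -- upper bound on the convex closure
  have hupper : convexClosure f x ≤ (f X + f Y) / 2 := by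
    apply csInf_le (bdd f x)
    refine ⟨fun S => (if S = X then (1:ℝ)/2 else 0) + (if S = Y then (1:ℝ)/2 else 0),
      ?_, ?_, ?_, ?_⟩
    · intro S; dsimp only; split_ifs <;> norm_num
    · rw [Finset.sum_add_distrib]
      rw [Finset.sum_ite_eq' Finset.univ X (fun _ => (1:ℝ)/2)]
      rw [Finset.sum_ite_eq' Finset.univ Y (fun _ => (1:ℝ)/2)]
      norm_num
    · intro i
      simp only [add_mul, Finset.sum_add_distrib]
      rw [sum_pick_mul X ((1:ℝ)/2) (fun S => if i ∈ S then (1:ℝ) else 0)]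
      rw [sum_pick_mul Y ((1:ℝ)/2) (fun S => if i ∈ S then (1:ℝ) else 0)]
      rw [hxdef]
      dsimp only
      ring
    · simp only [add_mul, Finset.sum_add_distrib]
      rw [sum_pick_mul X ((1:ℝ)/2) f, sum_pick_mul Y ((1:ℝ)/2) f]
      ring
  -- the values of x
  have hx1 : ∀ j : Fin n, x j = 1 ↔ j ∈ X ∩ Y := by
    intro j
    rw [Finset.mem_inter, hxdef]
    dsimp only
    split_ifs <;> norm_num <;> tauto
  have hx2 : ∀ j : Fin n, (1:ℝ)/2 ≤ x j ↔ j ∈ X ∪ Y := by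
    intro j
    rw [Finset.mem_union, hxdef]
    dsimp only
    split_ifs <;> norm_num <;> tauto
  have hx3 : ∀ j : Fin n, x j = 1 ∨ x j = 1/2 ∨ x j = 0 := by
    intro j
    rw [hxdef]
    dsimp only
    split_ifs <;> norm_num
  set p : ℕ := (X ∩ Y).card with hp
  set q : ℕ := (X ∪ Y).card with hq
  have hp_le_q : p ≤ q := Finset.card_le_card (Finset.inter_subset_union)
  have hq_le_n : q ≤ n := by
    have h := Finset.card_le_univ (X ∪ Y)
    rwa [Fintype.card_fin] at h
  -- the level sets
  set D1 : Finset (Fin n) := Finset.univ.filter (fun k : Fin n => x (δ k) = 1) with hD1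
  set D2 : Finset (Fin n) := Finset.univ.filter (fun k : Fin n => (1:ℝ)/2 ≤ x (δ k)) with hD2
  have hD1dc : ∀ k ∈ D1, ∀ k' : Fin n, k' ≤ k → k' ∈ D1 := by
    intro k hk k' hk'
    rw [hD1, Finset.mem_filter] at hk ⊢
    refine ⟨Finset.mem_univ _, le_antisymm (hx _).2 ?_⟩
    rw [← hk.2]
    exact hδ k' k hk'
  have hD2dc : ∀ k ∈ D2, ∀ k' : Fin n, k' ≤ k → k' ∈ D2 := by
    intro k hk k' hk'
    rw [hD2, Finset.mem_filter] at hk ⊢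
    exact ⟨Finset.mem_univ _, le_trans hk.2 (hδ k' k hk')⟩
  have himg1 : D1.image δ = X ∩ Y := by
    ext j
    rw [← hx1 j]
    simp only [hD1, Finset.mem_image, Finset.mem_filter, Finset.mem_univ, true_and]
    constructor
    · rintro ⟨k, hk, rfl⟩; exact hk
    · intro hj; exact ⟨δ.symm j, by simpa using hj, by simp⟩
  have himg2 : D2.image δ = X ∪ Y := by
    ext j
    rw [← hx2 j]
    simp only [hD2, Finset.mem_image, Finset.mem_filter, Finset.mem_univ, true_and]
    constructor
    · rintro ⟨k, hk, rfl⟩; exact hk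
    · intro hj; exact ⟨δ.symm j, by simpa using hj, by simp⟩
  have hcard1 : D1.card = p := by
    rw [hp, ← himg1, Finset.card_image_of_injective _ δ.injective]
  have hcard2 : D2.card = q := by
    rw [hq, ← himg2, Finset.card_image_of_injective _ δ.injective]
  have hD1i : D1 = Finset.univ.filter (fun l : Fin n => (l : ℕ) < p) := by
    rw [eq_init hD1dc, hcard1]
  have hD2i : D2 = Finset.univ.filter (fun l : Fin n => (l : ℕ) < q) := by
    rw [eq_init hD2dc, hcard2]
  have hQp : Q δ p = X ∩ Y := by
    rw [Q, ← hD1i, himg1]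
  have hQq : Q δ q = X ∪ Y := by
    rw [Q, ← hD2i, himg2]
  -- values of a
  have hmemD1 : ∀ (k : ℕ) (h : k < n), ((⟨k, h⟩ : Fin n) ∈ D1 ↔ k < p) := by
    intro k h; rw [hD1i]; simp
  have hmemD2 : ∀ (k : ℕ) (h : k < n), ((⟨k, h⟩ : Fin n) ∈ D2 ↔ k < q) := by
    intro k h; rw [hD2i]; simp
  have ha1 : ∀ k, k < p → a δ x k = 1 := by
    intro k hk
    have hkn : k < n := lt_of_lt_of_le hk (le_trans hp_le_q hq_le_n)
    have hmem : (⟨k, hkn⟩ : Fin n) ∈ D1 := (hmemD1 k hkn).mpr hk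
    rw [hD1, Finset.mem_filter] at hmem
    show (if h : k < n then x (δ ⟨k, h⟩) else 0) = 1
    rw [dif_pos hkn]
    exact hmem.2
  have ha2 : ∀ k, p ≤ k → k < q → a δ x k = 1/2 := by
    intro k hk1 hk2
    have hkn : k < n := lt_of_lt_of_le hk2 hq_le_n
    have hmem2 : (⟨k, hkn⟩ : Fin n) ∈ D2 := (hmemD2 k hkn).mpr hk2
    have hmem1 : (⟨k, hkn⟩ : Fin n) ∉ D1 := fun h => by
      have := (hmemD1 k hkn).mp h; omega
    rw [hD2, Finset.mem_filter] at hmem2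
    rw [hD1, Finset.mem_filter] at hmem1
    show (if h : k < n then x (δ ⟨k, h⟩) else 0) = 1/2
    rw [dif_pos hkn]
    rcases hx3 (δ ⟨k, hkn⟩) with h | h | h
    · exact absurd ⟨Finset.mem_univ _, h⟩ hmem1
    · exact h
    · rw [h] at hmem2; norm_num at hmem2
  have ha3 : ∀ k, q ≤ k → a δ x k = 0 := by
    intro k hk
    by_cases hkn : k < n
    · have hmem2 : (⟨k, hkn⟩ : Fin n) ∉ D2 := fun h => by
        have := (hmemD2 k hkn).mp h; omega
      rw [hD2, Finset.mem_filter] at hmem2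
      show (if h : k < n then x (δ ⟨k, h⟩) else 0) = 0
      rw [dif_pos hkn]
      rcases hx3 (δ ⟨k, hkn⟩) with h | h | h
      · exact absurd ⟨Finset.mem_univ _, by rw [h]; norm_num⟩ hmem2
      · exact absurd ⟨Finset.mem_univ _, by rw [h]⟩ hmem2
      · exact h
    · exact a_of_ge δ x (by omega)
  -- compute the Lovász extension
  have hlov : lovasz f δ x = (f (X ∩ Y) + f (X ∪ Y)) / 2 := by
    rw [lovasz_abel f h0 δ x]
    set g : ℕ → ℝ := fun k => a δ x k * (f (Q δ (k + 1)) - f (Q δ k)) with hg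
    rw [Finset.range_eq_Ico,
      ← Finset.sum_Ico_consecutive g (Nat.zero_le q) hq_le_n,
      ← Finset.sum_Ico_consecutive g (Nat.zero_le p) hp_le_q]
    have s3 : ∑ k ∈ Finset.Ico q n, g k = 0 := by
      refine Finset.sum_eq_zero fun k hk => ?_
      rw [Finset.mem_Ico] at hk
      rw [hg]
      dsimp only
      rw [ha3 k hk.1, zero_mul]
    have s1 : ∑ k ∈ Finset.Ico 0 p, g k = f (X ∩ Y) := by
      have : ∀ k ∈ Finset.Ico 0 p, g k = f (Q δ (k + 1)) - f (Q δ k) := by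
        intro k hk
        rw [Finset.mem_Ico] at hk
        rw [hg]
        dsimp only
        rw [ha1 k hk.2, one_mul]
      rw [Finset.sum_congr rfl this, ← Finset.range_eq_Ico,
        Finset.sum_range_sub (fun k => f (Q δ k)) p, hQp, Q_zero, h0, sub_zero]
    have s2 : ∑ k ∈ Finset.Ico p q, g k = (f (X ∪ Y) - f (X ∩ Y)) / 2 := by
      have : ∀ k ∈ Finset.Ico p q, g k = (1/2) * (f (Q δ (k + 1)) - f (Q δ k)) := by
        intro k hk
        rw [Finset.mem_Ico] at hk
        rw [hg]
        dsimp only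
        rw [ha2 k hk.1 hk.2]
      rw [Finset.sum_congr rfl this, ← Finset.mul_sum]
      have htel : ∑ k ∈ Finset.Ico p q, (f (Q δ (k + 1)) - f (Q δ k))
          = f (Q δ q) - f (Q δ p) := by
        rw [Finset.sum_Ico_eq_sub _ hp_le_q,
          Finset.sum_range_sub (fun k => f (Q δ k)) q,
          Finset.sum_range_sub (fun k => f (Q δ k)) p]
        ring
      rw [htel, hQp, hQq]
      ring
    rw [s1, s2, s3]
    ring
  rw [hlov] at heq
  linarith [hupper]

end LCAux


/-- The Lovász extension of `f` coincides with its convex closure on `[0,1]^n`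
(for every sorting permutation) if and only if `f` is submodular. -/
theorem lovasz_eq_convexClosure_iff_submodular {n : ℕ} (hn : 0 < n)
    (f : Finset (Fin n) → ℝ) (h0 : f ∅ = 0) :
    (∀ x : Fin n → ℝ, (∀ i, 0 ≤ x i ∧ x i ≤ 1) →
      ∀ δ : Equiv.Perm (Fin n), (∀ i j : Fin n, i ≤ j → x (δ j) ≤ x (δ i)) →
        lovasz f δ x = convexClosure f x) ↔ Submodular f := by
  constructor
  · exact fun H => LCAux.direction1 hn f h0 H
  · intro hf x hx δ hδ
    exact LCAux.direction2 f hf h0 x hx δ hδ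
end

section
/- Let f : 2^N → ℝ be submodular with f(∅) = 0. For every permutation δ of N, define π^δ ∈ ℝ^n by π^δ_{δ(i)} = f(X^{δ,i}) − f(X^{δ,i−1}) for i = 1,…,n, where X^{δ,i} = {δ(1),…,δ(i)} and X^{δ,0} = ∅. Then every extended polymatroid inequality is valid for the epigraph of f: for every permutation δ and every X ⊆ N, Σ_{i∈X} π^δ_i ≤ f(X). -/
/-- `X^{δ,i-1} = {δ(1),…,δ(i-1)}` (positions `< i` in 0-based indexing);
for the first position this is `∅`. -/
def prefixLt {n : ℕ} (δ : Equiv.Perm (Fin n)) (i : Fin n) : Finset (Fin n) :=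
  (Finset.univ.filter (fun l : Fin n => l < i)).image δ

/-- The coefficient vector `π^δ` of the extended polymatroid inequality associated
with a permutation `δ`: `π^δ_{δ(i)} = f(X^{δ,i}) − f(X^{δ,i−1})`. -/
def epiCoef {n : ℕ} (f : Finset (Fin n) → ℝ) (δ : Equiv.Perm (Fin n)) :
    Fin n → ℝ :=
  fun j => f (prefixLe δ (δ.symm j)) - f (prefixLt δ (δ.symm j))

/-- positions with ℕ index `< k` -/
def PkN {n : ℕ} (δ : Equiv.Perm (Fin n)) (k : ℕ) : Finset (Fin n) :=
  (Finset.univ.filter (fun l : Fin n => (l : ℕ) < k)).image δ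

lemma PkN_succ {n : ℕ} (δ : Equiv.Perm (Fin n)) (k : ℕ) (hk : k < n) :
    PkN δ (k + 1) = insert (δ ⟨k, hk⟩) (PkN δ k) := by
  unfold PkN
  rw [← Finset.image_insert]
  congr 1
  ext l
  simp [Nat.lt_succ_iff_lt_or_eq, Fin.ext_iff]
  omega

lemma prefixLt_eq {n : ℕ} (δ : Equiv.Perm (Fin n)) (k : ℕ) (hk : k < n) :
    prefixLt δ ⟨k, hk⟩ = PkN δ k := rfl

lemma prefixLe_eq {n : ℕ} (δ : Equiv.Perm (Fin n)) (k : ℕ) (hk : k < n) :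
    prefixLe δ ⟨k, hk⟩ = PkN δ (k + 1) := by
  unfold prefixLe PkN
  congr 2
  ext l
  simp [Nat.lt_succ_iff, Fin.le_def]

/-- Every extended polymatroid inequality is valid for the epigraph of a submodular
function `f` with `f(∅) = 0`: for every permutation `δ` and every `X ⊆ N`,
`Σ_{i∈X} π^δ_i ≤ f(X)`. -/
theorem extended_polymatroid_inequality_valid {n : ℕ} (hn : 0 < n)
    (f : Finset (Fin n) → ℝ) (hf : Submodular f) (h0 : f ∅ = 0)
    (δ : Equiv.Perm (Fin n)) (X : Finset (Fin n)) :
    ∑ i ∈ X, epiCoef f δ i ≤ f X := by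
  have key : ∀ k : ℕ, k ≤ n →
      ∑ j ∈ X ∩ PkN δ k, epiCoef f δ j ≤ f (X ∩ PkN δ k) := by
    intro k
    induction k with
    | zero =>
      intro _
      have : PkN δ 0 = ∅ := by simp [PkN]
      simp [this, h0]
    | succ k ih =>
      intro hk1
      have hk : k < n := hk1
      have hins := PkN_succ δ k hk
      have hknot : δ ⟨k, hk⟩ ∉ PkN δ k := by
        simp only [PkN, Finset.mem_image]
        rintro ⟨l, hl, he⟩
        simp only [Finset.mem_filter] at hl
        have : l = ⟨k, hk⟩ := δ.injective he
        subst this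
        simp at hl
      by_cases hx : δ ⟨k, hk⟩ ∈ X
      · have hset : X ∩ PkN δ (k + 1) = insert (δ ⟨k, hk⟩) (X ∩ PkN δ k) := by
          rw [hins, Finset.inter_insert_of_mem hx]
        have hnot : δ ⟨k, hk⟩ ∉ X ∩ PkN δ k := by
          simp [hknot]
        rw [hset, Finset.sum_insert hnot]
        have hcoef : epiCoef f δ (δ ⟨k, hk⟩)
            = f (PkN δ (k + 1)) - f (PkN δ k) := by
          simp [epiCoef, prefixLe_eq δ k hk, prefixLt_eq δ k hk]
        rw [hcoef]
        -- submodularity: A = insert j (X ∩ Pk), B = PkN k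
        have hsub := hf (insert (δ ⟨k, hk⟩) (X ∩ PkN δ k)) (PkN δ k)
        have hAint : insert (δ ⟨k, hk⟩) (X ∩ PkN δ k) ∩ PkN δ k = X ∩ PkN δ k := by
          ext a
          simp only [Finset.mem_inter, Finset.mem_insert]
          constructor
          · rintro ⟨h1 | h1, h2⟩
            · exact absurd h2 (h1 ▸ hknot)
            · exact h1
          · tauto
        have hAun : insert (δ ⟨k, hk⟩) (X ∩ PkN δ k) ∪ PkN δ k = PkN δ (k + 1) := by
          rw [hins]
          ext a
          simp only [Finset.mem_union, Finset.mem_insert, Finset.mem_inter]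
          tauto
        rw [hAint, hAun] at hsub
        have := ih (le_of_lt hk)
        linarith
      · have hset : X ∩ PkN δ (k + 1) = X ∩ PkN δ k := by
          rw [hins, Finset.inter_insert_of_notMem hx]
        rw [hset]
        exact ih (le_of_lt hk)
  have hfull : PkN δ n = Finset.univ := by
    unfold PkN
    rw [Finset.filter_true_of_mem (fun l _ => l.isLt)]
    simp [Finset.image_univ_equiv]
  have := key n le_rfl
  rwa [hfull, Finset.inter_univ] at this
end

section
/- Let f : {0,1}^n → ℝ be submodular with f(0) = 0 and let Q_f = {(x,w) ∈ {0,1}^n × ℝ : w ≥ f(x)} be its epigraph. Then the convex hull of Q_f equals the set of all (x,w) ∈ ℝ^n × ℝ satisfying 0 ≤ x_i ≤ 1 for all i ∈ N together with all extended polymatroid inequalities: w ≥ Σ_{i=1}^n π^δ_i x_i for every permutation δ of N, where π^δ_{δ(i)} = f(X^{δ,i}) − f(X^{δ,i−1}), X^{δ,i} = {δ(1),…,δ(i)}, X^{δ,0} = ∅. -/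
open scoped Classical

/-- The subset of `N` encoded by a binary vector `x ∈ {0,1}^n`. -/
noncomputable def toSubset {n : ℕ} (x : Fin n → ℝ) : Finset (Fin n) :=
  Finset.univ.filter (fun i => x i = 1)

namespace EPIaux

variable {n : ℕ}

/-- prefix of first `m` positions (0-based): `{δ l : l.val < m}`. -/
def pre (δ : Equiv.Perm (Fin n)) (m : ℕ) : Finset (Fin n) :=
  (Finset.univ.filter (fun l : Fin n => l.val < m)).image δ

lemma mem_pre {δ : Equiv.Perm (Fin n)} {i : Fin n} {m : ℕ} :
    i ∈ pre δ m ↔ (δ.symm i).val < m := by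
  simp only [pre, Finset.mem_image, Finset.mem_filter, Finset.mem_univ, true_and]
  constructor
  · rintro ⟨l, hl, rfl⟩; simpa using hl
  · intro h; exact ⟨δ.symm i, h, δ.apply_symm_apply i⟩

lemma pre_zero (δ : Equiv.Perm (Fin n)) : pre δ 0 = ∅ := by
  ext i; simp [mem_pre]

lemma pre_of_ge (δ : Equiv.Perm (Fin n)) {m : ℕ} (h : n ≤ m) : pre δ m = Finset.univ := by
  ext i
  simp only [mem_pre, Finset.mem_univ, iff_true]
  exact lt_of_lt_of_le (δ.symm i).isLt h

lemma pre_succ {δ : Equiv.Perm (Fin n)} {m : ℕ} (hm : m < n) :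
    pre δ (m + 1) = insert (δ ⟨m, hm⟩) (pre δ m) := by
  ext i
  simp only [mem_pre, Finset.mem_insert, ← Equiv.symm_apply_eq, Fin.ext_iff]
  omega

lemma not_mem_pre {δ : Equiv.Perm (Fin n)} {m : ℕ} (hm : m < n) :
    δ ⟨m, hm⟩ ∉ pre δ m := by
  simp [mem_pre]

lemma prefixLe_eq (δ : Equiv.Perm (Fin n)) (k : Fin n) :
    prefixLe δ k = pre δ (k.val + 1) := by
  unfold prefixLe pre
  congr 1
  ext l
  simp only [Finset.mem_filter, Finset.mem_univ, true_and, Fin.le_def]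
  omega

lemma prefixLt_eq (δ : Equiv.Perm (Fin n)) (k : Fin n) :
    prefixLt δ k = pre δ k.val := by
  unfold prefixLt pre
  congr 1

lemma epiCoef_apply (f : Finset (Fin n) → ℝ) (δ : Equiv.Perm (Fin n)) (k : Fin n) :
    epiCoef f δ (δ k) = f (pre δ (k.val + 1)) - f (pre δ k.val) := by
  simp [epiCoef, Equiv.symm_apply_apply, prefixLe_eq, prefixLt_eq]

lemma greedy (f : Finset (Fin n) → ℝ) (hf : Submodular f) (h0 : f ∅ = 0)
    (δ : Equiv.Perm (Fin n)) (S : Finset (Fin n)) :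
    ∀ m, m ≤ n → ∑ j ∈ S ∩ pre δ m, epiCoef f δ j ≤ f (S ∩ pre δ m) := by
  intro m
  induction m with
  | zero => intro _; simp [pre_zero, h0]
  | succ m ih =>
    intro hm
    have hmn : m < n := hm
    have IH := ih (le_of_lt hmn)
    set e := δ ⟨m, hmn⟩ with he
    have hins : pre δ (m + 1) = insert e (pre δ m) := pre_succ hmn
    have hen : e ∉ pre δ m := not_mem_pre hmn
    have hcoef : epiCoef f δ e = f (pre δ (m + 1)) - f (pre δ m) := epiCoef_apply f δ ⟨m, hmn⟩
    by_cases heS : e ∈ S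
    · have h1 : S ∩ pre δ (m + 1) = insert e (S ∩ pre δ m) := by
        rw [hins]
        ext j
        simp only [Finset.mem_inter, Finset.mem_insert]
        constructor
        · rintro ⟨hjS, hj | hj⟩
          · exact Or.inl hj
          · exact Or.inr ⟨hjS, hj⟩
        · rintro (rfl | ⟨hjS, hj⟩)
          · exact ⟨heS, Or.inl rfl⟩
          · exact ⟨hjS, Or.inr hj⟩
      have hnotmem : e ∉ S ∩ pre δ m := fun h => hen (Finset.mem_inter.mp h).2
      rw [h1, Finset.sum_insert hnotmem]
      have hsub := hf (insert e (S ∩ pre δ m)) (pre δ m)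
      have hXY : insert e (S ∩ pre δ m) ∩ pre δ m = S ∩ pre δ m := by
        ext j
        simp only [Finset.mem_inter, Finset.mem_insert]
        constructor
        · rintro ⟨rfl | ⟨hjS, _⟩, hj2⟩
          · exact absurd hj2 hen
          · exact ⟨hjS, hj2⟩
        · rintro ⟨hjS, hj⟩; exact ⟨Or.inr ⟨hjS, hj⟩, hj⟩
      have hXuY : insert e (S ∩ pre δ m) ∪ pre δ m = pre δ (m + 1) := by
        rw [hins]
        ext j
        simp only [Finset.mem_union, Finset.mem_insert, Finset.mem_inter]
        tauto
      rw [hXY, hXuY] at hsub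
      rw [hcoef]
      linarith
    · have h1 : S ∩ pre δ (m + 1) = S ∩ pre δ m := by
        rw [hins]
        ext j
        simp only [Finset.mem_inter, Finset.mem_insert]
        constructor
        · rintro ⟨hjS, rfl | hj⟩
          · exact absurd hjS heS
          · exact ⟨hjS, hj⟩
        · rintro ⟨hjS, hj⟩; exact ⟨hjS, Or.inr hj⟩
      rw [h1]; exact IH

lemma greedy_main (f : Finset (Fin n) → ℝ) (hf : Submodular f) (h0 : f ∅ = 0)
    (δ : Equiv.Perm (Fin n)) (x : Fin n → ℝ) (hx : ∀ i, x i = 0 ∨ x i = 1) :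
    ∑ i : Fin n, epiCoef f δ i * x i ≤ f (toSubset x) := by
  have hS : ∀ i : Fin n, x i = if i ∈ toSubset x then (1 : ℝ) else 0 := by
    intro i
    simp only [toSubset, Finset.mem_filter, Finset.mem_univ, true_and]
    rcases hx i with h | h <;> simp [h]
  calc ∑ i : Fin n, epiCoef f δ i * x i
      = ∑ i : Fin n, (if i ∈ toSubset x then epiCoef f δ i else 0) := by
        apply Finset.sum_congr rfl
        intro i _
        rw [hS i]
        by_cases h : i ∈ toSubset x <;> simp [h]
    _ = ∑ i ∈ toSubset x, epiCoef f δ i := Fintype.sum_ite_mem _ _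
    _ = ∑ i ∈ toSubset x ∩ pre δ n, epiCoef f δ i := by rw [pre_of_ge δ le_rfl, Finset.inter_univ]
    _ ≤ f (toSubset x ∩ pre δ n) := greedy f hf h0 δ (toSubset x) n le_rfl
    _ = f (toSubset x) := by rw [pre_of_ge δ le_rfl, Finset.inter_univ]

end EPIaux

namespace EPIaux

/-- The piecewise thresholds: `zz 0 = 1`, `zz (m+1) = x (δ m)` for `m < n`, `0` beyond. -/
noncomputable def zz (x : Fin n → ℝ) (δ : Equiv.Perm (Fin n)) : ℕ → ℝ := fun m =>
  if m = 0 then 1 else if h : m - 1 < n then x (δ ⟨m - 1, h⟩) else 0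

lemma zz_zero (x : Fin n → ℝ) (δ : Equiv.Perm (Fin n)) : zz x δ 0 = 1 := by simp [zz]

lemma zz_succ (x : Fin n → ℝ) (δ : Equiv.Perm (Fin n)) {k : ℕ} (hk : k < n) :
    zz x δ (k + 1) = x (δ ⟨k, hk⟩) := by simp [zz, hk]

lemma zz_top (x : Fin n → ℝ) (δ : Equiv.Perm (Fin n)) : zz x δ (n + 1) = 0 := by
  simp [zz]

lemma zz_pos (x : Fin n → ℝ) (δ : Equiv.Perm (Fin n)) {m : ℕ} (h1 : m ≠ 0)
    (h2 : m - 1 < n) : zz x δ m = x (δ ⟨m - 1, h2⟩) := by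
  simp [zz, h1, h2]

lemma toSubset_indicator (s : Finset (Fin n)) :
    toSubset (fun i => if i ∈ s then (1 : ℝ) else 0) = s := by
  ext i
  simp only [toSubset, Finset.mem_filter, Finset.mem_univ, true_and]
  by_cases h : i ∈ s <;> simp [h]

end EPIaux

open EPIaux

/-- For submodular `f` with `f(0) = 0`, the convex hull of the epigraph
`Q_f = {(x,w) ∈ {0,1}^n × ℝ : w ≥ f(x)}` equals the set of `(x,w)` satisfying
`0 ≤ x ≤ 1` and all extended polymatroid inequalities `w ≥ Σ_i π^δ_i x_i`. -/
theorem convexHull_epigraph_eq_EPI_polyhedron {n : ℕ} (hn : 0 < n)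
    (f : Finset (Fin n) → ℝ) (hf : Submodular f) (h0 : f ∅ = 0) :
    convexHull ℝ
        {p : (Fin n → ℝ) × ℝ |
          (∀ i, p.1 i = 0 ∨ p.1 i = 1) ∧ f (toSubset p.1) ≤ p.2} =
      {p : (Fin n → ℝ) × ℝ |
        (∀ i, 0 ≤ p.1 i ∧ p.1 i ≤ 1) ∧
        ∀ δ : Equiv.Perm (Fin n), ∑ i : Fin n, epiCoef f δ i * p.1 i ≤ p.2} := by
  apply Set.Subset.antisymm
  · -- convexHull Q ⊆ P
    apply convexHull_min
    · rintro ⟨x, w⟩ ⟨hx01, hfw⟩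
      refine ⟨fun i => ?_, fun δ => le_trans (greedy_main f hf h0 δ x hx01) hfw⟩
      rcases hx01 i with h | h <;> (rw [h]; norm_num)
    · -- P is convex
      rintro ⟨x, w⟩ ⟨hx, hw⟩ ⟨y, v⟩ ⟨hy, hv⟩ a b ha hb hab
      refine ⟨fun i => ?_, fun δ => ?_⟩
      · simp only [Prod.smul_mk, Prod.mk_add_mk, Pi.add_apply, Pi.smul_apply, smul_eq_mul]
        constructor
        · nlinarith [(hx i).1, (hy i).1]
        · nlinarith [(hx i).2, (hy i).2]
      · simp only [Prod.smul_mk, Prod.mk_add_mk, Pi.add_apply, Pi.smul_apply, smul_eq_mul]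
        have hre : ∀ i : Fin n, epiCoef f δ i * (a * x i + b * y i) =
            a * (epiCoef f δ i * x i) + b * (epiCoef f δ i * y i) := fun i => by ring
        rw [Finset.sum_congr rfl (fun i _ => hre i), Finset.sum_add_distrib,
          ← Finset.mul_sum, ← Finset.mul_sum]
        nlinarith [hw δ, hv δ]
  · -- P ⊆ convexHull Q
    rintro ⟨x, w⟩ ⟨hx, hw⟩
    set δ : Equiv.Perm (Fin n) := Tuple.sort (fun i => -x i) with hδ
    have hsort : ∀ a b : Fin n, a ≤ b → x (δ b) ≤ x (δ a) := by
      intro a b hab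
      have := Tuple.monotone_sort (fun i => -x i) hab
      simp only [Function.comp_apply] at this
      simpa using this
    set z : ℕ → ℝ := zz x δ with hz
    set lam : ℕ → ℝ := fun m => z m - z (m + 1) with hlam
    set F : ℕ → ℝ := fun m => f (pre δ m) with hF
    -- z is antitone on 0..n+1
    have hzanti : ∀ m, m ≤ n → z (m + 1) ≤ z m := by
      intro m hm
      rcases Nat.eq_zero_or_pos m with rfl | hm1
      · rw [hz, zz_zero, zz_succ x δ hn]
        exact (hx _).2
      · rcases lt_or_eq_of_le hm with hmn | rfl
        · have hm1n : m - 1 < n := by omega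
          rw [hz, zz_succ x δ hmn, zz_pos x δ (by omega) hm1n]
          exact hsort ⟨m - 1, hm1n⟩ ⟨m, hmn⟩ (by simp only [Fin.le_def]; omega)
        · rw [hz, zz_top, zz_pos x δ (by omega) (by omega)]
          exact (hx _).1
    have hlam0 : ∀ m ∈ Finset.range (n + 1), 0 ≤ lam m := by
      intro m hm
      rw [Finset.mem_range] at hm
      have := hzanti m (by omega)
      simp only [hlam]
      linarith
    have hsum : ∑ m ∈ Finset.range (n + 1), lam m = 1 := by
      have := Finset.sum_range_sub' (f := z) (n := n + 1)
      simp only [hlam]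
      rw [this, hz, zz_zero, zz_top]
      ring
    -- value identity (Abel summation)
    have hval : ∑ m ∈ Finset.range (n + 1), lam m * F m
        = ∑ i : Fin n, epiCoef f δ i * x i := by
      have tele : ∑ m ∈ Finset.range (n + 1), (z m * F m - z (m + 1) * F (m + 1))
          = z 0 * F 0 - z (n + 1) * F (n + 1) :=
        Finset.sum_range_sub' (f := fun m => z m * F m) (n := n + 1)
      have split : ∀ m, lam m * F m
          = (z m * F m - z (m + 1) * F (m + 1)) + z (m + 1) * (F (m + 1) - F m) := by
        intro m; simp only [hlam]; ring
      have hF0 : F 0 = 0 := by simp [hF, pre_zero, h0]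
      have hzn1 : z (n + 1) = 0 := zz_top x δ
      rw [Finset.sum_congr rfl (fun m _ => split m), Finset.sum_add_distrib, tele, hF0, hzn1,
        Finset.sum_range_succ, hzn1]
      have hRHS : ∑ i : Fin n, epiCoef f δ i * x i
          = ∑ k : Fin n, (fun m : ℕ => z (m + 1) * (F (m + 1) - F m)) k.val := by
        rw [← Equiv.sum_comp δ (fun i => epiCoef f δ i * x i)]
        apply Finset.sum_congr rfl
        intro k _
        rw [epiCoef_apply f δ k]
        have : x (δ k) = z (k.val + 1) := by
          rw [hz, zz_succ x δ k.isLt]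
        rw [this]
        ring
      rw [hRHS, Fin.sum_univ_eq_sum_range (fun m : ℕ => z (m + 1) * (F (m + 1) - F m)) n]
      ring
    have hc : 0 ≤ w - ∑ m ∈ Finset.range (n + 1), lam m * F m := by
      rw [hval]; linarith [hw δ]
    set c : ℝ := w - ∑ m ∈ Finset.range (n + 1), lam m * F m with hcdef
    set q : ℕ → (Fin n → ℝ) × ℝ :=
      fun m => ((fun i => if i ∈ pre δ m then (1 : ℝ) else 0), F m + c) with hq
    have hqmem : ∀ m ∈ Finset.range (n + 1), q m ∈
        {p : (Fin n → ℝ) × ℝ | (∀ i, p.1 i = 0 ∨ p.1 i = 1) ∧ f (toSubset p.1) ≤ p.2} := by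
      intro m _
      refine ⟨fun i => ?_, ?_⟩
      · by_cases h : i ∈ pre δ m <;> simp [hq, h]
      · simp only [hq, toSubset_indicator]
        show f (pre δ m) ≤ F m + c
        rw [hF]
        linarith
    -- the representation
    have hrepr : ∑ m ∈ Finset.range (n + 1), lam m • q m = (x, w) := by
      have h2 : (∑ m ∈ Finset.range (n + 1), lam m • q m).2 = w := by
        rw [Prod.snd_sum]
        simp only [Prod.smul_snd, smul_eq_mul, hq]
        have : ∀ m, lam m * (F m + c) = lam m * F m + lam m * c := fun m => by ring
        rw [Finset.sum_congr rfl (fun m _ => this m), Finset.sum_add_distrib,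
          ← Finset.sum_mul, hsum]
        simp [hcdef]
      have h1 : (∑ m ∈ Finset.range (n + 1), lam m • q m).1 = x := by
        rw [Prod.fst_sum]
        funext i
        rw [Finset.sum_apply]
        set k : Fin n := δ.symm i with hk
        set G : ℕ → ℝ := fun m => z (max m (k.val + 1)) with hG
        have hterm : ∀ m ∈ Finset.range (n + 1),
            (lam m • q m).1 i = G m - G (m + 1) := by
          intro m _
          simp only [Prod.smul_fst, Pi.smul_apply, smul_eq_mul, hq, hG]
          by_cases h : i ∈ pre δ m
          · have hkm : k.val < m := mem_pre.mp h
            rw [if_pos h, max_eq_left (by omega), max_eq_left (by omega)]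
            simp [hlam]
          · have hkm : ¬ k.val < m := fun hc => h (mem_pre.mpr hc)
            rw [if_neg h, max_eq_right (by omega), max_eq_right (by omega)]
            ring
        rw [Finset.sum_congr rfl hterm, Finset.sum_range_sub' (f := G) (n := n + 1)]
        have hGn : G (n + 1) = 0 := by
          rw [hG]
          simp only
          rw [max_eq_left (by omega), hz, zz_top]
        have hG0 : G 0 = x i := by
          rw [hG]
          simp only
          rw [max_eq_right (by omega), hz, zz_succ x δ k.isLt]
          congr 1
          rw [hk]
          simp [Fin.eta]
        rw [hGn, hG0]
        ring
      exact Prod.ext h1 h2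
    have hmem := Finset.centerMass_mem_convexHull (Finset.range (n + 1)) hlam0
      (by rw [hsum]; norm_num) hqmem
    rwa [Finset.centerMass_eq_of_sum_1 _ _ hsum, hrepr] at hmem
end

section
/- Let f : 2^N → ℝ be submodular with f(∅) = 0, define ρ_j(X) = f(X ∪ {j}) − f(X) and f*(S) = f(S) − Σ_{j∈S} ρ_j(N \ {j}) for S ⊆ N. Then every submodular inequality is valid for the hypograph of f: for all S ⊆ N and all X ⊆ N, f(X) ≤ f*(S) + Σ_{j ∈ X \ S} [f*(S ∪ {j}) − f*(S)] + Σ_{j ∈ X} ρ_j(N \ {j}). -/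
/-- The marginal return `ρ_j(X) = f(X ∪ {j}) − f(X)`. -/
def marginal {n : ℕ} (f : Finset (Fin n) → ℝ) (j : Fin n)
    (X : Finset (Fin n)) : ℝ :=
  f (insert j X) - f X

/-- `f*(S) = f(S) − Σ_{j∈S} ρ_j(N \ {j})`. -/
def fStar {n : ℕ} (f : Finset (Fin n) → ℝ) (S : Finset (Fin n)) : ℝ :=
  f S - ∑ j ∈ S, marginal f j (Finset.univ \ {j})

lemma marg_anti {n : ℕ} {f : Finset (Fin n) → ℝ} (hf : Submodular f)
    {A B : Finset (Fin n)} {j : Fin n} (hAB : A ⊆ B) (hj : j ∉ B) :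
    marginal f j B ≤ marginal f j A := by
  have h := hf (insert j A) B
  rw [Finset.insert_inter_of_notMem hj, Finset.inter_eq_left.mpr hAB,
    Finset.insert_union, Finset.union_eq_right.mpr hAB] at h
  unfold marginal
  linarith

lemma upper1 {n : ℕ} {f : Finset (Fin n) → ℝ} (hf : Submodular f)
    (S : Finset (Fin n)) :
    ∀ D : Finset (Fin n), Disjoint D S →
      f (S ∪ D) ≤ f S + ∑ j ∈ D, marginal f j S := by
  intro D
  induction D using Finset.induction_on with
  | empty => simp
  | @insert a D' ha ih =>
    intro hdisj
    have haS : a ∉ S := by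
      have := Finset.disjoint_left.mp hdisj (Finset.mem_insert_self a D')
      exact this
    have hdisj' : Disjoint D' S := by
      exact Finset.disjoint_of_subset_left (Finset.subset_insert a D') hdisj
    have hins : S ∪ insert a D' = insert a (S ∪ D') := by
      simp [Finset.union_insert]
    have hanot : a ∉ S ∪ D' := by simp [haS, ha]
    have h1 : marginal f a (S ∪ D') ≤ marginal f a S :=
      marg_anti hf Finset.subset_union_left hanot
    have h2 : f (insert a (S ∪ D')) = f (S ∪ D') + marginal f a (S ∪ D') := by
      unfold marginal; ring
    rw [hins, h2, Finset.sum_insert ha]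
    have := ih hdisj'
    linarith

lemma upper2 {n : ℕ} {f : Finset (Fin n) → ℝ} (hf : Submodular f)
    (A : Finset (Fin n)) :
    ∀ D : Finset (Fin n), D ⊆ A →
      f (A \ D) ≤ f A - ∑ j ∈ D, marginal f j (Finset.univ \ {j}) := by
  intro D
  induction D using Finset.induction_on with
  | empty => simp
  | @insert a D' ha ih =>
    intro hsub
    have haA : a ∈ A := hsub (Finset.mem_insert_self a D')
    have hsub' : D' ⊆ A := (Finset.subset_insert a D').trans hsub
    have haB : a ∈ A \ D' := Finset.mem_sdiff.mpr ⟨haA, ha⟩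
    set B := A \ D' with hB
    have hrw : A \ insert a D' = B \ {a} := by
      rw [hB]; ext x; simp [Finset.mem_sdiff]; tauto
    have hIns : insert a (B \ {a}) = B := by
      rw [Finset.sdiff_singleton_eq_erase, Finset.insert_erase haB]
    have hnot : a ∉ (Finset.univ \ {a} : Finset (Fin n)) := by simp
    have hss : B \ {a} ⊆ Finset.univ \ {a} := by
      intro x hx
      simp only [Finset.mem_sdiff, Finset.mem_singleton] at hx ⊢
      exact ⟨Finset.mem_univ x, hx.2⟩
    have h1 : marginal f a (Finset.univ \ {a}) ≤ marginal f a (B \ {a}) :=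
      marg_anti hf hss hnot
    have h2 : f (B \ {a}) = f B - marginal f a (B \ {a}) := by
      unfold marginal; rw [hIns]; ring
    rw [hrw, Finset.sum_insert ha, h2]
    have := ih hsub'
    linarith

/-- Every submodular inequality is valid for the hypograph of a submodular `f`
with `f(∅) = 0`: for all `S, X ⊆ N`,
`f(X) ≤ f*(S) + Σ_{j ∈ X \ S} [f*(S ∪ {j}) − f*(S)] + Σ_{j∈X} ρ_j(N \ {j})`. -/
theorem submodular_inequality_valid {n : ℕ} (hn : 0 < n)
    (f : Finset (Fin n) → ℝ) (hf : Submodular f) (h0 : f ∅ = 0)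
    (S X : Finset (Fin n)) :
    f X ≤ fStar f S + (∑ j ∈ X \ S, (fStar f (insert j S) - fStar f S)) +
      ∑ j ∈ X, marginal f j (Finset.univ \ {j}) := by
  set m : Fin n → ℝ := fun j => marginal f j (Finset.univ \ {j}) with hm
  -- Rewrite the fStar differences
  have hdiff : ∀ j ∈ X \ S, fStar f (insert j S) - fStar f S
      = marginal f j S - m j := by
    intro j hj
    have hjS : j ∉ S := (Finset.mem_sdiff.mp hj).2
    simp only [hm]
    unfold fStar marginal
    rw [Finset.sum_insert hjS]
    ring
  rw [Finset.sum_congr rfl hdiff]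
  -- key inequalities
  have k1 : f (S ∪ X) ≤ f S + ∑ j ∈ X \ S, marginal f j S := by
    have h := upper1 hf S (X \ S) (Finset.sdiff_disjoint)
    rwa [Finset.union_sdiff_self_eq_union] at h
  have k2 : f X ≤ f (S ∪ X) - ∑ j ∈ S \ X, m j := by
    have h := upper2 hf (S ∪ X) (S \ X)
      ((Finset.sdiff_subset).trans Finset.subset_union_left)
    have hrw : (S ∪ X) \ (S \ X) = X := by
      ext x; simp [Finset.mem_sdiff, Finset.mem_union]; tauto
    rwa [hrw] at h
  -- sum bookkeeping
  have hsX : ∑ j ∈ X, m j = ∑ j ∈ X ∩ S, m j + ∑ j ∈ X \ S, m j :=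
    (Finset.sum_inter_add_sum_sdiff X S m).symm
  have hsS : ∑ j ∈ S, m j = ∑ j ∈ S ∩ X, m j + ∑ j ∈ S \ X, m j :=
    (Finset.sum_inter_add_sum_sdiff S X m).symm
  have hcomm : ∑ j ∈ X ∩ S, m j = ∑ j ∈ S ∩ X, m j := by
    rw [Finset.inter_comm]
  rw [Finset.sum_sub_distrib]
  unfold fStar
  linarith
end

section
/- Let f : 2^N → ℝ be submodular with f(∅) = 0, define ρ_j(X) = f(X ∪ {j}) − f(X) and f*(S) = f(S) − Σ_{j∈S} ρ_j(N \ {j}). Then for every X ⊆ N and every w ∈ ℝ, w ≤ f(X) if and only if w ≤ f*(S) + Σ_{j ∈ X \ S} [f*(S ∪ {j}) − f*(S)] + Σ_{j ∈ X} ρ_j(N \ {j}) for every S ⊆ N; in particular, min over S ⊆ N of the right-hand side equals f(X), attained at S = X. -/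
/-- Right-hand side of the submodular inequality associated with `S`,
evaluated on (the binary encoding of) `X`. -/
def subIneqRHS {n : ℕ} (f : Finset (Fin n) → ℝ)
    (S X : Finset (Fin n)) : ℝ :=
  fStar f S + (∑ j ∈ X \ S, (fStar f (insert j S) - fStar f S)) +
    ∑ j ∈ X, marginal f j (Finset.univ \ {j})

lemma marg_mono {n : ℕ} {f : Finset (Fin n) → ℝ} (hf : Submodular f)
    {A B : Finset (Fin n)} (hAB : A ⊆ B) {j : Fin n} (hj : j ∉ B) :
    marginal f j B ≤ marginal f j A := by
  have h := hf (insert j A) B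
  have h1 : insert j A ∩ B = A := by
    ext x
    simp only [Finset.mem_inter, Finset.mem_insert]
    constructor
    · rintro ⟨(rfl | hx), hxB⟩
      · exact absurd hxB hj
      · exact hx
    · intro hx; exact ⟨Or.inr hx, hAB hx⟩
  have h2 : insert j A ∪ B = insert j B := by
    rw [Finset.insert_union, Finset.union_eq_right.mpr hAB]
  rw [h1, h2] at h
  simp only [marginal]
  linarith

lemma upper_bound {n : ℕ} {f : Finset (Fin n) → ℝ} (hf : Submodular f)
    (S : Finset (Fin n)) :
    ∀ T : Finset (Fin n), (∀ j ∈ T, j ∉ S) →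
      f (S ∪ T) ≤ f S + ∑ j ∈ T, marginal f j S := by
  intro T
  induction T using Finset.induction_on with
  | empty => simp
  | @insert j T hj ih =>
    intro hT
    have hjS : j ∉ S := hT j (Finset.mem_insert_self j T)
    have hjST : j ∉ S ∪ T := by
      simp only [Finset.mem_union]
      rintro (h | h)
      exacts [hjS h, hj h]
    have hmono : marginal f j (S ∪ T) ≤ marginal f j S :=
      marg_mono hf Finset.subset_union_left hjST
    have hih := ih (fun i hi => hT i (Finset.mem_insert_of_mem hi))
    have he : S ∪ insert j T = insert j (S ∪ T) := by
      rw [Finset.union_insert]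
    rw [he, Finset.sum_insert hj]
    have : f (insert j (S ∪ T)) = f (S ∪ T) + marginal f j (S ∪ T) := by
      simp [marginal]
    linarith

lemma lower_bound {n : ℕ} {f : Finset (Fin n) → ℝ} (hf : Submodular f)
    (X : Finset (Fin n)) :
    ∀ T : Finset (Fin n), (∀ j ∈ T, j ∉ X) →
      f X + ∑ j ∈ T, marginal f j (Finset.univ \ {j}) ≤ f (X ∪ T) := by
  intro T
  induction T using Finset.induction_on with
  | empty => simp
  | @insert j T hj ih =>
    intro hT
    have hjX : j ∉ X := hT j (Finset.mem_insert_self j T)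
    have hjXT : j ∉ X ∪ T := by
      simp only [Finset.mem_union]
      rintro (h | h)
      exacts [hjX h, hj h]
    have hsub : X ∪ T ⊆ Finset.univ \ {j} := by
      intro x hx
      simp only [Finset.mem_sdiff, Finset.mem_univ, Finset.mem_singleton, true_and]
      rintro rfl; exact hjXT hx
    have hjuniv : j ∉ Finset.univ \ {j} := by simp
    have hmono : marginal f j (Finset.univ \ {j}) ≤ marginal f j (X ∪ T) :=
      marg_mono hf hsub hjuniv
    have hih := ih (fun i hi => hT i (Finset.mem_insert_of_mem hi))
    have he : X ∪ insert j T = insert j (X ∪ T) := by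
      rw [Finset.union_insert]
    rw [he, Finset.sum_insert hj]
    have : f (insert j (X ∪ T)) = f (X ∪ T) + marginal f j (X ∪ T) := by
      simp [marginal]
    linarith

lemma key_ineq {n : ℕ} {f : Finset (Fin n) → ℝ} (hf : Submodular f)
    (S X : Finset (Fin n)) : f X ≤ subIneqRHS f S X := by
  classical
  let g : Fin n → ℝ := fun j => marginal f j (Finset.univ \ {j})
  have hA : f (S ∪ (X \ S)) ≤ f S + ∑ j ∈ X \ S, marginal f j S :=
    upper_bound hf S (X \ S) (fun j hj => (Finset.mem_sdiff.mp hj).2)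
  have hB : f X + ∑ j ∈ S \ X, g j ≤ f (X ∪ (S \ X)) :=
    lower_bound hf X (S \ X) (fun j hj => (Finset.mem_sdiff.mp hj).2)
  have hu1 : S ∪ (X \ S) = X ∪ S := by
    rw [Finset.union_sdiff_self_eq_union, Finset.union_comm]
  have hu2 : X ∪ (S \ X) = X ∪ S := Finset.union_sdiff_self_eq_union
  rw [hu1] at hA
  rw [hu2] at hB
  have hterm : ∀ j ∈ X \ S, fStar f (insert j S) - fStar f S
      = marginal f j S - g j := by
    intro j hj
    have hjS : j ∉ S := (Finset.mem_sdiff.mp hj).2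
    simp only [fStar, Finset.sum_insert hjS, marginal, g]
    ring
  have hsum : ∑ j ∈ X \ S, (fStar f (insert j S) - fStar f S)
      = ∑ j ∈ X \ S, (marginal f j S - g j) := Finset.sum_congr rfl hterm
  have e1 : ∑ j ∈ X ∩ S, g j + ∑ j ∈ X \ S, g j = ∑ j ∈ X, g j :=
    Finset.sum_inter_add_sum_sdiff X S g
  have e2 : ∑ j ∈ S ∩ X, g j + ∑ j ∈ S \ X, g j = ∑ j ∈ S, g j :=
    Finset.sum_inter_add_sum_sdiff S X g
  have e3 : X ∩ S = S ∩ X := Finset.inter_comm X S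
  rw [e3] at e1
  have hsplit : ∑ j ∈ X \ S, (marginal f j S - g j)
      = ∑ j ∈ X \ S, marginal f j S - ∑ j ∈ X \ S, g j := by
    rw [Finset.sum_sub_distrib]
  rw [subIneqRHS, hsum, hsplit]
  simp only [fStar, g] at *
  linarith

/-- For submodular `f` with `f(∅) = 0`: `w ≤ f(X)` iff `w` is bounded above by
the right-hand side of every submodular inequality; in particular the minimum
over `S ⊆ N` of the right-hand side equals `f(X)`, attained at `S = X`. -/
theorem submodular_inequalities_exact {n : ℕ} (hn : 0 < n)
    (f : Finset (Fin n) → ℝ) (hf : Submodular f) (h0 : f ∅ = 0)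
    (X : Finset (Fin n)) (w : ℝ) :
    (w ≤ f X ↔ ∀ S : Finset (Fin n), w ≤ subIneqRHS f S X) ∧
      subIneqRHS f X X = f X := by
  have heq : subIneqRHS f X X = f X := by
    simp [subIneqRHS, fStar, Finset.sdiff_self]
  refine ⟨⟨fun h S => le_trans h (key_ineq hf S X), fun h => ?_⟩, heq⟩
  have := h X
  rwa [heq] at this
end

section
/- Let f : ℝ → ℝ be concave with f(0) = 0, let α ≥ 0, and let k be an integer with 1 ≤ k ≤ n. Then every separation inequality is valid for P^1_k: for every permutation δ of N, every integer i_0 with 0 ≤ i_0 ≤ k−1, and every x ∈ {0,1}^n with Σ_{i=1}^n x_i ≤ k, it holds that f(α Σ_{i=1}^n x_i) ≥ Σ_{i=1}^{i_0} ρ_i x_{δ(i)} + Σ_{i=i_0+1}^{n} ψ x_{δ(i)}, where ρ_i := f(iα) − f((i−1)α) and ψ := (f(kα) − f(i_0 α))/(k − i_0). -/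
lemma sum_le_sum_range_card' (h : ℕ → ℝ) (hh : ∀ i j : ℕ, i ≤ j → h j ≤ h i) (A : Finset ℕ) :
    ∑ i ∈ A, h i ≤ ∑ i ∈ Finset.range A.card, h i := by
  induction A using Finset.strongInduction with
  | _ A ih =>
    rcases A.eq_empty_or_nonempty with rfl | hA
    · simp
    · have hM := A.max'_mem hA
      set M := A.max' hA with hMdef
      have hsub : A ⊆ Finset.range (M + 1) := fun y hy =>
        Finset.mem_range.mpr (Nat.lt_succ_of_le (A.le_max' y hy))
      have hcard : A.card ≤ M + 1 := by
        have := Finset.card_le_card hsub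
        simpa using this
      have hApos : 0 < A.card := Finset.card_pos.mpr hA
      have hcards : (A.erase M).card = A.card - 1 := Finset.card_erase_of_mem hM
      have h1 : ∑ i ∈ A.erase M, h i ≤ ∑ i ∈ Finset.range (A.card - 1), h i := by
        have := ih (A.erase M) (Finset.erase_ssubset hM)
        rwa [hcards] at this
      have h2 : h M ≤ h (A.card - 1) := hh _ _ (by omega)
      have e1 : ∑ i ∈ A, h i = ∑ i ∈ A.erase M, h i + h M :=
        (Finset.sum_erase_add A h hM).symm
      have e2 : ∑ i ∈ Finset.range A.card, h i
          = ∑ i ∈ Finset.range (A.card - 1), h i + h (A.card - 1) := by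
        conv_lhs => rw [show A.card = (A.card - 1) + 1 by omega]
        rw [Finset.sum_range_succ]
      rw [e1, e2]
      exact add_le_add h1 h2

section
variable (f : ℝ → ℝ)
variable (hconc : ∀ s t lam : ℝ, 0 ≤ lam → lam ≤ 1 →
      lam * f s + (1 - lam) * f t ≤ f (lam * s + (1 - lam) * t))

include hconc in
lemma three_chord' {p q r : ℝ} (hpq : p < q) (hqr : q < r) :
    (r - q) * f p + (q - p) * f r ≤ (r - p) * f q := by
  have hrp : (0:ℝ) < r - p := by linarith
  set lam : ℝ := (r - q) / (r - p) with hlam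
  have hl0 : 0 ≤ lam := div_nonneg (by linarith) hrp.le
  have hl1 : lam ≤ 1 := by rw [hlam, div_le_one hrp]; linarith
  have key := hconc p r lam hl0 hl1
  have harg : lam * p + (1 - lam) * r = q := by
    rw [hlam]; field_simp; ring
  rw [harg] at key
  have e1 : (r - p) * lam = r - q := by rw [hlam]; field_simp
  have e2 : (r - p) * (1 - lam) = q - p := by rw [hlam]; field_simp; ring
  calc (r - q) * f p + (q - p) * f r
      = (r - p) * lam * f p + ((r - p) * (1 - lam)) * f r := by rw [e1, e2]
    _ = (r - p) * (lam * f p + (1 - lam) * f r) := by ring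
    _ ≤ (r - p) * f q := mul_le_mul_of_nonneg_left key hrp.le

include hconc in
lemma chordA' {p q r : ℝ} (hpq : p < q) (hqr : q < r) :
    (f r - f p) * (q - p) ≤ (f q - f p) * (r - p) := by
  nlinarith [three_chord' f hconc hpq hqr]

include hconc in
lemma chordB' {p q r : ℝ} (hpq : p < q) (hqr : q < r) :
    (f r - f q) * (r - p) ≤ (f r - f p) * (r - q) := by
  nlinarith [three_chord' f hconc hpq hqr]

end

/-- Validity of the separation inequalities for the cardinality-constrained
epigraph `P^1_k` of `x ↦ f(α Σ_i x_i)` with `f` concave, `f(0) = 0`, `α ≥ 0`: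
for every permutation `δ` of `N`, every integer `0 ≤ i_0 ≤ k−1`, and every
binary `x` with `Σ_i x_i ≤ k`,
`f(α Σ_i x_i) ≥ Σ_{i=1}^{i_0} ρ_i x_{δ(i)} + Σ_{i=i_0+1}^n ψ x_{δ(i)}`,
where `ρ_i = f(iα) − f((i−1)α)` and `ψ = (f(kα) − f(i_0 α))/(k − i_0)`.
(Positions `i = 1,…,n` are encoded 0-based by `Fin n`.) -/
theorem separation_inequality_valid {n : ℕ} (hn : 0 < n)
    (f : ℝ → ℝ)
    (hconc : ∀ s t lam : ℝ, 0 ≤ lam → lam ≤ 1 →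
      lam * f s + (1 - lam) * f t ≤ f (lam * s + (1 - lam) * t))
    (h0 : f 0 = 0) (α : ℝ) (hα : 0 ≤ α)
    (k : ℕ) (hk1 : 1 ≤ k) (hkn : k ≤ n)
    (δ : Equiv.Perm (Fin n)) (i0 : ℕ) (hi0 : i0 ≤ k - 1)
    (x : Fin n → ℝ) (hx : ∀ i, x i = 0 ∨ x i = 1)
    (hcard : ∑ i : Fin n, x i ≤ (k : ℝ)) :
    ∑ i : Fin n,
        (if (i : ℕ) < i0 then
            f (((i : ℕ) + 1 : ℝ) * α) - f (((i : ℕ) : ℝ) * α)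
          else (f ((k : ℝ) * α) - f ((i0 : ℝ) * α)) / ((k : ℝ) - (i0 : ℝ))) *
          x (δ i)
      ≤ f (α * ∑ i : Fin n, x i) := by
  classical
  by_cases hα0 : α = 0
  · subst hα0; simp [h0]
  have hαpos : 0 < α := hα.lt_of_ne (Ne.symm hα0)
  have hi0k : i0 < k := by omega
  set ρ : ℕ → ℝ := fun j => f (((j : ℕ) + 1 : ℝ) * α) - f (((j : ℕ) : ℝ) * α) with hρ
  set ψ : ℝ := (f ((k : ℝ) * α) - f ((i0 : ℝ) * α)) / ((k : ℝ) - (i0 : ℝ)) with hψ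
  -- ρ is antitone
  have hρanti : ∀ i j : ℕ, i ≤ j → ρ j ≤ ρ i := by
    have hadj : ∀ j : ℕ, ρ (j + 1) ≤ ρ j := by
      intro j
      have h1 : ((j:ℝ)) * α < ((j:ℝ) + 1) * α := by nlinarith
      have h2 : ((j:ℝ) + 1) * α < ((j:ℝ) + 2) * α := by nlinarith
      have tc := three_chord' f hconc h1 h2
      have e : ρ (j+1) = f (((j:ℝ) + 2) * α) - f (((j:ℝ) + 1) * α) := by
        simp only [hρ]; push_cast; ring_nf
      rw [e]
      simp only [hρ]
      nlinarith [tc, hαpos]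
    intro i j hij
    exact antitone_nat_of_succ_le hadj hij
  -- telescoping
  have htel : ∀ N : ℕ, ∑ j ∈ Finset.range N, ρ j = f ((N : ℝ) * α) := by
    intro N
    induction N with
    | zero => simp [h0]
    | succ N ih =>
      rw [Finset.sum_range_succ, ih]
      simp only [hρ]
      push_cast
      ring_nf
  -- the set of chosen indices
  set S : Finset (Fin n) := Finset.univ.filter (fun i : Fin n => x (δ i) = 1) with hS
  set m := S.card with hm
  have hxsum : ∑ i : Fin n, x i = (m : ℝ) := by
    rw [← Equiv.sum_comp δ x]
    rw [← Finset.sum_filter_add_sum_filter_not Finset.univ (fun i : Fin n => x (δ i) = 1)]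
    have e2 : ∑ i ∈ Finset.univ.filter (fun i : Fin n => ¬ x (δ i) = 1), x (δ i) = 0 := by
      apply Finset.sum_eq_zero
      intro i hi
      rcases hx (δ i) with h | h
      · exact h
      · exact absurd h (Finset.mem_filter.mp hi).2
    have e1 : ∑ i ∈ S, x (δ i) = (m : ℝ) := by
      rw [Finset.sum_congr rfl (fun i hi => (Finset.mem_filter.mp hi).2)]
      simp [hm]; rfl
    rw [← hS, e1, e2, add_zero]
  have hmk : m ≤ k := by
    have h' := hcard
    rw [hxsum] at h'
    exact_mod_cast h'
  set S1 : Finset (Fin n) := S.filter (fun i : Fin n => (i : ℕ) < i0) with hS1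
  set a := S1.card with ha
  have ham : a ≤ m := Finset.card_le_card (Finset.filter_subset _ _)
  have hai0 : a ≤ i0 := by
    have hsub : S1.image Fin.val ⊆ Finset.range i0 := by
      intro j hj
      obtain ⟨i, hi, rfl⟩ := Finset.mem_image.mp hj
      exact Finset.mem_range.mpr (Finset.mem_filter.mp hi).2
    calc a = (S1.image Fin.val).card :=
          (Finset.card_image_of_injective _ Fin.val_injective).symm
      _ ≤ (Finset.range i0).card := Finset.card_le_card hsub
      _ = i0 := Finset.card_range i0
  -- rewrite the goal with ρ, ψ
  show ∑ i : Fin n, (if (i : ℕ) < i0 then ρ (i : ℕ) else ψ) * x (δ i)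
      ≤ f (α * ∑ i : Fin n, x i)
  have hLHS1 : (∑ i : Fin n, (if (i : ℕ) < i0 then ρ (i : ℕ) else ψ) * x (δ i))
      = ∑ i ∈ S, (if (i : ℕ) < i0 then ρ (i : ℕ) else ψ) := by
    rw [hS, Finset.sum_filter]
    apply Finset.sum_congr rfl
    intro i _
    rcases hx (δ i) with h | h <;> simp [h]
  have hcard2 : (S.filter (fun i : Fin n => ¬ (i : ℕ) < i0)).card = m - a := by
    have hsplit := Finset.card_filter_add_card_filter_not (s := S)
      (p := fun i : Fin n => (i : ℕ) < i0)
    have haa : a = (S.filter (fun i : Fin n => (i : ℕ) < i0)).card := rfl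
    have hmm : m = S.card := rfl
    omega
  have hLHS2 : (∑ i ∈ S, (if (i : ℕ) < i0 then ρ (i : ℕ) else ψ))
      = ∑ i ∈ S1, ρ (i : ℕ) + ((m : ℝ) - a) * ψ := by
    rw [← Finset.sum_filter_add_sum_filter_not S (fun i : Fin n => (i : ℕ) < i0)]
    congr 1
    · apply Finset.sum_congr rfl
      intro i hi
      rw [if_pos (Finset.mem_filter.mp hi).2]
    · rw [Finset.sum_congr rfl (fun i hi => if_neg (Finset.mem_filter.mp hi).2)]
      rw [Finset.sum_const, hcard2, nsmul_eq_mul]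
      congr 1
      push_cast [Nat.cast_sub ham]
      ring
  -- bound the ρ-part
  have hpart1 : ∑ i ∈ S1, ρ (i : ℕ) ≤ f ((a : ℝ) * α) := by
    have e : ∑ i ∈ S1, ρ (i : ℕ) = ∑ j ∈ S1.image Fin.val, ρ j := by
      rw [Finset.sum_image (fun i _ j _ h => Fin.val_injective h)]
    rw [e]
    have hb := sum_le_sum_range_card' ρ hρanti (S1.image Fin.val)
    rw [Finset.card_image_of_injective _ Fin.val_injective, ← ha, htel a] at hb
    exact hb
  -- concavity step
  have hfinal : f ((a : ℝ) * α) + ((m : ℝ) - a) * ψ ≤ f ((m : ℝ) * α) := by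
    rcases eq_or_lt_of_le ham with heq | hlt
    · rw [heq]; simp
    · have hcast : (a : ℝ) < (m : ℝ) := by exact_mod_cast hlt
      have hcasti : (a : ℝ) ≤ (i0 : ℝ) := by exact_mod_cast hai0
      have hcastk : (i0 : ℝ) < (k : ℝ) := by exact_mod_cast hi0k
      have hcastmk : (m : ℝ) ≤ (k : ℝ) := by exact_mod_cast hmk
      set A := (a : ℝ) * α with hA
      set M := (m : ℝ) * α with hM
      set I := (i0 : ℝ) * α with hI
      set K := (k : ℝ) * α with hK
      have hAM : A < M := by
        rw [hA, hM]; exact mul_lt_mul_of_pos_right hcast hαpos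
      have hIK : I < K := by
        rw [hI, hK]; exact mul_lt_mul_of_pos_right hcastk hαpos
      have hAI : A ≤ I := by
        rw [hA, hI]; exact mul_le_mul_of_nonneg_right hcasti hα
      have hMK : M ≤ K := by
        rw [hM, hK]; exact mul_le_mul_of_nonneg_right hcastmk hα
      have hAK : A < K := lt_of_le_of_lt hAI hIK
      have s1 : (f K - f A) * (M - A) ≤ (f M - f A) * (K - A) := by
        rcases eq_or_lt_of_le hMK with h | h
        · rw [h]
        · exact chordA' f hconc hAM h
      have s2 : (f K - f I) * (K - A) ≤ (f K - f A) * (K - I) := by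
        rcases eq_or_lt_of_le hAI with h | h
        · rw [h]
        · exact chordB' f hconc h hIK
      have t1 : (f K - f I) / (K - I) ≤ (f K - f A) / (K - A) := by
        rw [div_le_div_iff₀ (by linarith) (by linarith)]
        exact s2
      have t2 : (f K - f A) / (K - A) ≤ (f M - f A) / (M - A) := by
        rw [div_le_div_iff₀ (by linarith) (by linarith)]
        exact s1
      have t3 : (f K - f I) / (K - I) ≤ (f M - f A) / (M - A) := t1.trans t2
      have h4 : (f K - f I) / (K - I) * (M - A) ≤ f M - f A :=
        (le_div_iff₀ (by linarith)).mp t3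
      have e5 : ((m : ℝ) - a) * ψ = (f K - f I) / (K - I) * (M - A) := by
        have eKI : K - I = ((k : ℝ) - (i0 : ℝ)) * α := by rw [hK, hI]; ring
        have eMA : M - A = ((m : ℝ) - (a : ℝ)) * α := by rw [hM, hA]; ring
        have hki : (k : ℝ) - (i0 : ℝ) ≠ 0 := by linarith
        rw [eKI, eMA, hψ]
        field_simp
      rw [e5]
      linarith [h4]
  -- put everything together
  rw [hLHS1, hLHS2, hxsum, mul_comm α (m : ℝ)]
  exact le_trans (add_le_add_left hpart1 _) hfinal
end

section
/- Let f : ℝ → ℝ be concave with f(0) = 0, let α ≥ 0, and let k be an integer with 1 ≤ k ≤ n. The convex hull of P^1_k = {(x,w) ∈ {0,1}^n × ℝ : w ≥ f(α Σ_{i=1}^n x_i), Σ_{i=1}^n x_i ≤ k} equals the set of (x,w) ∈ ℝ^n × ℝ satisfying 0 ≤ x_i ≤ 1 for all i, Σ_{i=1}^n x_i ≤ k, and all separation inequalities: w ≥ Σ_{i=1}^{i_0} ρ_i x_{δ(i)} + Σ_{i=i_0+1}^{n} ψ x_{δ(i)} for every permutation δ of N and every integer 0 ≤ i_0 ≤ k−1,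 where ρ_i := f(iα) − f((i−1)α) and ψ := (f(kα) − f(i_0 α))/(k − i_0). -/
/-- the separation coefficients -/
noncomputable def sepCoef (f : ℝ → ℝ) (α : ℝ) (k i0 t : ℕ) : ℝ :=
  if t < i0 then f ((t + 1 : ℝ) * α) - f ((t : ℝ) * α)
  else (f ((k : ℝ) * α) - f ((i0 : ℝ) * α)) / ((k : ℝ) - (i0 : ℝ))

lemma myChord (f : ℝ → ℝ) (α : ℝ)
    (hconc : ∀ s t lam : ℝ, 0 ≤ lam → lam ≤ 1 →
      lam * f s + (1 - lam) * f t ≤ f (lam * s + (1 - lam) * t))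
    (a b c : ℕ) (hab : a ≤ b) (hbc : b ≤ c) :
    ((c : ℝ) - b) * f (a * α) + ((b : ℝ) - a) * f (c * α)
      ≤ ((c : ℝ) - a) * f (b * α) := by
  rcases eq_or_lt_of_le (hab.trans hbc) with h | h
  · have hb : a = b := le_antisymm hab (h ▸ hbc)
    have hc : b = c := le_antisymm hbc (h ▸ hab)
    subst hb; subst hc; norm_num
  · have hca : (0:ℝ) < (c : ℝ) - a := by
      have := (Nat.cast_lt (α := ℝ)).2 h; linarith
    set lam : ℝ := ((c : ℝ) - b) / ((c : ℝ) - a) with hlam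
    have h1 : (0:ℝ) ≤ lam := by
      apply div_nonneg _ hca.le
      have := (Nat.cast_le (α := ℝ)).2 hbc; linarith
    have h2 : lam ≤ 1 := by
      rw [hlam, div_le_one hca]
      have := (Nat.cast_le (α := ℝ)).2 hab; linarith
    have key := hconc ((a:ℝ) * α) ((c:ℝ) * α) lam h1 h2
    have harg : lam * ((a:ℝ) * α) + (1 - lam) * ((c:ℝ) * α) = (b:ℝ) * α := by
      rw [hlam]; field_simp; ring
    rw [harg] at key
    have := mul_le_mul_of_nonneg_left key hca.le
    calc ((c : ℝ) - b) * f (a * α) + ((b : ℝ) - a) * f (c * α)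
        = ((c:ℝ) - a) * (lam * f ((a:ℝ)*α) + (1 - lam) * f ((c:ℝ)*α)) := by
          rw [hlam]; field_simp; ring
      _ ≤ ((c : ℝ) - a) * f (b * α) := this

lemma D_antitone (f : ℝ → ℝ) (α : ℝ)
    (hconc : ∀ s t lam : ℝ, 0 ≤ lam → lam ≤ 1 →
      lam * f s + (1 - lam) * f t ≤ f (lam * s + (1 - lam) * t)) :
    Antitone (fun m : ℕ => f (((m : ℝ) + 1) * α) - f ((m : ℝ) * α)) := by
  apply antitone_nat_of_succ_le
  intro m
  have := myChord f α hconc m (m+1) (m+2) (by omega) (by omega)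
  push_cast at this ⊢
  ring_nf at this ⊢
  linarith

lemma sepCoef_antitone (f : ℝ → ℝ) (α : ℝ)
    (hconc : ∀ s t lam : ℝ, 0 ≤ lam → lam ≤ 1 →
      lam * f s + (1 - lam) * f t ≤ f (lam * s + (1 - lam) * t))
    (k i0 : ℕ) (hi0 : i0 < k) : Antitone (sepCoef f α k i0) := by
  have hD := D_antitone f α hconc
  have hψ : (f ((k : ℝ) * α) - f ((i0 : ℝ) * α)) / ((k : ℝ) - (i0 : ℝ))
      ≤ f (((i0 : ℝ) + 1) * α) - f ((i0 : ℝ) * α) := by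
    have hpos : (0:ℝ) < (k : ℝ) - (i0 : ℝ) := by
      have := (Nat.cast_lt (α := ℝ)).2 hi0; linarith
    rw [div_le_iff₀ hpos]
    have := myChord f α hconc i0 (i0+1) k (by omega) (by omega)
    push_cast at this
    nlinarith [this]
  intro a b hab
  unfold sepCoef
  by_cases hb : b < i0
  · have ha : a < i0 := lt_of_le_of_lt hab hb
    rw [if_pos ha, if_pos hb]
    exact hD hab
  · rw [if_neg hb]
    by_cases ha : a < i0
    · rw [if_pos ha]
      calc (f ((k : ℝ) * α) - f ((i0 : ℝ) * α)) / ((k : ℝ) - (i0 : ℝ))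
          ≤ f (((i0 : ℝ) + 1) * α) - f ((i0 : ℝ) * α) := hψ
        _ ≤ f (((a : ℝ) + 1) * α) - f ((a : ℝ) * α) := hD (by omega)
    · rw [if_neg ha]

lemma sepCoef_telescope (f : ℝ → ℝ) (α : ℝ) (h0 : f 0 = 0) (k i0 : ℕ) (l : ℕ) (hl : l ≤ i0) :
    ∑ t ∈ Finset.range l, sepCoef f α k i0 t = f ((l:ℝ) * α) := by
  have hcg : ∀ t ∈ Finset.range l, sepCoef f α k i0 t
      = f (((t+1 : ℕ):ℝ) * α) - f (((t:ℕ):ℝ) * α) := by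
    intro t ht
    have h : t < i0 := lt_of_lt_of_le (Finset.mem_range.1 ht) hl
    simp only [sepCoef, if_pos h]
    push_cast
    ring_nf
  rw [Finset.sum_congr rfl hcg, Finset.sum_range_sub (fun t : ℕ => f ((t:ℝ) * α)) l]
  norm_num [h0]

lemma sepCoef_prefix_sum (f : ℝ → ℝ) (α : ℝ)
    (hconc : ∀ s t lam : ℝ, 0 ≤ lam → lam ≤ 1 →
      lam * f s + (1 - lam) * f t ≤ f (lam * s + (1 - lam) * t))
    (h0 : f 0 = 0) (k i0 : ℕ) (hi0 : i0 < k) (m : ℕ) (hm : m ≤ k) :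
    ∑ t ∈ Finset.range m, sepCoef f α k i0 t ≤ f ((m : ℝ) * α) := by
  have hpos : (0:ℝ) < (k : ℝ) - (i0 : ℝ) := by
    have := (Nat.cast_lt (α := ℝ)).2 hi0; linarith
  by_cases hmi : m ≤ i0
  · rw [sepCoef_telescope f α h0 k i0 m hmi]
  · push_neg at hmi
    have hsplit : ∑ t ∈ Finset.range m, sepCoef f α k i0 t
        = ∑ t ∈ Finset.range i0, sepCoef f α k i0 t
          + ∑ t ∈ Finset.Ico i0 m, sepCoef f α k i0 t := by
      simp only [Finset.range_eq_Ico]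
      exact (Finset.sum_Ico_consecutive _ (Nat.zero_le i0) hmi.le).symm
    have hconst : ∑ t ∈ Finset.Ico i0 m, sepCoef f α k i0 t
        = ((m : ℝ) - i0) * ((f ((k : ℝ) * α) - f ((i0 : ℝ) * α)) / ((k : ℝ) - (i0 : ℝ))) := by
      have hcg : ∀ t ∈ Finset.Ico i0 m, sepCoef f α k i0 t
          = (f ((k : ℝ) * α) - f ((i0 : ℝ) * α)) / ((k : ℝ) - (i0 : ℝ)) := by
        intro t ht
        have h : ¬ (t < i0) := by
          have := (Finset.mem_Ico.1 ht).1; omega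
        simp [sepCoef, h]
      rw [Finset.sum_congr rfl hcg, Finset.sum_const, Nat.card_Ico, nsmul_eq_mul]
      congr 1
      push_cast [Nat.cast_sub hmi.le]
      ring
    rw [hsplit, sepCoef_telescope f α h0 k i0 i0 le_rfl, hconst]
    have hch := myChord f α hconc i0 m k hmi.le hm
    have key : ((m:ℝ) - i0) * ((f ((k:ℝ)*α) - f ((i0:ℝ)*α)) / ((k:ℝ) - i0))
        ≤ f ((m:ℝ)*α) - f ((i0:ℝ)*α) := by
      rw [← mul_div_assoc, div_le_iff₀ hpos]
      nlinarith [hch]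
    linarith

lemma abel_sum (g h : ℕ → ℝ) (m : ℕ) (h0 : h 0 = 0) :
    ∑ j ∈ Finset.range (m+1), (g j - g (j+1)) * h j
      = ∑ j ∈ Finset.range m, g (j+1) * (h (j+1) - h j) - g (m+1) * h m := by
  induction m with
  | zero => simp [h0]
  | succ m ih =>
    rw [Finset.sum_range_succ, ih, Finset.sum_range_succ (fun j => g (j+1) * (h (j+1) - h j))]
    ring

lemma sum_antitone_le (c : ℕ → ℝ) (hc : Antitone c) (T : Finset ℕ) :
    ∑ t ∈ T, c t ≤ ∑ t ∈ Finset.range T.card, c t := by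
  induction T using Finset.strongInductionOn with
  | _ T ih =>
    rcases T.eq_empty_or_nonempty with rfl | hne
    · simp
    · set M := T.max' hne with hM
      have hMT : M ∈ T := T.max'_mem hne
      have hcard : 0 < T.card := Finset.card_pos.2 hne
      have hsub : T.erase M ⊂ T := Finset.erase_ssubset hMT
      have ihe := ih _ hsub
      have hce : (T.erase M).card = T.card - 1 := Finset.card_erase_of_mem hMT
      have hTsub : T ⊆ Finset.range (M + 1) := by
        intro t ht
        exact Finset.mem_range.2 (Nat.lt_succ_of_le (T.le_max' t ht))
      have hMc : T.card - 1 ≤ M := by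
        have := Finset.card_le_card hTsub
        simp only [Finset.card_range] at this
        omega
      have hsplit : ∑ t ∈ T, c t = c M + ∑ t ∈ T.erase M, c t :=
        (Finset.add_sum_erase T c hMT).symm
      have hrange : ∑ t ∈ Finset.range T.card, c t
          = ∑ t ∈ Finset.range (T.card - 1), c t + c (T.card - 1) := by
        have h2 : T.card = (T.card - 1) + 1 := by omega
        conv_lhs => rw [h2]
        rw [Finset.sum_range_succ]
      rw [hsplit, hrange]
      rw [hce] at ihe
      have := hc hMc
      linarith [ihe]

lemma hypersimplex_integral {ι : Type} [Fintype ι] [DecidableEq ι] (d : ℕ) (z : ι → ℝ)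
    (hint : ∀ i, z i = 0 ∨ z i = 1) (hs : ∑ i, z i = (d : ℝ)) :
    ∃ ν : Finset ι → ℝ, (∀ R, 0 ≤ ν R) ∧ (∑ R : Finset ι, ν R = 1) ∧
      (∀ R, ν R ≠ 0 → R.card = d) ∧
      (∀ i, ∑ R : Finset ι, ν R * (if i ∈ R then 1 else 0) = z i) := by
  classical
  set R0 : Finset ι := Finset.univ.filter (fun i => z i = 1) with hR0
  have hcard : R0.card = d := by
    have h1 : ∑ i, z i = ∑ i, (if z i = 1 then (1:ℝ) else 0) := by
      apply Finset.sum_congr rfl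
      intro i _
      rcases hint i with h | h <;> simp [h]
    have h2 : ∑ i, (if z i = 1 then (1:ℝ) else 0) = (R0.card : ℝ) := by
      rw [hR0, Finset.sum_boole]
    rw [h1, h2] at hs
    exact_mod_cast hs
  refine ⟨fun R => if R = R0 then 1 else 0, ?_, ?_, ?_, ?_⟩
  · intro R; by_cases h : R = R0 <;> simp [h]
  · simp
  · intro R hR
    have : R = R0 := by by_contra h; simp [h] at hR
    rw [this, hcard]
  · intro i
    have : ∀ R : Finset ι, (if R = R0 then (1:ℝ) else 0) * (if i ∈ R then 1 else 0)
        = if R = R0 then (if i ∈ R0 then (1:ℝ) else 0) else 0 := by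
      intro R
      by_cases h : R = R0 <;> simp [h]
    rw [Finset.sum_congr rfl (fun R _ => this R)]
    rw [Finset.sum_ite_eq' Finset.univ R0 (fun _ => if i ∈ R0 then (1:ℝ) else 0)]
    simp only [Finset.mem_univ, if_true, hR0, Finset.mem_filter]
    rcases hint i with h | h <;> simp [h]

lemma hypersimplex {ι : Type} [Fintype ι] [DecidableEq ι] (d : ℕ) (z : ι → ℝ)
    (h0 : ∀ i, 0 ≤ z i) (h1 : ∀ i, z i ≤ 1) (hs : ∑ i, z i = (d : ℝ)) :
    ∃ ν : Finset ι → ℝ, (∀ R, 0 ≤ ν R) ∧ (∑ R : Finset ι, ν R = 1) ∧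
      (∀ R, ν R ≠ 0 → R.card = d) ∧
      (∀ i, ∑ R : Finset ι, ν R * (if i ∈ R then 1 else 0) = z i) := by
  classical
  set frac : (ι → ℝ) → Finset ι := fun v => Finset.univ.filter (fun i => v i ≠ 0 ∧ v i ≠ 1)
    with hfrac
  suffices H : ∀ (N : ℕ) (z : ι → ℝ), (∀ i, 0 ≤ z i) → (∀ i, z i ≤ 1) →
      (∑ i, z i = (d : ℝ)) → (frac z).card ≤ N →
      ∃ ν : Finset ι → ℝ, (∀ R, 0 ≤ ν R) ∧ (∑ R : Finset ι, ν R = 1) ∧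
        (∀ R, ν R ≠ 0 → R.card = d) ∧
        (∀ i, ∑ R : Finset ι, ν R * (if i ∈ R then 1 else 0) = z i) by
    exact H (frac z).card z h0 h1 hs le_rfl
  intro N
  induction N with
  | zero =>
    intro z h0 h1 hs hN
    apply hypersimplex_integral d z _ hs
    intro i
    by_contra hcon
    push_neg at hcon
    have : i ∈ frac z := by simp [hfrac, hcon.1, hcon.2]
    have := Finset.card_pos.2 ⟨i, this⟩
    omega
  | succ N ih =>
    intro z h0 h1 hs hN
    by_cases hint : ∀ i, z i = 0 ∨ z i = 1
    · exact hypersimplex_integral d z hint hs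
    · push_neg at hint
      obtain ⟨i, hi0, hi1⟩ := hint
      have hzi0 : 0 < z i := lt_of_le_of_ne (h0 i) (Ne.symm hi0)
      have hzi1 : z i < 1 := lt_of_le_of_ne (h1 i) hi1
      -- find another fractional coordinate j ≠ i
      have hjex : ∃ j, j ≠ i ∧ z j ≠ 0 ∧ z j ≠ 1 := by
        by_contra hcon
        push_neg at hcon
        have hothers : ∀ t ∈ Finset.univ.erase i, z t = (if z t = 1 then (1:ℝ) else 0) := by
          intro t ht
          have hti : t ≠ i := (Finset.mem_erase.1 ht).1
          by_cases h : z t = 0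
          · rw [h]; norm_num
          · have := hcon t hti h
            simp [this]
        have hsplit : ∑ t, z t = z i + ∑ t ∈ Finset.univ.erase i, z t :=
          (Finset.add_sum_erase Finset.univ z (Finset.mem_univ i)).symm
        have hb : ∑ t ∈ Finset.univ.erase i, z t
            = (((Finset.univ.erase i).filter (fun t => z t = 1)).card : ℝ) := by
          rw [Finset.sum_congr rfl hothers, Finset.sum_boole]
        set m := ((Finset.univ.erase i).filter (fun t => z t = 1)).card with hm
        have hzi : z i = (d : ℝ) - m := by rw [hsplit, hb] at hs; linarith
        have h1' : m < d := by
          have : (m : ℝ) < d := by linarith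
          exact_mod_cast this
        have h2' : d < m + 1 := by
          have : (d : ℝ) < (m : ℝ) + 1 := by linarith
          exact_mod_cast this
        omega
      obtain ⟨j, hji, hj0, hj1⟩ := hjex
      have hzj0 : 0 < z j := lt_of_le_of_ne (h0 j) (Ne.symm hj0)
      have hzj1 : z j < 1 := lt_of_le_of_ne (h1 j) hj1
      set ε1 : ℝ := min (1 - z i) (z j) with hε1
      set ε2 : ℝ := min (z i) (1 - z j) with hε2
      have hε1pos : 0 < ε1 := lt_min (by linarith) hzj0
      have hε2pos : 0 < ε2 := lt_min hzi0 (by linarith)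
      set zp : ι → ℝ := fun t => z t + (if t = i then ε1 else 0) - (if t = j then ε1 else 0)
        with hzp
      set zm : ι → ℝ := fun t => z t - (if t = i then ε2 else 0) + (if t = j then ε2 else 0)
        with hzm
      have hij : i ≠ j := fun h => hji (h.symm)
      have hzpi : zp i = z i + ε1 := by simp [hzp, hij]
      have hzpj : zp j = z j - ε1 := by simp [hzp, hji]
      have hzmi : zm i = z i - ε2 := by simp [hzm, hij]
      have hzmj : zm j = z j + ε2 := by simp [hzm, hji]
      have hzpt : ∀ t, t ≠ i → t ≠ j → zp t = z t := by intro t h h'; simp [hzp, h, h']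
      have hzmt : ∀ t, t ≠ i → t ≠ j → zm t = z t := by intro t h h'; simp [hzm, h, h']
      have hε1a : ε1 ≤ 1 - z i := min_le_left _ _
      have hε1b : ε1 ≤ z j := min_le_right _ _
      have hε2a : ε2 ≤ z i := min_le_left _ _
      have hε2b : ε2 ≤ 1 - z j := min_le_right _ _
      have h0p : ∀ t, 0 ≤ zp t := by
        intro t
        by_cases h : t = i
        · subst h; rw [hzpi]; linarith
        by_cases h' : t = j
        · subst h'; rw [hzpj]; linarith
        · rw [hzpt t h h']; exact h0 t
      have h1p : ∀ t, zp t ≤ 1 := by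
        intro t
        by_cases h : t = i
        · subst h; rw [hzpi]; linarith
        by_cases h' : t = j
        · subst h'; rw [hzpj]; linarith [h1 t, hzj1]
        · rw [hzpt t h h']; exact h1 t
      have h0m : ∀ t, 0 ≤ zm t := by
        intro t
        by_cases h : t = i
        · subst h; rw [hzmi]; linarith
        by_cases h' : t = j
        · subst h'; rw [hzmj]; linarith
        · rw [hzmt t h h']; exact h0 t
      have h1m : ∀ t, zm t ≤ 1 := by
        intro t
        by_cases h : t = i
        · subst h; rw [hzmi]; linarith
        by_cases h' : t = j
        · subst h'; rw [hzmj]; linarith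
        · rw [hzmt t h h']; exact h1 t
      have hsp : ∑ t, zp t = (d : ℝ) := by
        rw [hzp]
        rw [Finset.sum_sub_distrib, Finset.sum_add_distrib]
        simp only [Finset.sum_ite_eq' Finset.univ, Finset.mem_univ, if_true]
        rw [hs]; ring
      have hsm : ∑ t, zm t = (d : ℝ) := by
        rw [hzm]
        rw [Finset.sum_add_distrib, Finset.sum_sub_distrib]
        simp only [Finset.sum_ite_eq' Finset.univ, Finset.mem_univ, if_true]
        rw [hs]; ring
      have hifrac : i ∈ frac z := by simp [hfrac, hi0, hi1]
      have hjfrac : j ∈ frac z := by simp [hfrac, hj0, hj1]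
      have hcard_le : ∀ (v : ι → ℝ) (a : ι), a ∈ frac z → (frac v ⊆ (frac z).erase a) →
          (frac v).card ≤ N := by
        intro v a ha hsub
        have h1' := Finset.card_le_card hsub
        rw [Finset.card_erase_of_mem ha] at h1'
        have := Finset.card_pos.2 ⟨a, ha⟩
        omega
      have hfracmem : ∀ (v : ι → ℝ) t, v t ≠ 0 → v t ≠ 1 → t ∈ frac v := by
        intro v t h h'; simp [hfrac, h, h']
      have hfracz : ∀ t, t ∈ frac zp → t ≠ i → t ≠ j → t ∈ frac z := by
        intro t ht h h'
        rw [hfrac] at ht ⊢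
        simp only [Finset.mem_filter, Finset.mem_univ, true_and] at ht ⊢
        rwa [hzpt t h h'] at ht
      have hfraczm : ∀ t, t ∈ frac zm → t ≠ i → t ≠ j → t ∈ frac z := by
        intro t ht h h'
        rw [hfrac] at ht ⊢
        simp only [Finset.mem_filter, Finset.mem_univ, true_and] at ht ⊢
        rwa [hzmt t h h'] at ht
      have hNp : (frac zp).card ≤ N := by
        rcases le_total (1 - z i) (z j) with hc | hc
        · -- zp i = 1
          have hval : zp i = 1 := by rw [hzpi, hε1, min_eq_left hc]; ring
          apply hcard_le zp i hifrac
          intro t ht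
          have htne : t ≠ i := by
            intro h; subst h
            rw [hfrac] at ht
            simp only [Finset.mem_filter] at ht
            exact ht.2.2 hval
          rw [Finset.mem_erase]
          refine ⟨htne, ?_⟩
          by_cases h' : t = j
          · subst h'; exact hjfrac
          · exact hfracz t ht htne h'
        · -- zp j = 0
          have hval : zp j = 0 := by rw [hzpj, hε1, min_eq_right hc]; ring
          apply hcard_le zp j hjfrac
          intro t ht
          have htne : t ≠ j := by
            intro h; subst h
            rw [hfrac] at ht
            simp only [Finset.mem_filter] at ht
            exact ht.2.1 hval
          rw [Finset.mem_erase]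
          refine ⟨htne, ?_⟩
          by_cases h' : t = i
          · subst h'; exact hifrac
          · exact hfracz t ht h' htne
      have hNm : (frac zm).card ≤ N := by
        rcases le_total (z i) (1 - z j) with hc | hc
        · -- zm i = 0
          have hval : zm i = 0 := by rw [hzmi, hε2, min_eq_left hc]; ring
          apply hcard_le zm i hifrac
          intro t ht
          have htne : t ≠ i := by
            intro h; subst h
            rw [hfrac] at ht
            simp only [Finset.mem_filter] at ht
            exact ht.2.1 hval
          rw [Finset.mem_erase]
          refine ⟨htne, ?_⟩
          by_cases h' : t = j
          · subst h'; exact hjfrac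
          · exact hfraczm t ht htne h'
        · -- zm j = 1
          have hval : zm j = 1 := by rw [hzmj, hε2, min_eq_right hc]; ring
          apply hcard_le zm j hjfrac
          intro t ht
          have htne : t ≠ j := by
            intro h; subst h
            rw [hfrac] at ht
            simp only [Finset.mem_filter] at ht
            exact ht.2.2 hval
          rw [Finset.mem_erase]
          refine ⟨htne, ?_⟩
          by_cases h' : t = i
          · subst h'; exact hifrac
          · exact hfraczm t ht h' htne
      obtain ⟨νp, hp0, hp1, hpcard, hpcol⟩ := ih zp h0p h1p hsp hNp
      obtain ⟨νm, hm0, hm1, hmcard, hmcol⟩ := ih zm h0m h1m hsm hNm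
      have hsum12 : (0:ℝ) < ε1 + ε2 := by linarith
      set lam : ℝ := ε2 / (ε1 + ε2) with hlamdef
      have hlam0 : 0 ≤ lam := div_nonneg hε2pos.le hsum12.le
      have hlam1 : lam ≤ 1 := by rw [hlamdef, div_le_one hsum12]; linarith
      refine ⟨fun R => lam * νp R + (1 - lam) * νm R, ?_, ?_, ?_, ?_⟩
      · intro R
        have := hp0 R; have := hm0 R
        have h1l : 0 ≤ 1 - lam := by linarith
        positivity
      · rw [Finset.sum_add_distrib, ← Finset.mul_sum, ← Finset.mul_sum, hp1, hm1]; ring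
      · intro R hR
        by_cases hp : νp R = 0
        · by_cases hm : νm R = 0
          · exfalso; apply hR; show lam * νp R + (1 - lam) * νm R = 0; rw [hp, hm]; ring
          · exact hmcard R hm
        · exact hpcard R hp
      · intro t
        have hexp : ∀ R : Finset ι, (lam * νp R + (1 - lam) * νm R) * (if t ∈ R then (1:ℝ) else 0)
            = lam * (νp R * (if t ∈ R then 1 else 0)) + (1 - lam) * (νm R * (if t ∈ R then 1 else 0)) := by
          intro R; ring
        rw [Finset.sum_congr rfl (fun R _ => hexp R), Finset.sum_add_distrib,
          ← Finset.mul_sum, ← Finset.mul_sum, hpcol t, hmcol t]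
        have hne : ε1 + ε2 ≠ 0 := hsum12.ne'
        by_cases h : t = i
        · subst h; rw [hzpi, hzmi, hlamdef]; field_simp; ring
        by_cases h' : t = j
        · subst h'; rw [hzpj, hzmj, hlamdef]; field_simp; ring
        · rw [hzpt t h h', hzmt t h h']; ring

lemma binary_point_ineq (f : ℝ → ℝ) (α : ℝ)
    (hconc : ∀ s t lam : ℝ, 0 ≤ lam → lam ≤ 1 →
      lam * f s + (1 - lam) * f t ≤ f (lam * s + (1 - lam) * t))
    (h0 : f 0 = 0) {n : ℕ} (k i0 : ℕ) (hi0 : i0 < k)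
    (x : Fin n → ℝ) (hx : ∀ i, x i = 0 ∨ x i = 1) (hxk : (∑ i, x i) ≤ (k : ℝ))
    (δ : Equiv.Perm (Fin n)) :
    ∑ i : Fin n, sepCoef f α k i0 (i : ℕ) * x (δ i) ≤ f (α * ∑ i, x i) := by
  classical
  set T : Finset (Fin n) := Finset.univ.filter (fun i => x (δ i) = 1) with hT
  have hperm : ∑ i : Fin n, x (δ i) = ∑ i, x i := Equiv.sum_comp δ x
  have hTcard : ∑ i, x i = (T.card : ℝ) := by
    rw [← hperm]
    have : ∀ i : Fin n, x (δ i) = if x (δ i) = 1 then (1:ℝ) else 0 := by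
      intro i
      rcases hx (δ i) with h | h <;> simp [h]
    rw [Finset.sum_congr rfl (fun i _ => this i), Finset.sum_boole, hT]
  have hm : T.card ≤ k := by
    rw [hTcard] at hxk
    exact_mod_cast hxk
  have hstep : ∑ i : Fin n, sepCoef f α k i0 (i : ℕ) * x (δ i)
      = ∑ i ∈ T, sepCoef f α k i0 (i : ℕ) := by
    rw [← Finset.sum_subset (Finset.subset_univ T)
      (fun i _ hi => by
        have : x (δ i) = 0 := by
          rcases hx (δ i) with h | h
          · exact h
          · exact absurd (by simp [hT, h]) hi
        rw [this, mul_zero])]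
    apply Finset.sum_congr rfl
    intro i hi
    have : x (δ i) = 1 := by simpa [hT] using hi
    rw [this, mul_one]
  have himg : ∑ i ∈ T, sepCoef f α k i0 (i : ℕ)
      = ∑ t ∈ T.image (fun i : Fin n => (i : ℕ)), sepCoef f α k i0 t := by
    rw [Finset.sum_image (fun a _ b _ h => Fin.val_injective h)]
  have hcardimg : (T.image (fun i : Fin n => (i : ℕ))).card = T.card :=
    Finset.card_image_of_injective T Fin.val_injective
  calc ∑ i : Fin n, sepCoef f α k i0 (i : ℕ) * x (δ i)
      = ∑ t ∈ T.image (fun i : Fin n => (i : ℕ)), sepCoef f α k i0 t := by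
        rw [hstep, himg]
    _ ≤ ∑ t ∈ Finset.range T.card, sepCoef f α k i0 t := by
        rw [← hcardimg]
        exact sum_antitone_le _ (sepCoef_antitone f α hconc k i0 hi0) _
    _ ≤ f ((T.card : ℝ) * α) := sepCoef_prefix_sum f α hconc h0 k i0 hi0 _ hm
    _ = f (α * ∑ i, x i) := by rw [hTcard, mul_comm]

/-- For concave `f` with `f(0) = 0`, `α ≥ 0`, and an integer `1 ≤ k ≤ n`, the
convex hull of `P^1_k = {(x,w) ∈ {0,1}^n × ℝ : w ≥ f(α Σ_i x_i), Σ_i x_i ≤ k}`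
equals the set of `(x,w) ∈ ℝ^n × ℝ` satisfying `0 ≤ x ≤ 1`, `Σ_i x_i ≤ k`, and
all separation inequalities
`w ≥ Σ_{i=1}^{i_0} ρ_i x_{δ(i)} + Σ_{i=i_0+1}^n ψ x_{δ(i)}`
for every permutation `δ` of `N` and integer `0 ≤ i_0 ≤ k−1`, where
`ρ_i = f(iα) − f((i−1)α)` and `ψ = (f(kα) − f(i_0 α))/(k − i_0)`. -/
theorem convexHull_P1k_eq_separation_polyhedron {n : ℕ} (hn : 0 < n)
    (f : ℝ → ℝ)
    (hconc : ∀ s t lam : ℝ, 0 ≤ lam → lam ≤ 1 →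
      lam * f s + (1 - lam) * f t ≤ f (lam * s + (1 - lam) * t))
    (h0 : f 0 = 0) (α : ℝ) (hα : 0 ≤ α)
    (k : ℕ) (hk1 : 1 ≤ k) (hkn : k ≤ n) :
    convexHull ℝ
        {p : (Fin n → ℝ) × ℝ |
          (∀ i, p.1 i = 0 ∨ p.1 i = 1) ∧ (∑ i : Fin n, p.1 i) ≤ (k : ℝ) ∧
            f (α * ∑ i : Fin n, p.1 i) ≤ p.2} =
      {p : (Fin n → ℝ) × ℝ |
        (∀ i, 0 ≤ p.1 i ∧ p.1 i ≤ 1) ∧ (∑ i : Fin n, p.1 i) ≤ (k : ℝ) ∧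
        ∀ (δ : Equiv.Perm (Fin n)) (i0 : ℕ), i0 ≤ k - 1 →
          ∑ i : Fin n,
              (if (i : ℕ) < i0 then
                  f (((i : ℕ) + 1 : ℝ) * α) - f (((i : ℕ) : ℝ) * α)
                else
                  (f ((k : ℝ) * α) - f ((i0 : ℝ) * α)) / ((k : ℝ) - (i0 : ℝ))) *
                p.1 (δ i)
            ≤ p.2} := by
  classical
  apply Set.Subset.antisymm
  · apply convexHull_min
    · -- P ⊆ RHS
      intro p hp
      obtain ⟨hx, hk, hw⟩ := hp
      refine ⟨fun i => ?_, hk, ?_⟩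
      · rcases hx i with h | h <;> simp [h]
      · intro δ i0 hi0k
        have hi0 : i0 < k := by omega
        have key := binary_point_ineq f α hconc h0 k i0 hi0 p.1 hx hk δ
        have : ∑ i : Fin n,
              (if (i : ℕ) < i0 then
                  f (((i : ℕ) + 1 : ℝ) * α) - f (((i : ℕ) : ℝ) * α)
                else
                  (f ((k : ℝ) * α) - f ((i0 : ℝ) * α)) / ((k : ℝ) - (i0 : ℝ))) *
                p.1 (δ i)
            = ∑ i : Fin n, sepCoef f α k i0 (i : ℕ) * p.1 (δ i) := rfl
        rw [this]
        exact le_trans key hw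
    · -- RHS convex
      rintro p hp q hq a b ha hb hab
      obtain ⟨hp1, hp2, hp3⟩ := hp
      obtain ⟨hq1, hq2, hq3⟩ := hq
      have hcoord : ∀ i, (a • p + b • q).1 i = a * p.1 i + b * q.1 i := fun i => rfl
      have h2nd : (a • p + b • q).2 = a * p.2 + b * q.2 := rfl
      refine ⟨fun i => ?_, ?_, ?_⟩
      · rw [hcoord i]
        constructor
        · have := (hp1 i).1; have := (hq1 i).1
          positivity
        · have h1 := (hp1 i).2; have h2 := (hq1 i).2
          have := mul_le_mul_of_nonneg_left h1 ha
          have := mul_le_mul_of_nonneg_left h2 hb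
          linarith
      · rw [Finset.sum_congr rfl (fun i _ => hcoord i), Finset.sum_add_distrib,
          ← Finset.mul_sum, ← Finset.mul_sum]
        have := mul_le_mul_of_nonneg_left hp2 ha
        have := mul_le_mul_of_nonneg_left hq2 hb
        have hk' : a * (k:ℝ) + b * (k:ℝ) = (k:ℝ) := by rw [← add_mul, hab, one_mul]
        linarith
      · intro δ i0 hi0
        have e1 := hp3 δ i0 hi0
        have e2 := hq3 δ i0 hi0
        rw [h2nd]
        have hsum : ∀ i : Fin n, (a • p + b • q).1 (δ i) = a * p.1 (δ i) + b * q.1 (δ i) :=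
          fun i => rfl
        calc ∑ i : Fin n, (if (i : ℕ) < i0 then
                  f (((i : ℕ) + 1 : ℝ) * α) - f (((i : ℕ) : ℝ) * α)
                else
                  (f ((k : ℝ) * α) - f ((i0 : ℝ) * α)) / ((k : ℝ) - (i0 : ℝ))) *
                (a • p + b • q).1 (δ i)
            = a * (∑ i : Fin n, (if (i : ℕ) < i0 then
                  f (((i : ℕ) + 1 : ℝ) * α) - f (((i : ℕ) : ℝ) * α)
                else
                  (f ((k : ℝ) * α) - f ((i0 : ℝ) * α)) / ((k : ℝ) - (i0 : ℝ))) * p.1 (δ i))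
              + b * (∑ i : Fin n, (if (i : ℕ) < i0 then
                  f (((i : ℕ) + 1 : ℝ) * α) - f (((i : ℕ) : ℝ) * α)
                else
                  (f ((k : ℝ) * α) - f ((i0 : ℝ) * α)) / ((k : ℝ) - (i0 : ℝ))) * q.1 (δ i)) := by
              rw [Finset.mul_sum, Finset.mul_sum, ← Finset.sum_add_distrib]
              apply Finset.sum_congr rfl
              intro i _
              rw [hsum i]
              ring
          _ ≤ a * p.2 + b * q.2 := by
              have := mul_le_mul_of_nonneg_left e1 ha
              have := mul_le_mul_of_nonneg_left e2 hb
              linarith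
  · -- hard direction
    intro p hp
    obtain ⟨hbox, hsumk, hineq⟩ := hp
    obtain ⟨δ, hmono⟩ : ∃ δ : Equiv.Perm (Fin n), Antitone (fun i => p.1 (δ i)) := by
      refine ⟨Tuple.sort (fun i => -p.1 i), ?_⟩
      have hms := Tuple.monotone_sort (fun i => -p.1 i)
      intro a b hab
      have := hms hab
      simpa using this
    set x : Fin n → ℝ := p.1 with hx
    set w : ℝ := p.2 with hwdef
    set y : Fin n → ℝ := fun i => x (δ i) with hy
    set Y : ℕ → ℝ := fun t => if h : t < n then y ⟨t, h⟩ else 0 with hYdef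
    have hyY : ∀ i : Fin n, y i = Y (i : ℕ) := by
      intro i
      simp only [hYdef, i.isLt, dif_pos, Fin.eta]
    have hY0 : ∀ t, 0 ≤ Y t := by
      intro t
      simp only [hYdef]
      split
      · exact (hbox _).1
      · exact le_refl 0
    have hY1 : ∀ t, Y t ≤ 1 := by
      intro t
      simp only [hYdef]
      split
      · exact (hbox _).2
      · norm_num
    have hYanti : Antitone Y := by
      intro a b hab
      simp only [hYdef]
      split
      · next hbn =>
        have han : a < n := lt_of_le_of_lt hab hbn
        rw [dif_pos han]
        exact hmono (show (⟨a, han⟩ : Fin n) ≤ ⟨b, hbn⟩ from hab)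
      · next hbn =>
        split
        · exact (hbox _).1
        · exact le_refl 0
    set G : ℕ → ℝ := fun t => ∑ i : Fin n, (if t ≤ (i : ℕ) then y i else 0) with hGdef
    have hG0 : ∀ t, 0 ≤ G t := by
      intro t
      apply Finset.sum_nonneg
      intro i _
      split
      · exact (hbox _).1
      · exact le_refl 0
    have hGstep : ∀ t, G t = Y t + G (t + 1) := by
      intro t
      have hpt : ∀ i : Fin n, (if t ≤ (i : ℕ) then y i else 0)
          = (if (i : ℕ) = t then y i else 0) + (if t + 1 ≤ (i : ℕ) then y i else 0) := by
        intro i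
        by_cases h1 : (i : ℕ) = t
        · simp [h1]
        · by_cases h2 : t + 1 ≤ (i : ℕ)
          · have : t ≤ (i : ℕ) := by omega
            simp [h1, h2, this]
          · have : ¬ (t ≤ (i : ℕ)) := by omega
            simp [h1, h2, this]
      rw [hGdef]
      simp only []
      rw [Finset.sum_congr rfl (fun i _ => hpt i), Finset.sum_add_distrib]
      congr 1
      by_cases ht : t < n
      · rw [Finset.sum_eq_single (⟨t, ht⟩ : Fin n)]
        · simp [hYdef, ht]
        · intro b _ hb
          rw [if_neg]
          intro hc
          exact hb (Fin.ext hc)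
        · intro h
          exact absurd (Finset.mem_univ _) h
      · rw [Finset.sum_eq_zero, hYdef]
        · simp [ht]
        · intro i _
          rw [if_neg]
          intro hc
          exact ht (hc ▸ i.isLt)
    have hGsum : G 0 = ∑ i, x i := by
      rw [hGdef]
      simp only [Nat.zero_le, if_true]
      exact Equiv.sum_comp δ x
    set Yp : ℕ → ℝ := fun t => if t = 0 then 1 else Y (t - 1) with hYpdef
    set Pp : ℕ → Prop := fun t => G t ≤ ((k : ℝ) - t) * Yp t with hPpdef
    have hPp0 : Pp 0 := by
      have h1 : Yp 0 = 1 := by simp [hYpdef]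
      show G 0 ≤ ((k : ℝ) - (0:ℕ)) * Yp 0
      rw [h1, hGsum]
      push_cast
      linarith
    set i0 := Nat.findGreatest Pp (k - 1) with hi0def
    have hi0le : i0 ≤ k - 1 := Nat.findGreatest_le _
    have hi0k : i0 < k := by omega
    have hi0n : i0 < n := lt_of_lt_of_le hi0k hkn
    have hPi0 : Pp i0 := Nat.findGreatest_spec (Nat.zero_le _) hPp0
    have hYpi0 : Yp (i0 + 1) = Y i0 := by
      show (if i0 + 1 = 0 then (1:ℝ) else Y (i0 + 1 - 1)) = Y i0
      rw [if_neg (Nat.succ_ne_zero i0), Nat.add_sub_cancel]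
    have hG2 : ((k : ℝ) - i0) * Y i0 ≤ G i0 := by
      rcases eq_or_lt_of_le hi0le with heq | hlt
      · -- i0 = k - 1
        have hkr : ((k : ℝ) - i0) = 1 := by
          have : i0 + 1 = k := by omega
          have := congrArg (Nat.cast (R := ℝ)) this
          push_cast at this
          linarith
        rw [hkr, one_mul, hGstep i0]
        have := hG0 (i0 + 1)
        linarith
      · have hnPp : ¬ Pp (i0 + 1) := by
          apply Nat.findGreatest_is_greatest (n := k - 1)
          · rw [← hi0def]; omega
          · omega
        simp only [hPpdef, not_le] at hnPp
        rw [hYpi0] at hnPp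
        have hGi0 : G i0 = Y i0 + G (i0 + 1) := hGstep i0
        push_cast at hnPp
        nlinarith [hnPp]
    set d := k - i0 with hddef
    have hd1 : 1 ≤ d := by omega
    have hdcast : ((d : ℕ) : ℝ) = (k : ℝ) - i0 := by
      rw [hddef]
      push_cast [Nat.cast_sub hi0k.le]
      ring
    have hkipos : (0 : ℝ) < (k : ℝ) - i0 := by
      have := (Nat.cast_lt (α := ℝ)).2 hi0k
      linarith
    set μ : ℝ := G i0 / ((k : ℝ) - i0) with hμdef
    have hμ0 : 0 ≤ μ := div_nonneg (hG0 i0) hkipos.le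
    have hμYp : μ ≤ Yp i0 := by
      rw [hμdef, div_le_iff₀ hkipos]
      have := hPi0
      simp only [hPpdef] at this
      linarith
    have hYμ : Y i0 ≤ μ := by
      rw [hμdef, le_div_iff₀ hkipos]
      linarith [hG2]
    have hμG : μ * ((k : ℝ) - i0) = G i0 := div_mul_cancel₀ _ hkipos.ne'
    have hYtail : ∀ t, i0 ≤ t → Y t ≤ μ := fun t ht => le_trans (hYanti ht) hYμ
    -- tail decomposition
    have htailsum : ∑ i : {i : Fin n // i0 ≤ (i : ℕ)}, y i.1 = G i0 := by
      have h1 : ∑ i ∈ Finset.univ.filter (fun i : Fin n => i0 ≤ (i : ℕ)), y i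
          = ∑ i : {i : Fin n // i0 ≤ (i : ℕ)}, y i.1 :=
        Finset.sum_subtype _ (fun x => by simp) (fun i => y i)
      rw [← h1, Finset.sum_filter]
    obtain ⟨ν, hν0, hνsum, hνcard, hνcol⟩ :
        ∃ ν : Finset {i : Fin n // i0 ≤ (i : ℕ)} → ℝ,
          (∀ R, 0 ≤ ν R) ∧
          (∑ R : Finset {i : Fin n // i0 ≤ (i : ℕ)}, ν R = if μ = 0 then 0 else 1) ∧
          (∀ R, ν R ≠ 0 → R.card = d) ∧
          (∀ i : {i : Fin n // i0 ≤ (i : ℕ)},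
            μ * (∑ R : Finset {i : Fin n // i0 ≤ (i : ℕ)}, ν R * (if i ∈ R then 1 else 0))
              = y i.1) := by
      by_cases hμz : μ = 0
      · refine ⟨fun _ => 0, fun R => le_refl 0, by simp [hμz], by simp, ?_⟩
        intro i
        have h1 : y i.1 ≤ μ := by
          rw [hyY i.1]
          exact hYtail _ i.2
        have h2 : 0 ≤ y i.1 := (hbox _).1
        simp only [zero_mul, Finset.sum_const_zero, mul_zero]
        linarith [hμz ▸ h1]
      · have hμpos : 0 < μ := lt_of_le_of_ne hμ0 (Ne.symm hμz)
        obtain ⟨ν, h1, h2, h3, h4⟩ := hypersimplex (ι := {i : Fin n // i0 ≤ (i : ℕ)}) d (fun i => y i.1 / μ)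
          (fun i => div_nonneg (hbox _).1 hμ0)
          (fun i => by
            rw [div_le_one hμpos, hyY i.1]
            exact hYtail _ i.2)
          (by
            rw [← Finset.sum_div, htailsum, div_eq_iff hμpos.ne', hdcast]
            linarith [hμG])
        refine ⟨ν, h1, by rw [if_neg hμz]; exact h2, h3, ?_⟩
        intro i
        rw [h4 i, mul_div_cancel₀ _ hμz]
    -- weights and points
    set Q : ℕ → ℝ := fun t => if t ≤ i0 then Yp t else μ with hQdef
    have hQ0 : Q 0 = 1 := by simp [hQdef, hYpdef]
    have hQsucc : Q (i0 + 1) = μ := by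
      show (if i0 + 1 ≤ i0 then Yp (i0+1) else μ) = μ
      rw [if_neg (by omega)]
    have hQY : ∀ j, j < i0 → Q (j + 1) = Y j := by
      intro j hj
      have h1 : j + 1 ≤ i0 := hj
      simp [hQdef, h1, hYpdef]
    have hQnn : ∀ j, j ≤ i0 → 0 ≤ Q j - Q (j + 1) := by
      intro j hj
      rcases eq_or_lt_of_le hj with heq | hlt
      · rw [heq, hQsucc]
        have h2 : Q i0 = Yp i0 := by
          show (if i0 ≤ i0 then Yp i0 else μ) = Yp i0
          rw [if_pos le_rfl]
        rw [h2]
        linarith [hμYp]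
      · rw [hQY j hlt]
        have h1 : j ≤ i0 := hj
        have : Q j = Yp j := by simp [hQdef, h1]
        rw [this, hYpdef]
        by_cases hj0 : j = 0
        · simp [hj0]
          linarith [hY1 0]
        · simp [hj0]
          exact hYanti (by omega)
    set V : ℝ := ∑ i : Fin n, sepCoef f α k i0 (i : ℕ) * y i with hVdef
    have hVw : V ≤ w := by
      have := hineq δ i0 hi0le
      exact this
    set cw : ℝ := w - V with hcwdef
    have hcw0 : 0 ≤ cw := by rw [hcwdef]; linarith
    set F : ℕ → ℝ := fun t => f ((t : ℝ) * α) with hFdef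
    have hF0 : F 0 = 0 := by simp [hFdef, h0]
    set wt : (Fin (i0 + 1) ⊕ Finset {i : Fin n // i0 ≤ (i : ℕ)}) → ℝ :=
      Sum.elim (fun j => Q (j : ℕ) - Q ((j : ℕ) + 1)) (fun R => μ * ν R) with hwt
    set pt : (Fin (i0 + 1) ⊕ Finset {i : Fin n // i0 ≤ (i : ℕ)}) → (Fin n → ℝ) × ℝ :=
      Sum.elim
        (fun j => (fun c => if ((δ.symm c : Fin n) : ℕ) < (j : ℕ) then 1 else 0,
          F (j : ℕ) + cw))
        (fun R => (fun c => if (((δ.symm c : Fin n) : ℕ) < i0 ∨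
            (δ.symm c) ∈ R.map (Function.Embedding.subtype _) : Prop) then 1 else 0,
          F k + cw)) with hpt
    -- counting helper
    have hcnt : ∀ m : ℕ, m ≤ n → ∑ i : Fin n, (if (i : ℕ) < m then (1:ℝ) else 0) = m := by
      intro m hm
      rw [Fin.sum_univ_eq_sum_range (fun t => if t < m then (1:ℝ) else 0) n,
        Finset.sum_boole]
      have h1 : Finset.filter (fun t => t < m) (Finset.range n) = Finset.range m := by
        ext t
        simp only [Finset.mem_filter, Finset.mem_range]
        omega
      rw [h1, Finset.card_range]
    have hIcoTel : ∀ (g : ℕ → ℝ) (a b : ℕ), a ≤ b →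
        ∑ j ∈ Finset.Ico a b, (g j - g (j + 1)) = g a - g b := by
      intro g a b hab
      rw [Finset.sum_Ico_eq_sub _ hab, Finset.sum_range_sub' g, Finset.sum_range_sub' g]
      ring
    have hνtot : ∑ R : Finset {i : Fin n // i0 ≤ (i : ℕ)}, μ * ν R = μ := by
      rw [← Finset.mul_sum, hνsum]
      by_cases hμz : μ = 0
      · simp [hμz]
      · rw [if_neg hμz, mul_one]
    have hwtsum : ∑ a, wt a = 1 := by
      rw [hwt, Fintype.sum_sum_type]
      simp only [Sum.elim_inl, Sum.elim_inr]
      rw [Fin.sum_univ_eq_sum_range (fun j => Q j - Q (j + 1)) (i0 + 1),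
        Finset.sum_range_sub' Q, hνtot, hQ0, hQsucc]
      ring
    have hwt0 : ∀ a, 0 ≤ wt a := by
      intro a
      rw [hwt]
      cases a with
      | inl j =>
        exact hQnn (j : ℕ) (Nat.lt_succ_iff.mp j.isLt)
      | inr R => exact mul_nonneg hμ0 (hν0 R)
    have hsum_inl : ∀ j : Fin (i0 + 1), ∑ c : Fin n, (pt (Sum.inl j)).1 c = ((j : ℕ) : ℝ) := by
      intro j
      rw [hpt]
      simp only [Sum.elim_inl]
      rw [← Equiv.sum_comp δ
        (fun c => if ((δ.symm c : Fin n) : ℕ) < (j : ℕ) then (1:ℝ) else 0)]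
      simp only [Equiv.symm_apply_apply]
      exact hcnt (j : ℕ) (by have := j.isLt; omega)
    have hsum_inr : ∀ R : Finset {i : Fin n // i0 ≤ (i : ℕ)}, R.card = d →
        ∑ c : Fin n, (pt (Sum.inr R)).1 c = (k : ℝ) := by
      intro R hRc
      rw [hpt]
      simp only [Sum.elim_inr]
      rw [← Equiv.sum_comp δ
        (fun c => if (((δ.symm c : Fin n) : ℕ) < i0 ∨
            (δ.symm c) ∈ R.map (Function.Embedding.subtype _) : Prop) then (1:ℝ) else 0)]
      simp only [Equiv.symm_apply_apply]
      have hsplit : ∀ i : Fin n,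
          (if ((i : ℕ) < i0 ∨ i ∈ R.map (Function.Embedding.subtype _) : Prop)
            then (1:ℝ) else 0)
          = (if (i : ℕ) < i0 then (1:ℝ) else 0)
            + (if i ∈ R.map (Function.Embedding.subtype _) then (1:ℝ) else 0) := by
        intro i
        have hdisj : i ∈ R.map (Function.Embedding.subtype _) → ¬ ((i : ℕ) < i0) := by
          intro hm
          obtain ⟨a, _, rfl⟩ := Finset.mem_map.1 hm
          have := a.2
          simp only [Function.Embedding.coe_subtype, not_lt]
          exact this
        by_cases h1 : (i : ℕ) < i0
        · rw [if_pos (Or.inl h1), if_pos h1, if_neg (fun hm => hdisj hm h1)]; ring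
        · by_cases h2 : i ∈ R.map (Function.Embedding.subtype _)
          · rw [if_pos (Or.inr h2), if_neg h1, if_pos h2]; ring
          · rw [if_neg (by tauto), if_neg h1, if_neg h2]; ring
      rw [Finset.sum_congr rfl (fun i _ => hsplit i), Finset.sum_add_distrib,
        hcnt i0 (by omega), Finset.sum_boole, Finset.filter_univ_mem,
        Finset.card_map, hRc]
      rw [hdcast]
      ring
    -- column identity
    have hcol : ∀ c : Fin n, ∑ a, wt a * (pt a).1 c = x c := by
      intro c
      have hxc : x c = y (δ.symm c) := by
        rw [hy]
        simp only [Equiv.apply_symm_apply]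
      rw [hxc, hwt, hpt, Fintype.sum_sum_type]
      simp only [Sum.elim_inl, Sum.elim_inr]
      set t : ℕ := ((δ.symm c : Fin n) : ℕ) with htdef
      have hinl : ∑ j : Fin (i0 + 1),
          (Q (j : ℕ) - Q ((j : ℕ) + 1)) * (if t < (j : ℕ) then (1:ℝ) else 0)
          = ∑ j ∈ Finset.filter (fun j => t < j) (Finset.range (i0 + 1)),
              (Q j - Q (j + 1)) := by
        rw [Fin.sum_univ_eq_sum_range
          (fun j => (Q j - Q (j + 1)) * (if t < j then (1:ℝ) else 0)) (i0 + 1)]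
        rw [Finset.sum_filter]
        apply Finset.sum_congr rfl
        intro j _
        by_cases h : t < j <;> simp [h]
      by_cases ht : t < i0
      · have hfil : Finset.filter (fun j => t < j) (Finset.range (i0 + 1))
            = Finset.Ico (t + 1) (i0 + 1) := by
          ext j
          simp only [Finset.mem_filter, Finset.mem_range, Finset.mem_Ico]
          omega
        have hcondtrue : ∀ R : Finset {i : Fin n // i0 ≤ (i : ℕ)},
            (μ * ν R) * (if (t < i0 ∨
              (δ.symm c) ∈ R.map (Function.Embedding.subtype _) : Prop) then (1:ℝ) else 0)
            = μ * ν R := by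
          intro R
          rw [if_pos (Or.inl ht), mul_one]
        rw [hinl, hfil, hIcoTel Q (t + 1) (i0 + 1) (by omega),
          Finset.sum_congr rfl (fun R _ => hcondtrue R), hνtot, hQY t ht, hQsucc]
        rw [hyY (δ.symm c), ← htdef]
        ring
      · push_neg at ht
        have hfil : Finset.filter (fun j => t < j) (Finset.range (i0 + 1)) = ∅ := by
          ext j
          simp only [Finset.mem_filter, Finset.mem_range, Finset.notMem_empty, iff_false,
            not_and, not_lt]
          omega
        have hcond : ∀ R : Finset {i : Fin n // i0 ≤ (i : ℕ)},
            (μ * ν R) * (if (t < i0 ∨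
              (δ.symm c) ∈ R.map (Function.Embedding.subtype _) : Prop) then (1:ℝ) else 0)
            = μ * (ν R * (if (⟨δ.symm c, ht⟩ : {i : Fin n // i0 ≤ (i : ℕ)}) ∈ R
                then (1:ℝ) else 0)) := by
          intro R
          have hiff : (t < i0 ∨ (δ.symm c) ∈ R.map (Function.Embedding.subtype _) : Prop)
              ↔ (⟨δ.symm c, ht⟩ : {i : Fin n // i0 ≤ (i : ℕ)}) ∈ R := by
            constructor
            · rintro (h | h)
              · omega
              · have := Finset.mem_map.1 h
                obtain ⟨a, ha, hae⟩ := this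
                have : a = ⟨δ.symm c, ht⟩ := by
                  apply Subtype.ext
                  exact hae
                rwa [← this]
            · intro h
              right
              exact Finset.mem_map_of_mem _ h
          rw [if_congr hiff rfl rfl]
          ring
        rw [hinl, hfil, Finset.sum_empty,
          Finset.sum_congr rfl (fun R _ => hcond R), ← Finset.mul_sum,
          hνcol ⟨δ.symm c, ht⟩]
        ring
    -- sepCoef in terms of F
    have hsepF : ∀ t, t < i0 → sepCoef f α k i0 t = F (t + 1) - F t := by
      intro t h
      simp only [sepCoef, if_pos h, hFdef]
      push_cast
      ring_nf
    have hseptail : ∀ t, ¬ (t < i0) →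
        sepCoef f α k i0 t = (F k - F i0) / ((k : ℝ) - i0) := by
      intro t h
      simp only [sepCoef, if_neg h, hFdef]
    have hGIco : ∑ t ∈ Finset.Ico i0 n, Y t = G i0 := by
      have h1 : G i0 = ∑ t ∈ Finset.range n, (if i0 ≤ t then Y t else 0) := by
        rw [hGdef]
        simp only []
        rw [Finset.sum_congr rfl (fun i _ => by rw [hyY i])]
        exact Fin.sum_univ_eq_sum_range (fun t => if i0 ≤ t then Y t else 0) n
      have h2 : Finset.filter (fun t => i0 ≤ t) (Finset.range n) = Finset.Ico i0 n := by
        ext t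
        simp only [Finset.mem_filter, Finset.mem_range, Finset.mem_Ico]
        omega
      rw [h1, ← Finset.sum_filter, h2]
    have hVsplit : V = (∑ j ∈ Finset.range i0, Y j * (F (j + 1) - F j))
        + μ * (F k - F i0) := by
      have h1 : V = ∑ t ∈ Finset.range n, sepCoef f α k i0 t * Y t := by
        rw [hVdef]
        rw [Finset.sum_congr rfl (fun i (_ : i ∈ Finset.univ) => by rw [hyY i])]
        exact Fin.sum_univ_eq_sum_range (fun t => sepCoef f α k i0 t * Y t) n
      have h2 : ∑ t ∈ Finset.range n, sepCoef f α k i0 t * Y t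
          = ∑ t ∈ Finset.range i0, sepCoef f α k i0 t * Y t
            + ∑ t ∈ Finset.Ico i0 n, sepCoef f α k i0 t * Y t := by
        simp only [Finset.range_eq_Ico]
        exact (Finset.sum_Ico_consecutive _ (Nat.zero_le i0) hi0n.le).symm
      have h3 : ∑ t ∈ Finset.range i0, sepCoef f α k i0 t * Y t
          = ∑ j ∈ Finset.range i0, Y j * (F (j + 1) - F j) := by
        apply Finset.sum_congr rfl
        intro t htm
        rw [hsepF t (Finset.mem_range.1 htm)]
        ring
      have h4 : ∑ t ∈ Finset.Ico i0 n, sepCoef f α k i0 t * Y t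
          = μ * (F k - F i0) := by
        have h5 : ∀ t ∈ Finset.Ico i0 n, sepCoef f α k i0 t * Y t
            = ((F k - F i0) / ((k : ℝ) - i0)) * Y t := by
          intro t htm
          rw [hseptail t (by have := (Finset.mem_Ico.1 htm).1; omega)]
        rw [Finset.sum_congr rfl h5, ← Finset.mul_sum, hGIco, ← hμG]
        field_simp
      rw [h1, h2, h3, h4]
    have hA1 : ∑ j ∈ Finset.range (i0 + 1), (Q j - Q (j + 1)) * F j
        = (∑ j ∈ Finset.range i0, Y j * (F (j + 1) - F j)) - μ * F i0 := by
      rw [abel_sum Q F i0 hF0]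
      rw [Finset.sum_congr rfl (fun j hj => by
        rw [hQY j (Finset.mem_range.1 hj)])]
      rw [hQsucc]
    have hw2 : ∑ a, wt a * (pt a).2 = w := by
      rw [hwt, hpt, Fintype.sum_sum_type]
      simp only [Sum.elim_inl, Sum.elim_inr]
      have hinl : ∑ j : Fin (i0 + 1), (Q (j:ℕ) - Q ((j:ℕ) + 1)) * (F (j:ℕ) + cw)
          = (∑ j ∈ Finset.range (i0 + 1), (Q j - Q (j + 1)) * F j) + (1 - μ) * cw := by
        rw [Fin.sum_univ_eq_sum_range (fun j => (Q j - Q (j + 1)) * (F j + cw)) (i0 + 1)]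
        rw [Finset.sum_congr rfl (fun j _ => mul_add (Q j - Q (j + 1)) (F j) cw),
          Finset.sum_add_distrib, ← Finset.sum_mul, Finset.sum_range_sub' Q, hQ0, hQsucc]
      have hinr : ∑ R : Finset {i : Fin n // i0 ≤ (i : ℕ)}, (μ * ν R) * (F k + cw)
          = μ * (F k + cw) := by
        rw [← Finset.sum_mul, hνtot]
      rw [hinl, hinr, hA1]
      have : w = V + cw := by rw [hcwdef]; ring
      rw [this, hVsplit]
      ring
    -- conclusion
    rw [convexHull_eq]
    refine ⟨(Fin (i0 + 1) ⊕ Finset {i : Fin n // i0 ≤ (i : ℕ)}),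
      Finset.univ.filter (fun a => wt a ≠ 0), wt, pt, fun a _ => hwt0 a, ?_, ?_, ?_⟩
    · rw [Finset.sum_filter_of_ne (fun a _ h => h)]
      exact hwtsum
    · intro a ha
      rw [Finset.mem_filter] at ha
      cases a with
      | inl j =>
        refine ⟨?_, ?_, ?_⟩
        · intro i
          rw [hpt]
          simp only [Sum.elim_inl]
          by_cases h : ((δ.symm i : Fin n) : ℕ) < (j : ℕ)
          · right; rw [if_pos h]
          · left; rw [if_neg h]
        · rw [hsum_inl j]
          have hj := j.isLt
          have : (j : ℕ) ≤ k := by omega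
          exact_mod_cast this
        · rw [hsum_inl j]
          have hpt2 : (pt (Sum.inl j)).2 = F (j : ℕ) + cw := by
            rw [hpt]; simp only [Sum.elim_inl]
          rw [hpt2, hFdef, mul_comm α (((j:ℕ)):ℝ)]
          linarith [hcw0]
      | inr R =>
        have hμν : μ ≠ 0 ∧ ν R ≠ 0 := by
          have h := ha.2
          rw [hwt] at h
          simp only [Sum.elim_inr] at h
          exact mul_ne_zero_iff.1 h
        have hRc : R.card = d := hνcard R hμν.2
        refine ⟨?_, ?_, ?_⟩
        · intro i
          rw [hpt]
          simp only [Sum.elim_inr]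
          exact Or.symm (ite_eq_or_eq _ 1 0)
        · rw [hsum_inr R hRc]
        · rw [hsum_inr R hRc]
          have hpt2 : (pt (Sum.inr R)).2 = F k + cw := by
            rw [hpt]; simp only [Sum.elim_inr]
          rw [hpt2, hFdef, mul_comm α ((k:ℕ):ℝ)]
          linarith [hcw0]
    · rw [Finset.centerMass_eq_of_sum_1 _ pt
        (by rw [Finset.sum_filter_of_ne (fun a _ h => h)]; exact hwtsum)]
      rw [Finset.sum_filter_of_ne (fun a _ hne =>
        show wt a ≠ 0 from fun hz => hne (by rw [hz, zero_smul]))]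
      rw [Prod.ext_iff]
      constructor
      · rw [Prod.fst_sum]
        funext c
        rw [Finset.sum_apply]
        simp only [Prod.smul_fst, Pi.smul_apply, smul_eq_mul]
        exact hcol c
      · rw [Prod.snd_sum]
        simp only [Prod.smul_snd, smul_eq_mul]
        exact hw2
end

section
/- Let f : (k+1)^N → ℝ be a k-submodular function. For each i ∈ N and q ∈ {1,…,k}, let ξ_i^q = min{ ρ_{q,i}(S) : S ∈ (k+1)^{N\{i}} with ∪_{p=1}^k S_p = N \ {i} }. Then the function f*(X) := f(X) − Σ_{q=1}^k Σ_{i∈X_q} ξ_i^q is k-submodular and monotone non-decreasing. -/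
/-- A `k`-set: a `k`-tuple of pairwise disjoint subsets of `N = {1,…,n}`. -/
def IsKSet {n k : ℕ} (S : Fin k → Finset (Fin n)) : Prop :=
  ∀ p q : Fin k, p ≠ q → Disjoint (S p) (S q)

/-- Component-wise intersection `X ⊓ Y` of two `k`-sets. -/
def kInf {n k : ℕ} (X Y : Fin k → Finset (Fin n)) : Fin k → Finset (Fin n) :=
  fun q => X q ∩ Y q

/-- The operation `X ⊔ Y`: `(X ⊔ Y)_q = (X_q ∪ Y_q) \ ∪_{p ≠ q}(X_p ∪ Y_p)`. -/
def kSup {n k : ℕ} (X Y : Fin k → Finset (Fin n)) : Fin k → Finset (Fin n) :=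
  fun q => (X q ∪ Y q) \ (Finset.univ.erase q).biUnion (fun p => X p ∪ Y p)

/-- `f : (k+1)^N → ℝ` is `k`-submodular if
`f(X) + f(Y) ≥ f(X ⊓ Y) + f(X ⊔ Y)` for all `k`-sets `X, Y`. -/
def KSubmodular {n k : ℕ} (f : (Fin k → Finset (Fin n)) → ℝ) : Prop :=
  ∀ X Y : Fin k → Finset (Fin n), IsKSet X → IsKSet Y →
    f (kInf X Y) + f (kSup X Y) ≤ f X + f Y

/-- The marginal return `ρ_{q,i}(X) = f(X_1,…,X_q ∪ {i},…,X_k) − f(X)`. -/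
def kMarginal {n k : ℕ} (f : (Fin k → Finset (Fin n)) → ℝ) (q : Fin k)
    (i : Fin n) (X : Fin k → Finset (Fin n)) : ℝ :=
  f (Function.update X q (insert i (X q))) - f X

/-- `ξ_i^q = min{ ρ_{q,i}(S) : S ∈ (k+1)^{N\{i}}, ∪_p S_p = N \ {i} }`. -/
noncomputable def kXi {n k : ℕ} (f : (Fin k → Finset (Fin n)) → ℝ)
    (i : Fin n) (q : Fin k) : ℝ :=
  sInf { r : ℝ | ∃ S : Fin k → Finset (Fin n), IsKSet S ∧
    Finset.univ.biUnion S = Finset.univ \ {i} ∧ r = kMarginal f q i S }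

namespace KAux
variable {n k : ℕ}

lemma mem_kSup {X Y : Fin k → Finset (Fin n)} {r : Fin k} {x : Fin n} :
    x ∈ kSup X Y r ↔ (x ∈ X r ∨ x ∈ Y r) ∧ ∀ s, s ≠ r → x ∉ X s ∧ x ∉ Y s := by
  simp only [kSup, Finset.mem_sdiff, Finset.mem_union, Finset.mem_biUnion,
    Finset.mem_erase, Finset.mem_univ, and_true, not_exists, not_or]
  constructor
  · rintro ⟨h1, h2⟩
    exact ⟨h1, fun s hs => ⟨fun hx => h2 s ⟨hs, Or.inl hx⟩, fun hx => h2 s ⟨hs, Or.inr hx⟩⟩⟩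
  · rintro ⟨h1, h2⟩
    exact ⟨h1, fun s => fun ⟨hs, hx⟩ => hx.elim (h2 s hs).1 (h2 s hs).2⟩

lemma mem_update_insert {Z : Fin k → Finset (Fin n)} {q r : Fin k} {i x : Fin n} :
    x ∈ Function.update Z q (insert i (Z q)) r ↔ (x = i ∧ r = q) ∨ x ∈ Z r := by
  rcases eq_or_ne r q with rfl | h
  · simp [Function.update_self]
  · simp [Function.update_of_ne h, h]

lemma mem_update_erase {Z : Fin k → Finset (Fin n)} {q r : Fin k} {i x : Fin n} :
    x ∈ Function.update Z q ((Z q).erase i) r ↔ x ∈ Z r ∧ ¬(x = i ∧ r = q) := by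
  rcases eq_or_ne r q with rfl | h
  · simp [Function.update_self, Finset.mem_erase]; tauto
  · simp [Function.update_of_ne h, h]

lemma isKSet_elem {S : Fin k → Finset (Fin n)} (hS : IsKSet S) {p q : Fin k}
    (h : p ≠ q) {x : Fin n} (hx : x ∈ S p) : x ∉ S q :=
  Finset.disjoint_left.mp (hS p q h) hx

lemma isKSet_of_elem {S : Fin k → Finset (Fin n)}
    (h : ∀ p q : Fin k, p ≠ q → ∀ x, x ∈ S p → x ∉ S q) : IsKSet S :=
  fun p q hpq => Finset.disjoint_left.mpr (fun {x} hx => h p q hpq x hx)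

lemma isKSet_kSup (X Y : Fin k → Finset (Fin n)) : IsKSet (kSup X Y) := by
  refine isKSet_of_elem fun p q hpq x hx hx' => ?_
  rw [mem_kSup] at hx hx'
  exact (hx.2 q (Ne.symm hpq)).elim (fun h1 h2 => hx'.1.elim h1 h2)

lemma isKSet_update_insert {Z : Fin k → Finset (Fin n)} (hZ : IsKSet Z)
    {i : Fin n} (hi : ∀ p, i ∉ Z p) (q : Fin k) :
    IsKSet (Function.update Z q (insert i (Z q))) := by
  refine isKSet_of_elem fun p r hpr x hx hx' => ?_
  rw [mem_update_insert] at hx hx'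
  rcases hx with ⟨rfl, rfl⟩ | hx
  · rcases hx' with ⟨-, rfl⟩ | hx' ;exact hpr rfl; exact hi r hx'
  · rcases hx' with ⟨rfl, rfl⟩ | hx'; exact hi p hx; exact isKSet_elem hZ hpr hx hx'

lemma isKSet_update_erase {Z : Fin k → Finset (Fin n)} (hZ : IsKSet Z)
    (i : Fin n) (q : Fin k) :
    IsKSet (Function.update Z q ((Z q).erase i)) := by
  refine isKSet_of_elem fun p r hpr x hx hx' => ?_
  rw [mem_update_erase] at hx hx'
  exact isKSet_elem hZ hpr hx.1 hx'.1

/-- Orthant submodularity, single step. -/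
lemma marginal_step (f : (Fin k → Finset (Fin n)) → ℝ) (hf : KSubmodular f)
    {Z : Fin k → Finset (Fin n)} (hZ : IsKSet Z) {i j : Fin n} (hij : i ≠ j)
    (hi : ∀ p, i ∉ Z p) (hj : ∀ p, j ∉ Z p) (q p : Fin k) :
    kMarginal f q i (Function.update Z p (insert j (Z p))) ≤ kMarginal f q i Z := by
  have hA : IsKSet (Function.update Z q (insert i (Z q))) := isKSet_update_insert hZ hi q
  have hB : IsKSet (Function.update Z p (insert j (Z p))) := isKSet_update_insert hZ hj p
  have key := hf _ _ hA hB
  have hinf : kInf (Function.update Z q (insert i (Z q)))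
      (Function.update Z p (insert j (Z p))) = Z := by
    funext r; ext x
    simp only [kInf, Finset.mem_inter, mem_update_insert]
    constructor
    · rintro ⟨h1 | h1, h2 | h2⟩
      · exact absurd (h1.1.symm.trans h2.1) hij
      · exact h2
      · exact h1
      · exact h1
    · intro hx; exact ⟨Or.inr hx, Or.inr hx⟩
  have hsup : kSup (Function.update Z q (insert i (Z q)))
      (Function.update Z p (insert j (Z p))) =
      Function.update (Function.update Z p (insert j (Z p))) q
        (insert i (Function.update Z p (insert j (Z p)) q)) := by
    funext r; ext x
    rw [mem_kSup, mem_update_insert]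
    simp only [mem_update_insert]
    constructor
    · rintro ⟨h1, -⟩
      rcases h1 with (⟨rfl, rfl⟩ | hx) | (⟨rfl, rfl⟩ | hx)
      · exact Or.inl ⟨rfl, rfl⟩
      · exact Or.inr (Or.inr hx)
      · exact Or.inr (Or.inl ⟨rfl, rfl⟩)
      · exact Or.inr (Or.inr hx)
    · rintro (⟨rfl, rfl⟩ | ⟨rfl, rfl⟩ | hx)
      · refine ⟨Or.inl (Or.inl ⟨rfl, rfl⟩), fun s hs => ⟨?_, ?_⟩⟩
        · rintro (⟨-, rfl⟩ | h)
          · exact hs rfl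
          · exact hi s h
        · rintro (⟨rfl, -⟩ | h)
          · exact hij rfl
          · exact hi s h
      · refine ⟨Or.inr (Or.inl ⟨rfl, rfl⟩), fun s hs => ⟨?_, ?_⟩⟩
        · rintro (⟨rfl, -⟩ | h)
          · exact hij rfl
          · exact hj s h
        · rintro (⟨-, rfl⟩ | h)
          · exact hs rfl
          · exact hj s h
      · refine ⟨Or.inl (Or.inr hx), fun s hs => ⟨?_, ?_⟩⟩
        · rintro (⟨rfl, -⟩ | h)
          · exact hi r hx
          · exact isKSet_elem hZ (Ne.symm hs) hx h
        · rintro (⟨rfl, -⟩ | h)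
          · exact hj r hx
          · exact isKSet_elem hZ (Ne.symm hs) hx h
  rw [hinf, hsup] at key
  simp only [kMarginal]
  linarith

lemma xiSet_finite (f : (Fin k → Finset (Fin n)) → ℝ) (i : Fin n) (q : Fin k) :
    { r : ℝ | ∃ S : Fin k → Finset (Fin n), IsKSet S ∧
      Finset.univ.biUnion S = Finset.univ \ {i} ∧ r = kMarginal f q i S }.Finite := by
  apply Set.Finite.subset (Set.finite_range (kMarginal f q i))
  rintro r ⟨S, -, -, rfl⟩; exact ⟨S, rfl⟩

lemma xi_le_of_full (f : (Fin k → Finset (Fin n)) → ℝ) {i : Fin n} (q : Fin k)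
    {Z : Fin k → Finset (Fin n)} (hZ : IsKSet Z)
    (hfull : Finset.univ.biUnion Z = Finset.univ \ {i}) :
    kXi f i q ≤ kMarginal f q i Z :=
  csInf_le (xiSet_finite f i q).bddBelow ⟨Z, hZ, hfull, rfl⟩

lemma xi_le_marginal (f : (Fin k → Finset (Fin n)) → ℝ) (hf : KSubmodular f)
    (i : Fin n) (q : Fin k) :
    ∀ (m : ℕ) (Z : Fin k → Finset (Fin n)),
      ((Finset.univ \ {i}) \ Finset.univ.biUnion Z).card ≤ m →
      IsKSet Z → (∀ p, i ∉ Z p) → kXi f i q ≤ kMarginal f q i Z := by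
  intro m
  induction m with
  | zero =>
    intro Z hcard hZ hi
    have hsub : Finset.univ.biUnion Z ⊆ Finset.univ \ {i} := by
      intro x hx
      rw [Finset.mem_biUnion] at hx
      obtain ⟨p, -, hp⟩ := hx
      simp only [Finset.mem_sdiff, Finset.mem_univ, Finset.mem_singleton, true_and]
      rintro rfl; exact hi p hp
    have hempty : (Finset.univ \ {i}) \ Finset.univ.biUnion Z = ∅ :=
      Finset.card_eq_zero.mp (Nat.le_zero.mp hcard)
    have hfull : Finset.univ.biUnion Z = Finset.univ \ {i} :=
      (Finset.Subset.antisymm hsub (Finset.sdiff_eq_empty_iff_subset.mp hempty))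
    exact xi_le_of_full f q hZ hfull
  | succ m ih =>
    intro Z hcard hZ hi
    by_cases hfull : Finset.univ.biUnion Z = Finset.univ \ {i}
    · exact xi_le_of_full f q hZ hfull
    · have hsub : Finset.univ.biUnion Z ⊆ Finset.univ \ {i} := by
        intro x hx
        rw [Finset.mem_biUnion] at hx
        obtain ⟨p, -, hp⟩ := hx
        simp only [Finset.mem_sdiff, Finset.mem_univ, Finset.mem_singleton, true_and]
        rintro rfl; exact hi p hp
      obtain ⟨j, hjmem⟩ : ((Finset.univ \ {i}) \ Finset.univ.biUnion Z).Nonempty := by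
        rw [Finset.sdiff_nonempty]
        intro hsup
        exact hfull (Finset.Subset.antisymm hsub hsup)
      rw [Finset.mem_sdiff] at hjmem
      have hj : ∀ p, j ∉ Z p := fun p hp =>
        hjmem.2 (Finset.mem_biUnion.mpr ⟨p, Finset.mem_univ p, hp⟩)
      have hij : i ≠ j := by
        rintro rfl
        have := hjmem.1
        simp at this
      have hbi : Finset.univ.biUnion (Function.update Z q (insert j (Z q)))
          = insert j (Finset.univ.biUnion Z) := by
        ext x
        simp only [Finset.mem_biUnion, Finset.mem_insert, mem_update_insert,
          Finset.mem_univ, true_and]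
        constructor
        · rintro ⟨p, ⟨rfl, -⟩ | hp⟩
          · exact Or.inl rfl
          · exact Or.inr ⟨p, hp⟩
        · rintro (rfl | ⟨p, hp⟩)
          · exact ⟨q, Or.inl ⟨rfl, rfl⟩⟩
          · exact ⟨p, Or.inr hp⟩
      have hcard' : ((Finset.univ \ {i}) \
          Finset.univ.biUnion (Function.update Z q (insert j (Z q)))).card ≤ m := by
        rw [hbi]
        have hlt : ((Finset.univ \ {i}) \ insert j (Finset.univ.biUnion Z)).card
            < ((Finset.univ \ {i}) \ Finset.univ.biUnion Z).card := by
          apply Finset.card_lt_card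
          constructor
          · intro x hx
            rw [Finset.mem_sdiff] at hx ⊢
            exact ⟨hx.1, fun h => hx.2 (Finset.mem_insert_of_mem h)⟩
          · intro hss
            have : j ∈ (Finset.univ \ {i}) \ insert j (Finset.univ.biUnion Z) :=
              hss (Finset.mem_sdiff.mpr ⟨hjmem.1, hjmem.2⟩)
            rw [Finset.mem_sdiff] at this
            exact this.2 (Finset.mem_insert_self _ _)
        omega
      have hrec := ih (Function.update Z q (insert j (Z q))) hcard'
        (isKSet_update_insert hZ hj q)
        (fun p hp => by
          rw [mem_update_insert] at hp
          rcases hp with ⟨h, -⟩ | hp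
          · exact hij h
          · exact hi p hp)
      have hstep := marginal_step f hf hZ hij hi hj q q
      linarith

lemma xi_le (f : (Fin k → Finset (Fin n)) → ℝ) (hf : KSubmodular f)
    {i : Fin n} (q : Fin k) {Z : Fin k → Finset (Fin n)} (hZ : IsKSet Z)
    (hi : ∀ p, i ∉ Z p) : kXi f i q ≤ kMarginal f q i Z :=
  xi_le_marginal f hf i q _ Z le_rfl hZ hi


/-- The modular term grows by `ξ_i^q` when inserting `i` at position `q`. -/
lemma m_insert (f : (Fin k → Finset (Fin n)) → ℝ) {Z : Fin k → Finset (Fin n)}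
    {i : Fin n} {q : Fin k} (hi : i ∉ Z q) :
    ∑ p : Fin k, ∑ j ∈ Function.update Z q (insert i (Z q)) p, kXi f j p
      = (∑ p : Fin k, ∑ j ∈ Z p, kXi f j p) + kXi f i q := by
  have key : ∀ (W : Fin k → Finset (Fin n)),
      ∑ p : Fin k, ∑ j ∈ W p, kXi f j p
        = (∑ j ∈ W q, kXi f j q) + ∑ p ∈ Finset.univ.erase q, ∑ j ∈ W p, kXi f j p :=
    fun W => (Finset.add_sum_erase _ _ (Finset.mem_univ q)).symm
  rw [key, key Z, Function.update_self, Finset.sum_insert hi]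
  have he : ∑ p ∈ Finset.univ.erase q,
      ∑ j ∈ Function.update Z q (insert i (Z q)) p, kXi f j p
      = ∑ p ∈ Finset.univ.erase q, ∑ j ∈ Z p, kXi f j p :=
    Finset.sum_congr rfl fun p hp => by
      rw [Function.update_of_ne (Finset.ne_of_mem_erase hp)]
  rw [he]; ring

/-- Monotonicity of the counterpart. -/
lemma mono_aux (f : (Fin k → Finset (Fin n)) → ℝ) (hf : KSubmodular f) :
    ∀ (m : ℕ) (X Y : Fin k → Finset (Fin n)),
      (∑ p : Fin k, (Y p \ X p).card) ≤ m → IsKSet X → IsKSet Y →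
      (∀ p, X p ⊆ Y p) →
      f X - ∑ p : Fin k, ∑ j ∈ X p, kXi f j p
        ≤ f Y - ∑ p : Fin k, ∑ j ∈ Y p, kXi f j p := by
  intro m
  induction m with
  | zero =>
    intro X Y hcard hX hY hXY
    have hXY' : X = Y := by
      funext p
      have h0 : (Y p \ X p).card = 0 := by
        have h1 : (Y p \ X p).card ≤ ∑ r : Fin k, (Y r \ X r).card :=
          Finset.single_le_sum (f := fun r => (Y r \ X r).card)
            (fun r _ => Nat.zero_le _) (Finset.mem_univ p)
        omega
      have : Y p ⊆ X p := by
        intro x hx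
        by_contra hnx
        have : x ∈ Y p \ X p := Finset.mem_sdiff.mpr ⟨hx, hnx⟩
        rw [Finset.card_eq_zero.mp h0] at this
        exact absurd this (Finset.notMem_empty x)
      exact Finset.Subset.antisymm (hXY p) this
    rw [hXY']
  | succ m ih =>
    intro X Y hcard hX hY hXY
    by_cases hempty : ∀ p, Y p \ X p = ∅
    · have hXY' : X = Y := by
        funext p
        exact Finset.Subset.antisymm (hXY p)
          (fun x hx => by
            by_contra hnx
            have : x ∈ Y p \ X p := Finset.mem_sdiff.mpr ⟨hx, hnx⟩
            rw [hempty p] at this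
            exact absurd this (Finset.notMem_empty x))
      rw [hXY']
    · push_neg at hempty
      obtain ⟨p, hp⟩ := hempty
      obtain ⟨i, hi⟩ := hp
      rw [Finset.mem_sdiff] at hi
      have hiX : ∀ r, i ∉ X r := by
        intro r hr
        rcases eq_or_ne r p with rfl | hrp
        · exact hi.2 hr
        · exact isKSet_elem hY hrp (hXY r hr) hi.1
      have hX' : IsKSet (Function.update X p (insert i (X p))) :=
        isKSet_update_insert hX hiX p
      have hXY'' : ∀ r, Function.update X p (insert i (X p)) r ⊆ Y r := by
        intro r x hx
        rw [mem_update_insert] at hx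
        rcases hx with ⟨rfl, rfl⟩ | hx
        · exact hi.1
        · exact hXY r hx
      have hcard' : (∑ r : Fin k, (Y r \ Function.update X p (insert i (X p)) r).card) ≤ m := by
        have key : ∀ (W : Fin k → Finset (Fin n)),
            ∑ r : Fin k, (Y r \ W r).card
              = (Y p \ W p).card + ∑ r ∈ Finset.univ.erase p, (Y r \ W r).card :=
          fun W => (Finset.add_sum_erase _ _ (Finset.mem_univ p)).symm
        rw [key] at hcard ⊢
        have he : ∑ r ∈ Finset.univ.erase p,
            (Y r \ Function.update X p (insert i (X p)) r).card
            = ∑ r ∈ Finset.univ.erase p, (Y r \ X r).card :=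
          Finset.sum_congr rfl fun r hr => by
            rw [Function.update_of_ne (Finset.ne_of_mem_erase hr)]
        rw [he, Function.update_self]
        have hsd : Y p \ insert i (X p) = (Y p \ X p).erase i := by
          ext x
          simp only [Finset.mem_sdiff, Finset.mem_erase, Finset.mem_insert, not_or]
          tauto
        rw [hsd, Finset.card_erase_of_mem (Finset.mem_sdiff.mpr ⟨hi.1, hi.2⟩)]
        have hpos : 0 < (Y p \ X p).card :=
          Finset.card_pos.mpr ⟨i, Finset.mem_sdiff.mpr ⟨hi.1, hi.2⟩⟩
        omega
      have hstep : f X - ∑ r : Fin k, ∑ j ∈ X r, kXi f j r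
          ≤ f (Function.update X p (insert i (X p)))
            - ∑ r : Fin k, ∑ j ∈ Function.update X p (insert i (X p)) r, kXi f j r := by
        rw [m_insert f (hiX p)]
        have hxi : kXi f i p ≤ kMarginal f p i X := xi_le f hf p hX hiX
        simp only [kMarginal] at hxi
        linarith
      exact le_trans hstep (ih _ Y hcard' hX' hY hXY'')


/-- Submodularity inequality for the counterpart: no-conflict case. -/
lemma submod_nc (f : (Fin k → Finset (Fin n)) → ℝ) (hf : KSubmodular f)
    (X Y : Fin k → Finset (Fin n)) (hX : IsKSet X) (hY : IsKSet Y)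
    (hnc : ∀ x : Fin n, ∀ p p' : Fin k, p ≠ p' → x ∈ X p → x ∉ Y p') :
    (f (kInf X Y) - ∑ p : Fin k, ∑ j ∈ kInf X Y p, kXi f j p)
      + (f (kSup X Y) - ∑ p : Fin k, ∑ j ∈ kSup X Y p, kXi f j p)
      ≤ (f X - ∑ p : Fin k, ∑ j ∈ X p, kXi f j p)
        + (f Y - ∑ p : Fin k, ∑ j ∈ Y p, kXi f j p) := by
  have hsupu : kSup X Y = fun r => X r ∪ Y r := by
    funext r; ext x
    rw [mem_kSup, Finset.mem_union]
    constructor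
    · exact fun h => h.1
    · intro h
      refine ⟨h, fun s hs => ?_⟩
      rcases h with hx | hx
      · exact ⟨isKSet_elem hX (Ne.symm hs) hx, hnc x r s (Ne.symm hs) hx⟩
      · exact ⟨fun hxs => hnc x s r hs hxs hx, isKSet_elem hY (Ne.symm hs) hx⟩
  have hM : (∑ p : Fin k, ∑ j ∈ kInf X Y p, kXi f j p)
      + ∑ p : Fin k, ∑ j ∈ kSup X Y p, kXi f j p
      = (∑ p : Fin k, ∑ j ∈ X p, kXi f j p) + ∑ p : Fin k, ∑ j ∈ Y p, kXi f j p := by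
    rw [hsupu, ← Finset.sum_add_distrib, ← Finset.sum_add_distrib]
    refine Finset.sum_congr rfl fun p _ => ?_
    simp only [kInf]
    rw [add_comm]
    exact Finset.sum_union_inter
  have hkey := hf X Y hX hY
  linarith

/-- Submodularity inequality for the counterpart. -/
lemma submod_aux (f : (Fin k → Finset (Fin n)) → ℝ) (hf : KSubmodular f) :
    ∀ (m : ℕ) (Y X : Fin k → Finset (Fin n)),
      (∑ p : Fin k, (Y p).card) ≤ m → IsKSet X → IsKSet Y →
      (f (kInf X Y) - ∑ p : Fin k, ∑ j ∈ kInf X Y p, kXi f j p)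
        + (f (kSup X Y) - ∑ p : Fin k, ∑ j ∈ kSup X Y p, kXi f j p)
        ≤ (f X - ∑ p : Fin k, ∑ j ∈ X p, kXi f j p)
          + (f Y - ∑ p : Fin k, ∑ j ∈ Y p, kXi f j p) := by
  intro m
  induction m with
  | zero =>
    intro Y X hcard hX hY
    refine submod_nc f hf X Y hX hY fun x p p' _ _ hx => ?_
    have h1 : (Y p').card ≤ ∑ r : Fin k, (Y r).card :=
      Finset.single_le_sum (f := fun r => (Y r).card)
        (fun r _ => Nat.zero_le _) (Finset.mem_univ p')
    have h0 : (Y p').card = 0 := by omega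
    rw [Finset.card_eq_zero.mp h0] at hx
    exact absurd hx (Finset.notMem_empty x)
  | succ m ih =>
    intro Y X hcard hX hY
    by_cases hc : ∃ x : Fin n, ∃ p p' : Fin k, p ≠ p' ∧ x ∈ X p ∧ x ∈ Y p'
    · obtain ⟨i, p, p', hpp', hiX, hiY⟩ := hc
      set Y' := Function.update Y p' ((Y p').erase i) with hY'def
      have hiXother : i ∉ X p' := isKSet_elem hX hpp' hiX
      have hY'k : IsKSet Y' := isKSet_update_erase hY i p'
      have hiY'r : ∀ r, i ∉ Y' r := by
        intro r hr
        rw [hY'def, mem_update_erase] at hr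
        rcases eq_or_ne r p' with rfl | hr'
        · exact hr.2 ⟨rfl, rfl⟩
        · exact isKSet_elem hY (Ne.symm hr') hiY hr.1
      have hYY' : Function.update Y' p' (insert i (Y' p')) = Y := by
        funext r
        rcases eq_or_ne r p' with rfl | h
        · simp [hY'def, Finset.insert_erase hiY]
        · simp [hY'def, Function.update_of_ne h]
      have hinf : kInf X Y' = kInf X Y := by
        funext r; ext x
        simp only [kInf, Finset.mem_inter, hY'def, mem_update_erase]
        constructor
        · rintro ⟨h1, h2, -⟩; exact ⟨h1, h2⟩
        · rintro ⟨h1, h2⟩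
          refine ⟨h1, h2, ?_⟩
          rintro ⟨rfl, rfl⟩
          exact hiXother h1
      have hiSup : ∀ r, i ∉ kSup X Y r := by
        intro r hr
        rw [mem_kSup] at hr
        rcases eq_or_ne r p with rfl | hrp
        · exact (hr.2 p' (Ne.symm hpp')).2 hiY
        · exact (hr.2 p (Ne.symm hrp)).1 hiX
      have hsup' : kSup X Y' = Function.update (kSup X Y) p (insert i (kSup X Y p)) := by
        funext r; ext x
        simp only [mem_update_insert, mem_kSup, hY'def, mem_update_erase]
        constructor
        · rintro ⟨h1, h2⟩
          rcases eq_or_ne x i with rfl | hxi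
          · left
            refine ⟨rfl, ?_⟩
            rcases h1 with hxr | ⟨hyr, hne⟩
            · rcases eq_or_ne r p with rfl | hrp
              · rfl
              · exact absurd hxr (isKSet_elem hX (fun h => hrp h.symm) hiX)
            · rcases eq_or_ne r p' with rfl | hrp'
              · exact absurd ⟨rfl, rfl⟩ hne
              · exact absurd hyr (isKSet_elem hY (Ne.symm hrp') hiY)
          · right
            constructor
            · rcases h1 with hxr | ⟨hyr, -⟩
              · exact Or.inl hxr
              · exact Or.inr hyr
            · intro s hs
              refine ⟨(h2 s hs).1, fun hxy => (h2 s hs).2 ⟨hxy, fun hcc => hxi hcc.1⟩⟩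
        · rintro (⟨rfl, rfl⟩ | ⟨h1, h2⟩)
          · refine ⟨Or.inl hiX, fun s hs => ⟨?_, ?_⟩⟩
            · exact isKSet_elem hX (Ne.symm hs) hiX
            · rintro ⟨hys, hne⟩
              rcases eq_or_ne s p' with rfl | hsp'
              · exact hne ⟨rfl, rfl⟩
              · exact isKSet_elem hY (Ne.symm hsp') hiY hys
          · have hxi : x ≠ i := by
              rintro rfl
              rcases eq_or_ne r p with rfl | hrp
              · exact (h2 p' (Ne.symm hpp')).2 hiY
              · exact (h2 p (Ne.symm hrp)).1 hiX
            constructor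
            · rcases h1 with hxr | hyr
              · exact Or.inl hxr
              · exact Or.inr ⟨hyr, fun hcc => hxi hcc.1⟩
            · intro s hs
              exact ⟨(h2 s hs).1, fun hcc => (h2 s hs).2 hcc.1⟩
      have hcard' : (∑ r : Fin k, (Y' r).card) ≤ m := by
        have key : ∀ (W : Fin k → Finset (Fin n)),
            ∑ r : Fin k, (W r).card
              = (W p').card + ∑ r ∈ Finset.univ.erase p', (W r).card :=
          fun W => (Finset.add_sum_erase _ _ (Finset.mem_univ p')).symm
        rw [key] at hcard ⊢
        have he : ∑ r ∈ Finset.univ.erase p', (Y' r).card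
            = ∑ r ∈ Finset.univ.erase p', (Y r).card :=
          Finset.sum_congr rfl fun r hr => by
            rw [hY'def, Function.update_of_ne (Finset.ne_of_mem_erase hr)]
        have hp' : Y' p' = (Y p').erase i := by
          rw [hY'def, Function.update_self]
        rw [he, hp', Finset.card_erase_of_mem hiY]
        have hpos : 0 < (Y p').card := Finset.card_pos.mpr ⟨i, hiY⟩
        omega
      have IH := ih Y' X hcard' hX hY'k
      rw [hinf] at IH
      have hfY : kMarginal f p' i Y' = f Y - f Y' := by
        simp only [kMarginal]
        rw [hYY']
      have hfS : kMarginal f p i (kSup X Y) = f (kSup X Y') - f (kSup X Y) := by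
        simp only [kMarginal]
        rw [hsup']
      have hMY : ∑ r : Fin k, ∑ j ∈ Y r, kXi f j r
          = (∑ r : Fin k, ∑ j ∈ Y' r, kXi f j r) + kXi f i p' := by
        rw [← hYY']
        exact m_insert f (hiY'r p')
      have hMS : ∑ r : Fin k, ∑ j ∈ kSup X Y' r, kXi f j r
          = (∑ r : Fin k, ∑ j ∈ kSup X Y r, kXi f j r) + kXi f i p := by
        rw [hsup']
        exact m_insert f (hiSup p)
      have hxi1 : kXi f i p' ≤ kMarginal f p' i Y' := xi_le f hf p' hY'k hiY'r
      have hxi2 : kXi f i p ≤ kMarginal f p i (kSup X Y) :=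
        xi_le f hf p (isKSet_kSup X Y) hiSup
      linarith
    · push_neg at hc
      exact submod_nc f hf X Y hX hY hc

end KAux

/-- For any `k`-submodular `f`, the function
`f*(X) = f(X) − Σ_{q=1}^k Σ_{i ∈ X_q} ξ_i^q`
is `k`-submodular and monotone non-decreasing. -/
theorem monotone_counterpart_kSubmodular {n k : ℕ} (hn : 0 < n) (hk : 0 < k)
    (f : (Fin k → Finset (Fin n)) → ℝ) (hf : KSubmodular f)
    (fs : (Fin k → Finset (Fin n)) → ℝ)
    (hfs : ∀ X, fs X = f X - ∑ q : Fin k, ∑ i ∈ X q, kXi f i q) :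
    KSubmodular fs ∧
      (∀ X Y : Fin k → Finset (Fin n), IsKSet X → IsKSet Y →
        (∀ q, X q ⊆ Y q) → fs X ≤ fs Y) := by
  constructor
  · intro X Y hX hY
    have h := KAux.submod_aux f hf (∑ p : Fin k, (Y p).card) Y X le_rfl hX hY
    rw [hfs, hfs, hfs, hfs]
    linarith
  · intro X Y hX hY hXY
    have h := KAux.mono_aux f hf (∑ p : Fin k, (Y p \ X p).card) X Y le_rfl hX hY hXY
    rw [hfs, hfs]
    linarith
end

section
/- Let f : (k+1)^N → ℝ be a k-submodular function with f(∅,…,∅) = 0. Then for every S ∈ (k+1)^N and every X ∈ (k+1)^N with binary encoding x (x_i^q = 1 iff i ∈ X_q), the k-submodular inequality associated with S is valid: f(X) ≤ f(S) + Σ_{q=1}^k Σ_{i ∉ ∪_{r=1}^k S_r} ρ_{q,i}(S) x_i^q + Σ_{q=1}^k Σ_{p ∈ {1,…,k}\{q}} Σ_{i ∈ S_p} ρ_{q,i}(∅,…,∅) x_i^q − Σ_{q=1}^k Σ_{i ∈ S_q} ξ_i^q (1 − x_i^q). -/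
section Aux

variable {n k : ℕ}

lemma kSup_eq {X Y Z : Fin k → Finset (Fin n)} (hZ : IsKSet Z)
    (h : ∀ p, X p ∪ Y p = Z p) : kSup X Y = Z := by
  funext p
  show (X p ∪ Y p) \ _ = Z p
  rw [h]
  rw [sdiff_eq_self_iff_disjoint]
  rw [Finset.disjoint_biUnion_left]
  intro r hr
  rw [h]
  exact hZ r p (Finset.ne_of_mem_erase hr)

lemma isKSet_insert {W : Fin k → Finset (Fin n)} (hW : IsKSet W)
    {i : Fin n} (hi : ∀ p, i ∉ W p) (q : Fin k) :
    IsKSet (Function.update W q (insert i (W q))) := by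
  intro p r hpr
  rcases eq_or_ne p q with hp | hp <;> rcases eq_or_ne r q with hr | hr
  · exact absurd (hp.trans hr.symm) hpr
  · subst hp
    rw [Function.update_self, Function.update_of_ne hr]
    exact Finset.disjoint_insert_left.mpr ⟨hi r, hW p r (Ne.symm hr)⟩
  · subst hr
    rw [Function.update_self, Function.update_of_ne hp]
    exact Finset.disjoint_insert_right.mpr ⟨hi p, hW p r hpr⟩
  · rw [Function.update_of_ne hp, Function.update_of_ne hr]
    exact hW p r hpr

lemma kMarginal_le (f : (Fin k → Finset (Fin n)) → ℝ) (hf : KSubmodular f)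
    {W W' : Fin k → Finset (Fin n)} (hW : IsKSet W) (hW' : IsKSet W')
    (hsub : ∀ p, W p ⊆ W' p) {i : Fin n} (hi : ∀ p, i ∉ W' p) (q : Fin k) :
    kMarginal f q i W' ≤ kMarginal f q i W := by
  have hiW : ∀ p, i ∉ W p := fun p h => hi p (hsub p h)
  have hAk : IsKSet (Function.update W q (insert i (W q))) := isKSet_insert hW hiW q
  have hinf : kInf (Function.update W q (insert i (W q))) W' = W := by
    funext p
    rcases eq_or_ne p q with hpq | hpq
    · subst hpq
      show Function.update W p (insert i (W p)) p ∩ W' p = W p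
      rw [Function.update_self, Finset.insert_inter_of_notMem (hi p)]
      exact Finset.inter_eq_left.mpr (hsub p)
    · show Function.update W q (insert i (W q)) p ∩ W' p = W p
      rw [Function.update_of_ne hpq]
      exact Finset.inter_eq_left.mpr (hsub p)
  have hZk : IsKSet (Function.update W' q (insert i (W' q))) := isKSet_insert hW' hi q
  have hsup : kSup (Function.update W q (insert i (W q))) W'
      = Function.update W' q (insert i (W' q)) := by
    apply kSup_eq hZk
    intro p
    rcases eq_or_ne p q with hpq | hpq
    · subst hpq
      rw [Function.update_self, Function.update_self, Finset.insert_union,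
        Finset.union_eq_right.mpr (hsub p)]
    · rw [Function.update_of_ne hpq, Function.update_of_ne hpq,
        Finset.union_eq_right.mpr (hsub p)]
  have hkey := hf _ W' hAk hW'
  rw [hinf, hsup] at hkey
  simp only [kMarginal]
  linarith

end Aux

section Aux2
variable {n k : ℕ}

lemma kXi_le_kMarginal (f : (Fin k → Finset (Fin n)) → ℝ) (hf : KSubmodular f)
    {W : Fin k → Finset (Fin n)} (hW : IsKSet W)
    {i : Fin n} (hi : ∀ p, i ∉ W p) (q : Fin k) :
    kXi f i q ≤ kMarginal f q i W := by
  classical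
  set R : Finset (Fin n) := (Finset.univ \ {i}) \ Finset.univ.biUnion W with hR
  set W' : Fin k → Finset (Fin n) := Function.update W q (W q ∪ R) with hW'def
  have hWR : ∀ p, Disjoint (W p) R := by
    intro p
    rw [Finset.disjoint_left]
    intro x hx hxR
    rw [hR, Finset.mem_sdiff] at hxR
    exact hxR.2 (Finset.mem_biUnion.mpr ⟨p, Finset.mem_univ p, hx⟩)
  have hWsub : ∀ p, W p ⊆ W' p := by
    intro p
    rcases eq_or_ne p q with h | h
    · subst h; rw [hW'def, Function.update_self]; exact Finset.subset_union_left
    · rw [hW'def, Function.update_of_ne h]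
  have hiW' : ∀ p, i ∉ W' p := by
    intro p
    rcases eq_or_ne p q with h | h
    · subst h; rw [hW'def, Function.update_self, Finset.mem_union]
      rintro (h' | h')
      · exact hi p h'
      · rw [hR, Finset.mem_sdiff, Finset.mem_sdiff] at h'
        exact h'.1.2 (Finset.mem_singleton_self i)
    · rw [hW'def, Function.update_of_ne h]; exact hi p
  have hW'k : IsKSet W' := by
    intro p r hpr
    rcases eq_or_ne p q with hp | hp <;> rcases eq_or_ne r q with hr | hr
    · exact absurd (hp.trans hr.symm) hpr
    · subst hp
      rw [hW'def, Function.update_self, Function.update_of_ne hr]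
      rw [Finset.disjoint_union_left]
      exact ⟨hW p r (Ne.symm hr), (hWR r).symm⟩
    · subst hr
      rw [hW'def, Function.update_self, Function.update_of_ne hp]
      rw [Finset.disjoint_union_right]
      exact ⟨hW p r hpr, hWR p⟩
    · rw [hW'def, Function.update_of_ne hp, Function.update_of_ne hr]
      exact hW p r hpr
  have hsupp : Finset.univ.biUnion W' = Finset.univ \ {i} := by
    ext j
    simp only [Finset.mem_biUnion, Finset.mem_univ, true_and, Finset.mem_sdiff,
      Finset.mem_singleton]
    constructor
    · rintro ⟨p, hp⟩
      exact fun hji => hiW' p (hji ▸ hp)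
    · intro hji
      by_cases hjW : j ∈ Finset.univ.biUnion W
      · obtain ⟨p, -, hp⟩ := Finset.mem_biUnion.mp hjW
        exact ⟨p, hWsub p hp⟩
      · refine ⟨q, ?_⟩
        rw [hW'def, Function.update_self, Finset.mem_union, hR]
        right
        rw [Finset.mem_sdiff, Finset.mem_sdiff, Finset.mem_singleton]
        exact ⟨⟨Finset.mem_univ j, hji⟩, hjW⟩
  have hmem : kMarginal f q i W' ∈ { r : ℝ | ∃ T : Fin k → Finset (Fin n), IsKSet T ∧
      Finset.univ.biUnion T = Finset.univ \ {i} ∧ r = kMarginal f q i T } :=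
    ⟨W', hW'k, hsupp, rfl⟩
  have hbdd : BddBelow { r : ℝ | ∃ T : Fin k → Finset (Fin n), IsKSet T ∧
      Finset.univ.biUnion T = Finset.univ \ {i} ∧ r = kMarginal f q i T } := by
    apply Set.Finite.bddBelow
    apply (Set.finite_range (kMarginal f q i)).subset
    rintro r ⟨T, -, -, rfl⟩
    exact ⟨T, rfl⟩
  calc kXi f i q ≤ kMarginal f q i W' := csInf_le hbdd hmem
    _ ≤ kMarginal f q i W := kMarginal_le f hf hW hW'k hWsub hiW' q

lemma isKSet_union_filter {W : Fin k → Finset (Fin n)} (hW : IsKSet W)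
    (c : Fin n → Fin k) {T : Finset (Fin n)} (hT : ∀ i ∈ T, ∀ p, i ∉ W p) :
    IsKSet (fun p => W p ∪ T.filter (fun i => c i = p)) := by
  intro p r hpr
  simp only
  rw [Finset.disjoint_union_left, Finset.disjoint_union_right, Finset.disjoint_union_right]
  refine ⟨⟨hW p r hpr, ?_⟩, ?_, ?_⟩
  · rw [Finset.disjoint_left]
    intro x hx hx'
    exact hT x (Finset.mem_filter.mp hx').1 p hx
  · rw [Finset.disjoint_left]
    intro x hx hx'
    exact hT x (Finset.mem_filter.mp hx).1 r hx'
  · rw [Finset.disjoint_left]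
    intro x hx hx'
    exact hpr ((Finset.mem_filter.mp hx).2.symm.trans (Finset.mem_filter.mp hx').2)

lemma add_bound (f : (Fin k → Finset (Fin n)) → ℝ) (hf : KSubmodular f)
    (B W : Fin k → Finset (Fin n)) (hB : IsKSet B) (hW : IsKSet W)
    (hBW : ∀ p, B p ⊆ W p) (c : Fin n → Fin k) :
    ∀ T : Finset (Fin n), (∀ i ∈ T, ∀ p, i ∉ W p) →
      ∀ V : Fin k → Finset (Fin n), (V = fun p => W p ∪ T.filter (fun i => c i = p)) →
      f V ≤ f W + ∑ i ∈ T, kMarginal f (c i) i B := by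
  intro T
  induction T using Finset.induction_on with
  | empty =>
    intro _ V hV
    simp only [Finset.filter_empty, Finset.union_empty] at hV
    simp [hV]
  | @insert a T' ha ih =>
    intro hT V hV
    have hT' : ∀ i ∈ T', ∀ p, i ∉ W p := fun i hi => hT i (Finset.mem_insert_of_mem hi)
    set W' : Fin k → Finset (Fin n) := fun p => W p ∪ T'.filter (fun i => c i = p)
      with hW'def
    have hW'k : IsKSet W' := isKSet_union_filter hW c hT'
    have haW' : ∀ r, a ∉ W' r := by
      intro r
      rw [hW'def]
      simp only [Finset.mem_union, Finset.mem_filter, not_or]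
      exact ⟨hT a (Finset.mem_insert_self a T') r, fun h => ha h.1⟩
    have heq : V = Function.update W' (c a) (insert a (W' (c a))) := by
      rw [hV]
      funext r
      rcases eq_or_ne r (c a) with hr | hr
      · subst hr
        rw [Function.update_self, Finset.filter_insert, if_pos rfl, hW'def,
          Finset.union_insert]
      · rw [Function.update_of_ne hr, Finset.filter_insert,
          if_neg (fun h => hr h.symm), hW'def]
    have hmar : kMarginal f (c a) a W' ≤ kMarginal f (c a) a B :=
      kMarginal_le f hf hB hW'k
        (fun r => (hBW r).trans Finset.subset_union_left) haW' (c a)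
    have hfV : f V = f W' + kMarginal f (c a) a W' := by
      rw [heq]; simp only [kMarginal]; ring
    have hih := ih hT' W' rfl
    rw [Finset.sum_insert ha]
    rw [hfV]
    linarith

lemma remove_bound (f : (Fin k → Finset (Fin n)) → ℝ) (hf : KSubmodular f)
    (W : Fin k → Finset (Fin n)) (hW : IsKSet W) (s : Fin n → Fin k) :
    ∀ T : Finset (Fin n), (∀ i ∈ T, i ∈ W (s i)) →
      ∀ V : Fin k → Finset (Fin n), (V = fun p => W p \ T) →
      f V ≤ f W - ∑ i ∈ T, kXi f i (s i) := by
  intro T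
  induction T using Finset.induction_on with
  | empty =>
    intro _ V hV
    simp only [Finset.sdiff_empty] at hV
    simp [hV]
  | @insert a T' ha ih =>
    intro hT V hV
    have hT' : ∀ i ∈ T', i ∈ W (s i) := fun i hi => hT i (Finset.mem_insert_of_mem hi)
    have haW : a ∈ W (s a) := hT a (Finset.mem_insert_self a T')
    have haWr : ∀ r, r ≠ s a → a ∉ W r := by
      intro r hr hmem
      exact Finset.disjoint_left.mp (hW r (s a) hr) hmem haW
    have hVk : IsKSet V := by
      rw [hV]
      intro p r hpr
      exact (hW p r hpr).mono Finset.sdiff_subset Finset.sdiff_subset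
    have haV : ∀ r, a ∉ V r := by
      intro r
      rw [hV]
      simp
    have heq : (fun r => W r \ T') = Function.update V (s a) (insert a (V (s a))) := by
      funext r
      rcases eq_or_ne r (s a) with hr | hr
      · subst hr
        rw [Function.update_self, hV]
        ext x
        rcases eq_or_ne x a with hx | hx
        · subst hx
          simp [haW, ha]
        · simp [hx]
      · rw [Function.update_of_ne hr, hV]
        ext x
        rcases eq_or_ne x a with hx | hx
        · subst hx
          simp [haWr r hr]
        · simp [hx]
    have hxi : kXi f a (s a) ≤ kMarginal f (s a) a V :=
      kXi_le_kMarginal f hf hVk haV (s a)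
    have h5 : f (fun r => W r \ T') = f V + kMarginal f (s a) a V := by
      rw [heq]; simp only [kMarginal]; ring
    have hih := ih hT' (fun r => W r \ T') rfl
    rw [Finset.sum_insert ha]
    linarith

end Aux2

/-- For a `k`-submodular `f` with `f(∅,…,∅) = 0`, every `k`-submodular
inequality is valid: for all `k`-sets `S` and `X` (with binary encoding
`x_i^q = 1` iff `i ∈ X_q`),
`f(X) ≤ f(S) + Σ_q Σ_{i ∉ ∪_r S_r} ρ_{q,i}(S) x_i^q
      + Σ_q Σ_{p ≠ q} Σ_{i ∈ S_p} ρ_{q,i}(∅,…,∅) x_i^q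
      − Σ_q Σ_{i ∈ S_q} ξ_i^q (1 − x_i^q)`. -/
theorem kSubmodular_inequality_valid {n k : ℕ} (hn : 0 < n) (hk : 0 < k)
    (f : (Fin k → Finset (Fin n)) → ℝ) (hf : KSubmodular f)
    (h0 : f (fun _ => ∅) = 0)
    (S X : Fin k → Finset (Fin n)) (hS : IsKSet S) (hX : IsKSet X) :
    f X ≤ f S
      + (∑ q : Fin k, ∑ i ∈ Finset.univ \ Finset.univ.biUnion S,
          kMarginal f q i S * (if i ∈ X q then 1 else 0))
      + (∑ q : Fin k, ∑ p ∈ Finset.univ.erase q, ∑ i ∈ S p,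
          kMarginal f q i (fun _ => ∅) * (if i ∈ X q then 1 else 0))
      - ∑ q : Fin k, ∑ i ∈ S q,
          kXi f i q * (1 - (if i ∈ X q then 1 else 0)) := by
  classical
  have hXuniq : ∀ (i : Fin n) (q q' : Fin k), i ∈ X q → i ∈ X q' → q = q' := by
    intro i q q' h h'
    by_contra hne
    exact Finset.disjoint_left.mp (hX q q' hne) h h'
  have hSuniq : ∀ (i : Fin n) (q q' : Fin k), i ∈ S q → i ∈ S q' → q = q' := by
    intro i q q' h h'
    by_contra hne
    exact Finset.disjoint_left.mp (hS q q' hne) h h'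
  set c : Fin n → Fin k := fun i => if h : ∃ q, i ∈ X q then h.choose else ⟨0, hk⟩
    with hcdef
  set s : Fin n → Fin k := fun i => if h : ∃ q, i ∈ S q then h.choose else ⟨0, hk⟩
    with hsdef
  have hcX : ∀ i : Fin n, (∃ q, i ∈ X q) → i ∈ X (c i) := by
    intro i h
    simp only [hcdef, dif_pos h]
    exact h.choose_spec
  have hc : ∀ (i : Fin n) (q : Fin k), i ∈ X q → c i = q := fun i q h =>
    hXuniq i _ q (hcX i ⟨q, h⟩) h
  have hsS : ∀ i : Fin n, (∃ q, i ∈ S q) → i ∈ S (s i) := by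
    intro i h
    simp only [hsdef, dif_pos h]
    exact h.choose_spec
  have hs : ∀ (i : Fin n) (q : Fin k), i ∈ S q → s i = q := fun i q h =>
    hSuniq i _ q (hsS i ⟨q, h⟩) h
  set suppS := Finset.univ.biUnion S with hsuppSdef
  set suppX := Finset.univ.biUnion X with hsuppXdef
  have hmemS : ∀ i : Fin n, i ∈ suppS ↔ ∃ p, i ∈ S p := by
    intro i; simp [hsuppSdef, Finset.mem_biUnion]
  have hmemX : ∀ i : Fin n, i ∈ suppX ↔ ∃ p, i ∈ X p := by
    intro i; simp [hsuppXdef, Finset.mem_biUnion]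
  set T1 : Finset (Fin n) := suppX \ suppS with hT1def
  set T2 : Finset (Fin n) := (suppS ∩ suppX).filter (fun i => s i ≠ c i) with hT2def
  set T4 : Finset (Fin n) := suppS \ suppX with hT4def
  have hT1mem : ∀ i, i ∈ T1 ↔ i ∈ suppX ∧ i ∉ suppS := by
    intro i; simp [hT1def, Finset.mem_sdiff]
  have hT2mem : ∀ i, i ∈ T2 ↔ (i ∈ suppS ∧ i ∈ suppX ∧ s i ≠ c i) := by
    intro i; simp [hT2def, Finset.mem_filter, Finset.mem_inter, and_assoc]
  have hT4mem : ∀ i, i ∈ T4 ↔ i ∈ suppS ∧ i ∉ suppX := by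
    intro i; simp [hT4def, Finset.mem_sdiff]
  set W1 : Fin k → Finset (Fin n) := fun r => S r ∪ T1.filter (fun i => c i = r)
    with hW1def
  set W2 : Fin k → Finset (Fin n) := fun r => W1 r \ T2 with hW2def
  set W3 : Fin k → Finset (Fin n) := fun r => W2 r ∪ T2.filter (fun i => c i = r)
    with hW3def
  have hT1W : ∀ i ∈ T1, ∀ p, i ∉ S p := by
    intro i hi p hp
    exact ((hT1mem i).mp hi).2 ((hmemS i).mpr ⟨p, hp⟩)
  have hW1k : IsKSet W1 := isKSet_union_filter hS c hT1W
  have h1 : f W1 ≤ f S + ∑ i ∈ T1, kMarginal f (c i) i S :=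
    add_bound f hf S S hS hS (fun p => Finset.Subset.refl _) c T1 hT1W W1 hW1def
  have hT2W1 : ∀ i ∈ T2, i ∈ W1 (s i) := by
    intro i hi
    obtain ⟨hiS, -, -⟩ := (hT2mem i).mp hi
    simp only [hW1def]
    exact Finset.mem_union_left _ (hsS i ((hmemS i).mp hiS))
  have h2 : f W2 ≤ f W1 - ∑ i ∈ T2, kXi f i (s i) :=
    remove_bound f hf W1 hW1k s T2 hT2W1 W2 hW2def
  have hW2k : IsKSet W2 := by
    intro p r hpr
    simp only [hW2def]
    exact (hW1k p r hpr).mono Finset.sdiff_subset Finset.sdiff_subset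
  have hT2W2 : ∀ i ∈ T2, ∀ p, i ∉ W2 p := by
    intro i hi p
    simp only [hW2def, Finset.mem_sdiff]
    exact fun h => h.2 hi
  have h3 : f W3 ≤ f W2 + ∑ i ∈ T2, kMarginal f (c i) i (fun _ => ∅) :=
    add_bound f hf (fun _ => ∅) W2 (by intro p r _; simp) hW2k
      (fun p => Finset.empty_subset _) c T2 hT2W2 W3 hW3def
  have hW3k : IsKSet W3 := isKSet_union_filter hW2k c hT2W2
  have hT4W3 : ∀ i ∈ T4, i ∈ W3 (s i) := by
    intro i hi
    obtain ⟨hiS, hiX⟩ := (hT4mem i).mp hi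
    have hiT2 : i ∉ T2 := fun h => hiX ((hT2mem i).mp h).2.1
    have hmem2 : i ∈ W2 (s i) := by
      simp only [hW2def, Finset.mem_sdiff]
      refine ⟨?_, hiT2⟩
      simp only [hW1def]
      exact Finset.mem_union_left _ (hsS i ((hmemS i).mp hiS))
    simp only [hW3def]
    exact Finset.mem_union_left _ hmem2
  have hE4 : X = fun r => W3 r \ T4 := by
    funext r
    ext i
    simp only [hW3def, hW2def, hW1def, Finset.mem_sdiff, Finset.mem_union,
      Finset.mem_filter]
    constructor
    · intro hiX
      have hcr : c i = r := hc i r hiX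
      have hiXsupp : i ∈ suppX := (hmemX i).mpr ⟨r, hiX⟩
      have hiT4 : i ∉ T4 := fun h => ((hT4mem i).mp h).2 hiXsupp
      refine ⟨?_, hiT4⟩
      by_cases hiT2 : i ∈ T2
      · exact Or.inr ⟨hiT2, hcr⟩
      · left
        refine ⟨?_, hiT2⟩
        by_cases hiSsupp : i ∈ suppS
        · left
          have hsc : s i = c i := by
            by_contra hne
            exact hiT2 ((hT2mem i).mpr ⟨hiSsupp, hiXsupp, hne⟩)
          have := hsS i ((hmemS i).mp hiSsupp)
          rwa [hsc, hcr] at this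
        · exact Or.inr ⟨(hT1mem i).mpr ⟨hiXsupp, hiSsupp⟩, hcr⟩
    · rintro ⟨h, hiT4⟩
      rcases h with ⟨h', hiT2⟩ | ⟨hiT2, hcr⟩
      · rcases h' with hiS | ⟨hiT1, hcr⟩
        · have hsir : s i = r := hs i r hiS
          have hiSsupp : i ∈ suppS := (hmemS i).mpr ⟨r, hiS⟩
          have hiXsupp : i ∈ suppX := by
            by_contra h''
            exact hiT4 ((hT4mem i).mpr ⟨hiSsupp, h''⟩)
          have hsc : s i = c i := by
            by_contra hne
            exact hiT2 ((hT2mem i).mpr ⟨hiSsupp, hiXsupp, hne⟩)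
          have := hcX i ((hmemX i).mp hiXsupp)
          rwa [← hsc, hsir] at this
        · have := hcX i ((hmemX i).mp ((hT1mem i).mp hiT1).1)
          rwa [hcr] at this
      · have := hcX i ((hmemX i).mp ((hT2mem i).mp hiT2).2.1)
        rwa [hcr] at this
  have h4 : f X ≤ f W3 - ∑ i ∈ T4, kXi f i (s i) :=
    remove_bound f hf W3 hW3k s T4 hT4W3 X hE4
  have hA : (∑ q : Fin k, ∑ i ∈ Finset.univ \ suppS,
        kMarginal f q i S * (if i ∈ X q then 1 else 0))
      = ∑ i ∈ T1, kMarginal f (c i) i S := by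
    rw [← Finset.sum_fiberwise T1 c (fun i => kMarginal f (c i) i S)]
    refine Finset.sum_congr rfl fun q _ => ?_
    have hset : (Finset.univ \ suppS).filter (fun i => i ∈ X q)
        = T1.filter (fun i => c i = q) := by
      ext i
      simp only [Finset.mem_filter, Finset.mem_sdiff, Finset.mem_univ, true_and]
      constructor
      · rintro ⟨hns, hx⟩
        exact ⟨(hT1mem i).mpr ⟨(hmemX i).mpr ⟨q, hx⟩, hns⟩, hc i q hx⟩
      · rintro ⟨ht1, hcq⟩
        refine ⟨((hT1mem i).mp ht1).2, ?_⟩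
        have := hcX i ((hmemX i).mp ((hT1mem i).mp ht1).1)
        rwa [hcq] at this
    calc ∑ i ∈ Finset.univ \ suppS, kMarginal f q i S * (if i ∈ X q then 1 else 0)
        = ∑ i ∈ Finset.univ \ suppS, (if i ∈ X q then kMarginal f q i S else 0) := by
          refine Finset.sum_congr rfl fun i _ => ?_
          split <;> ring
      _ = ∑ i ∈ (Finset.univ \ suppS).filter (fun i => i ∈ X q), kMarginal f q i S :=
          (Finset.sum_filter _ _).symm
      _ = ∑ i ∈ T1.filter (fun i => c i = q), kMarginal f q i S := by rw [hset]
      _ = ∑ i ∈ T1.filter (fun i => c i = q), kMarginal f (c i) i S := by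
          refine Finset.sum_congr rfl fun i hi => ?_
          rw [(Finset.mem_filter.mp hi).2]
  have hB : (∑ q : Fin k, ∑ p ∈ Finset.univ.erase q, ∑ i ∈ S p,
        kMarginal f q i (fun _ => ∅) * (if i ∈ X q then 1 else 0))
      = ∑ i ∈ T2, kMarginal f (c i) i (fun _ => ∅) := by
    rw [← Finset.sum_fiberwise T2 c (fun i => kMarginal f (c i) i (fun _ => ∅))]
    refine Finset.sum_congr rfl fun q _ => ?_
    have hstep1 : ∀ p, (∑ i ∈ S p,
          kMarginal f q i (fun _ => ∅) * (if i ∈ X q then 1 else 0))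
        = ∑ i ∈ (S p).filter (fun i => i ∈ X q), kMarginal f q i (fun _ => ∅) := by
      intro p
      rw [Finset.sum_filter]
      refine Finset.sum_congr rfl fun i _ => ?_
      split <;> ring
    rw [Finset.sum_congr rfl (fun p _ => hstep1 p)]
    have hdisj : (↑(Finset.univ.erase q) : Set (Fin k)).PairwiseDisjoint
        (fun p => (S p).filter (fun i => i ∈ X q)) := by
      intro p _ r _ hpr
      exact (hS p r hpr).mono (Finset.filter_subset _ _) (Finset.filter_subset _ _)
    rw [← Finset.sum_biUnion hdisj]
    have hset : (Finset.univ.erase q).biUnion (fun p => (S p).filter (fun i => i ∈ X q))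
        = T2.filter (fun i => c i = q) := by
      ext i
      simp only [Finset.mem_biUnion, Finset.mem_filter, Finset.mem_erase,
        Finset.mem_univ, and_true, true_and]
      constructor
      · rintro ⟨p, hpq, hiS, hiX⟩
        have hsi : s i = p := hs i p hiS
        have hci : c i = q := hc i q hiX
        refine ⟨(hT2mem i).mpr ⟨(hmemS i).mpr ⟨p, hiS⟩, (hmemX i).mpr ⟨q, hiX⟩, ?_⟩, hci⟩
        rw [hsi, hci]
        exact hpq
      · rintro ⟨hiT2, hci⟩
        obtain ⟨hiS, hiX, hne⟩ := (hT2mem i).mp hiT2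
        refine ⟨s i, ?_, hsS i ((hmemS i).mp hiS), ?_⟩
        · exact fun h => hne (h.trans hci.symm)
        · have := hcX i ((hmemX i).mp hiX)
          rwa [hci] at this
    rw [hset]
    refine Finset.sum_congr rfl fun i hi => ?_
    rw [(Finset.mem_filter.mp hi).2]
  have hT24disj : Disjoint T2 T4 := by
    rw [Finset.disjoint_left]
    intro i hi2 hi4
    exact ((hT4mem i).mp hi4).2 ((hT2mem i).mp hi2).2.1
  have hC : (∑ q : Fin k, ∑ i ∈ S q, kXi f i q * (1 - (if i ∈ X q then 1 else 0)))
      = (∑ i ∈ T2, kXi f i (s i)) + ∑ i ∈ T4, kXi f i (s i) := by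
    rw [← Finset.sum_union hT24disj,
      ← Finset.sum_fiberwise (T2 ∪ T4) s (fun i => kXi f i (s i))]
    refine Finset.sum_congr rfl fun q _ => ?_
    have hset : (S q).filter (fun i => i ∉ X q)
        = (T2 ∪ T4).filter (fun i => s i = q) := by
      ext i
      simp only [Finset.mem_filter, Finset.mem_union]
      constructor
      · rintro ⟨hiS, hiX⟩
        have hsi : s i = q := hs i q hiS
        refine ⟨?_, hsi⟩
        by_cases hx : i ∈ suppX
        · left
          refine (hT2mem i).mpr ⟨(hmemS i).mpr ⟨q, hiS⟩, hx, ?_⟩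
          rw [hsi]
          intro h
          have := hcX i ((hmemX i).mp hx)
          rw [← h] at this
          exact hiX this
        · exact Or.inr ((hT4mem i).mpr ⟨(hmemS i).mpr ⟨q, hiS⟩, hx⟩)
      · rintro ⟨h24, hsi⟩
        have hiSsupp : i ∈ suppS := by
          rcases h24 with h2 | h4
          · exact ((hT2mem i).mp h2).1
          · exact ((hT4mem i).mp h4).1
        have hiS : i ∈ S q := by
          have := hsS i ((hmemS i).mp hiSsupp)
          rwa [hsi] at this
        refine ⟨hiS, ?_⟩
        rcases h24 with h2 | h4
        · intro hx
          exact ((hT2mem i).mp h2).2.2 (by rw [hsi, hc i q hx])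
        · intro hx
          exact ((hT4mem i).mp h4).2 ((hmemX i).mpr ⟨q, hx⟩)
    calc ∑ i ∈ S q, kXi f i q * (1 - (if i ∈ X q then 1 else 0))
        = ∑ i ∈ S q, (if i ∉ X q then kXi f i q else 0) := by
          refine Finset.sum_congr rfl fun i _ => ?_
          by_cases hx : i ∈ X q <;> simp [hx]
      _ = ∑ i ∈ (S q).filter (fun i => i ∉ X q), kXi f i q :=
          (Finset.sum_filter _ _).symm
      _ = ∑ i ∈ (T2 ∪ T4).filter (fun i => s i = q), kXi f i q := by rw [hset]
      _ = ∑ i ∈ (T2 ∪ T4).filter (fun i => s i = q), kXi f i (s i) := by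
          refine Finset.sum_congr rfl fun i hi => ?_
          rw [(Finset.mem_filter.mp hi).2]
  rw [hA, hB, hC]
  linarith
end
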